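/- arXiv:1704.04342 — 7 statements merged into one kernel-verified Lean document; each statement's English description precedes it below -/
import Mathlib

section
/- Let Y₁, …, Y_n be i.i.d. real-valued random variables whose common law is atomless, let ε, δ ∈ (0,1), and let q_{1−ε} = inf{t ∈ ℝ : P(Y₁ ≤ t) ≥ 1−ε} be the (1−ε)-quantile. (a) If 1−(1−ε)^n ≥ 1−δ, then i* = min{r ∈ {1,…,n} : Σ_{k=0}^{r−1} C(n,k)(1−ε)^k ε^{n−k} ≥ 1−δ} is well-defined and the i*-th order statistic Y_(i*) is a 1−δ confidence upper bound for q_{1−ε}, i.e., P(Y_(i*) ≥ q_{1−ε}) ≥ 1−δ. (b) If 1−(1−ε)^n < 1−δ, then for every r ∈ {1,…,n}, P(Y_(r) ≥ q_{1−ε}) < 1−δ, i.e., no order statistic is a valid 1−δ confidence upper bound. -/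
open MeasureTheory ProbabilityTheory
open scoped ENNReal


lemma aux_mono_count {n : ℕ} {w : Fin n → ℝ} (hw : Monotone w) (j : Fin n) (q : ℝ) :
    q ≤ w j ↔ (Finset.univ.filter (fun i => w i < q)).card ≤ (j : ℕ) := by
  classical
  constructor
  · intro h
    have hsub : (Finset.univ.filter (fun i => w i < q)) ⊆ Finset.Iio j := by
      intro i hi
      simp only [Finset.mem_filter] at hi
      rw [Finset.mem_Iio]
      by_contra hij
      exact absurd (lt_of_lt_of_le hi.2 (h.trans (hw (not_lt.mp hij)))) (lt_irrefl _)
    calc (Finset.univ.filter (fun i => w i < q)).card ≤ (Finset.Iio j).card :=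
          Finset.card_le_card hsub
      _ = (j : ℕ) := Fin.card_Iio j
  · intro h
    by_contra hq
    push_neg at hq
    have hsub : Finset.Iic j ⊆ (Finset.univ.filter (fun i => w i < q)) := by
      intro i hi
      rw [Finset.mem_Iic] at hi
      simp only [Finset.mem_filter, Finset.mem_univ, true_and]
      exact lt_of_le_of_lt (hw hi) hq
    have := Finset.card_le_card hsub
    rw [Fin.card_Iic] at this
    omega

lemma aux_perm_count {n : ℕ} (σ : Equiv.Perm (Fin n)) (p : Fin n → Prop) [DecidablePred p] :
    (Finset.univ.filter (fun i => p (σ i))).card = (Finset.univ.filter p).card := by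
  apply Finset.card_bij (fun i _ => σ i)
  · intro a ha; simp only [Finset.mem_filter, Finset.mem_univ, true_and] at *; exact ha
  · intro a _ b _ hab; exact σ.injective hab
  · intro b hb
    refine ⟨σ.symm b, ?_, by simp⟩
    simp only [Finset.mem_filter, Finset.mem_univ, true_and, Equiv.apply_symm_apply] at *
    exact hb

/-- The `r`-th order statistic (1-based) of the finite tuple `v`: the `r`-th smallest value
among `v 0, …, v (n-1)` (junk value `0` if `r` is out of range). -/
noncomputable def orderStat {n : ℕ} (v : Fin n → ℝ) (r : ℕ) : ℝ :=
  if h : r - 1 < n then v (Tuple.sort v ⟨r - 1, h⟩) else 0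


lemma aux_orderStat_iff {n : ℕ} (v : Fin n → ℝ) {r : ℕ} (hr1 : 1 ≤ r) (hrn : r ≤ n) (q : ℝ) :
    q ≤ orderStat v r ↔ (Finset.univ.filter (fun i => v i < q)).card ≤ r - 1 := by
  classical
  have h : r - 1 < n := by omega
  rw [orderStat, dif_pos h]
  have hmono : Monotone (v ∘ Tuple.sort v) := Tuple.monotone_sort v
  have := aux_mono_count hmono ⟨r - 1, h⟩ q
  simp only [Function.comp] at this
  rw [this, aux_perm_count (Tuple.sort v) (fun i => v i < q)]

lemma aux_binom {Ω : Type*} [MeasurableSpace Ω] (P : Measure Ω) [IsProbabilityMeasure P]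
    {n : ℕ} {Y : Fin n → Ω → ℝ} (hYmeas : ∀ i, Measurable (Y i))
    (hindep : iIndepFun Y P) {q : ℝ} {p : ℝ≥0∞}
    (hp : ∀ i, P (Y i ⁻¹' Set.Iio q) = p) (k : ℕ) :
    P {ω | (Finset.univ.filter (fun i => Y i ω < q)).card = k}
      = (n.choose k : ℝ≥0∞) * p ^ k * (1 - p) ^ (n - k) := by
  classical
  set B : Finset (Fin n) → Fin n → Set ℝ :=
    fun S i => if i ∈ S then Set.Iio q else (Set.Iio q)ᶜ with hB
  set E : Finset (Fin n) → Set Ω := fun S => ⋂ i, Y i ⁻¹' (B S i) with hE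
  have hEmeas : ∀ S, MeasurableSet (E S) := by
    intro S
    refine MeasurableSet.iInter fun i => (hYmeas i) ?_
    by_cases h : i ∈ S <;> simp [hB, h, measurableSet_Iio, (measurableSet_Iio).compl]
  have hEeq : ∀ S, E S = {ω | Finset.univ.filter (fun i => Y i ω < q) = S} := by
    intro S
    ext ω
    simp only [hE, hB, Set.mem_iInter, Set.mem_preimage, Set.mem_setOf_eq, Finset.ext_iff,
      Finset.mem_filter, Finset.mem_univ, true_and]
    constructor
    · intro h i
      have := h i
      by_cases hi : i ∈ S <;> simp [hi] at this ⊢ <;> tauto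
    · intro h i
      have := h i
      by_cases hi : i ∈ S <;> simp [hi] at this ⊢ <;> tauto
  have hEP : ∀ S : Finset (Fin n), P (E S) = p ^ S.card * (1 - p) ^ (Finset.univ \ S).card := by
    intro S
    have := hindep.meas_iInter (s := fun i => Y i ⁻¹' (B S i))
      (fun i => ⟨B S i, by by_cases h : i ∈ S <;>
        simp [hB, h, measurableSet_Iio, (measurableSet_Iio).compl], rfl⟩)
    rw [hE, this]
    have hterm : ∀ i, P (Y i ⁻¹' (B S i)) = if i ∈ S then p else 1 - p := by
      intro i
      by_cases h : i ∈ S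
      · simp [hB, h, hp i]
      · simp only [hB, h, if_neg, if_false]
        rw [Set.preimage_compl, prob_compl_eq_one_sub ((hYmeas i) measurableSet_Iio), hp i]
    simp_rw [hterm]
    rw [Finset.prod_ite, Finset.prod_const, Finset.prod_const]
    have h1 : Finset.filter (fun i => i ∈ S) Finset.univ = S := by ext i; simp
    have h2 : Finset.filter (fun i => i ∉ S) Finset.univ = Finset.univ \ S := by
      ext i; simp [Finset.mem_sdiff]
    rw [h1, h2]
  have hcard : ∀ S ∈ Finset.powersetCard k (Finset.univ : Finset (Fin n)),
      P (E S) = p ^ k * (1 - p) ^ (n - k) := by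
    intro S hS
    rw [Finset.mem_powersetCard] at hS
    rw [hEP S, hS.2, Finset.card_sdiff_of_subset hS.1, Finset.card_univ, Fintype.card_fin, hS.2]
  have hunion : {ω | (Finset.univ.filter (fun i => Y i ω < q)).card = k}
      = ⋃ S ∈ Finset.powersetCard k (Finset.univ : Finset (Fin n)), E S := by
    ext ω
    simp only [Set.mem_setOf_eq, Set.mem_iUnion, hEeq, Finset.mem_powersetCard]
    constructor
    · intro h
      exact ⟨_, ⟨Finset.filter_subset _ _, h⟩, rfl⟩
    · rintro ⟨S, ⟨-, hc⟩, rfl⟩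
      exact hc
  rw [hunion, measure_biUnion_finset ?_ (fun S _ => hEmeas S)]
  · rw [Finset.sum_congr rfl hcard, Finset.sum_const, Finset.card_powersetCard,
      Finset.card_univ, Fintype.card_fin, nsmul_eq_mul, mul_assoc]
  · intro S hS T hT hST
    simp only [Function.onFun]
    rw [Set.disjoint_left]
    intro ω hωS hωT
    rw [hEeq] at hωS hωT
    exact hST (hωS.symm.trans hωT)
lemma aux_quantile (ν : Measure ℝ) [IsProbabilityMeasure ν] (hatomless : ∀ x : ℝ, ν {x} = 0)
    {ε : ℝ} (hε : ε ∈ Set.Ioo (0 : ℝ) 1) :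
    ν (Set.Iio (sInf {t : ℝ | ENNReal.ofReal (1 - ε) ≤ ν (Set.Iic t)}))
      = ENNReal.ofReal (1 - ε) := by
  obtain ⟨hε0, hε1⟩ := hε
  set b : ℝ≥0∞ := ENNReal.ofReal (1 - ε) with hb
  have hb1 : b < 1 := by
    rw [hb]
    exact ENNReal.ofReal_lt_one.mpr (by linarith)
  have hb0 : 0 < b := ENNReal.ofReal_pos.mpr (by linarith)
  set S : Set ℝ := {t : ℝ | b ≤ ν (Set.Iic t)} with hS
  -- nonempty
  have hSne : S.Nonempty := by
    have h1 : Filter.Tendsto (fun x : ℝ => ν (Set.Iic x)) Filter.atTop (nhds (ν Set.univ)) :=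
      tendsto_measure_Iic_atTop ν
    rw [measure_univ] at h1
    have := h1.eventually (eventually_gt_nhds hb1)
    obtain ⟨t, ht⟩ := this.exists
    exact ⟨t, le_of_lt ht⟩
  -- bounded below
  have hSbdd : BddBelow S := by
    have h2 : Filter.Tendsto (fun m : ℕ => ν (Set.Iic (-(m : ℝ)))) Filter.atTop
        (nhds (ν (⋂ m : ℕ, Set.Iic (-(m : ℝ))))) := by
      apply tendsto_measure_iInter_atTop (fun m => measurableSet_Iic.nullMeasurableSet)
      · intro i j hij
        exact Set.Iic_subset_Iic.mpr (by exact_mod_cast neg_le_neg (Nat.cast_le.mpr hij))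
      · exact ⟨0, measure_ne_top ν _⟩
    have hempty : (⋂ m : ℕ, Set.Iic (-(m : ℝ))) = ∅ := by
      ext x
      simp only [Set.mem_iInter, Set.mem_Iic, Set.mem_empty_iff_false, iff_false, not_forall]
      obtain ⟨m, hm⟩ := exists_nat_gt (-x)
      exact ⟨m, by push_neg; linarith⟩
    rw [hempty, measure_empty] at h2
    have := h2.eventually (eventually_lt_nhds hb0)
    obtain ⟨m, hm⟩ := this.exists
    refine ⟨-(m : ℝ), fun t ht => ?_⟩
    by_contra hlt
    push_neg at hlt
    exact absurd (le_trans ht (measure_mono (Set.Iic_subset_Iic.mpr hlt.le))) (not_le.mpr hm)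
  set q : ℝ := sInf S with hq
  -- Iic q has measure ≥ b
  have hIic : b ≤ ν (Set.Iic q) := by
    have h3 : Filter.Tendsto (fun m : ℕ => ν (Set.Iic (q + 1 / (m + 1)))) Filter.atTop
        (nhds (ν (⋂ m : ℕ, Set.Iic (q + 1 / (m + 1))))) := by
      apply tendsto_measure_iInter_atTop (fun m => measurableSet_Iic.nullMeasurableSet)
      · intro i j hij
        apply Set.Iic_subset_Iic.mpr
        have : (1 : ℝ) / (j + 1) ≤ 1 / (i + 1) := by
          apply one_div_le_one_div_of_le
          · positivity
          · exact_mod_cast by omega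
        linarith
      · exact ⟨0, measure_ne_top ν _⟩
    have hinter : (⋂ m : ℕ, Set.Iic (q + 1 / (m + 1))) = Set.Iic q := by
      ext x
      simp only [Set.mem_iInter, Set.mem_Iic]
      constructor
      · intro h
        by_contra hx
        push_neg at hx
        obtain ⟨m, hm⟩ := exists_nat_one_div_lt (by linarith : (0:ℝ) < x - q)
        have := h m
        linarith
      · intro h m
        have : (0:ℝ) < 1 / (m + 1) := by positivity
        linarith
    rw [hinter] at h3
    refine ge_of_tendsto h3 (Filter.Eventually.of_forall fun m => ?_)
    obtain ⟨t, htS, htlt⟩ := exists_lt_of_csInf_lt hSne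
      (show sInf S < q + 1 / (m + 1) by
        have : (0:ℝ) < 1 / (m + 1) := by positivity
        rw [← hq]; linarith)
    exact le_trans htS (measure_mono (Set.Iic_subset_Iic.mpr htlt.le))
  -- Iio q has measure ≤ b
  have hIio : ν (Set.Iio q) ≤ b := by
    have h4 : Filter.Tendsto (fun m : ℕ => ν (Set.Iic (q - 1 / (m + 1)))) Filter.atTop
        (nhds (ν (⋃ m : ℕ, Set.Iic (q - 1 / (m + 1))))) := by
      apply tendsto_measure_iUnion_atTop
      intro i j hij
      apply Set.Iic_subset_Iic.mpr
      have : (1 : ℝ) / (j + 1) ≤ 1 / (i + 1) := by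
        apply one_div_le_one_div_of_le
        · positivity
        · exact_mod_cast by omega
      linarith
    have hunion : (⋃ m : ℕ, Set.Iic (q - 1 / (m + 1))) = Set.Iio q := by
      ext x
      simp only [Set.mem_iUnion, Set.mem_Iic, Set.mem_Iio]
      constructor
      · rintro ⟨m, hm⟩
        have : (0:ℝ) < 1 / (m + 1) := by positivity
        linarith
      · intro h
        obtain ⟨m, hm⟩ := exists_nat_one_div_lt (by linarith : (0:ℝ) < q - x)
        exact ⟨m, by linarith⟩
    rw [hunion] at h4
    refine le_of_tendsto h4 (Filter.Eventually.of_forall fun m => ?_)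
    have hnot : q - 1 / (m + 1) ∉ S := by
      intro hmem
      have := csInf_le hSbdd hmem
      rw [← hq] at this
      have h5 : (0:ℝ) < 1 / (m + 1) := by positivity
      linarith
    rw [hS, Set.mem_setOf_eq, not_le] at hnot
    exact hnot.le
  -- conclude
  have hsplit : ν (Set.Iic q) = ν (Set.Iio q) := by
    have : Set.Iic q = Set.Iio q ∪ {q} := by
      ext x; simp [le_iff_lt_or_eq]
    apply le_antisymm
    · calc ν (Set.Iic q) ≤ ν (Set.Iio q) + ν {q} := this ▸ measure_union_le _ _
        _ = ν (Set.Iio q) := by rw [hatomless q, add_zero]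
    · exact measure_mono Set.Iio_subset_Iic_self
  exact le_antisymm hIio (by rw [← hsplit]; exact hIic)

/-- For i.i.d. continuous real random variables, if `1-(1-ε)^n ≥ 1-δ` then
`i* = min{r : Σ_{k=0}^{r-1} C(n,k)(1-ε)^k ε^{n-k} ≥ 1-δ}` is well-defined and `Y_(i*)` is a
`1-δ` confidence upper bound for the `(1-ε)`-quantile; otherwise no order statistic is a
valid `1-δ` confidence upper bound. -/
theorem orderStat_confidence_upper_bound
    {Ω : Type*} [MeasurableSpace Ω] (P : Measure Ω) [IsProbabilityMeasure P]
    (n : ℕ) (hn : 0 < n) (Y : Fin n → Ω → ℝ) (hYmeas : ∀ i, Measurable (Y i))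
    (hindep : iIndepFun Y P)
    (ν : Measure ℝ) (hlaw : ∀ i, Measure.map (Y i) P = ν)
    (hatomless : ∀ x : ℝ, ν {x} = 0)
    (ε δ : ℝ) (hε : ε ∈ Set.Ioo (0 : ℝ) 1) (hδ : δ ∈ Set.Ioo (0 : ℝ) 1)
    (q : ℝ)
    (hq : q = sInf {t : ℝ | ENNReal.ofReal (1 - ε) ≤ ν (Set.Iic t)}) :
    (1 - (1 - ε) ^ n ≥ 1 - δ →
      ∃ istar : ℕ,
        IsLeast {r : ℕ | 1 ≤ r ∧ r ≤ n ∧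
          1 - δ ≤ ∑ k ∈ Finset.range r, (n.choose k : ℝ) * (1 - ε) ^ k * ε ^ (n - k)} istar ∧
        ENNReal.ofReal (1 - δ) ≤ P {ω | q ≤ orderStat (fun i => Y i ω) istar}) ∧
    (1 - (1 - ε) ^ n < 1 - δ →
      ∀ r : ℕ, 1 ≤ r → r ≤ n →
        P {ω | q ≤ orderStat (fun i => Y i ω) r} < ENNReal.ofReal (1 - δ)) := by
  classical
  obtain ⟨hε0, hε1⟩ := hε
  obtain ⟨hδ0, hδ1⟩ := hδ
  haveI : IsProbabilityMeasure ν := by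
    rw [← hlaw ⟨0, hn⟩]
    exact Measure.isProbabilityMeasure_map ((hYmeas _).aemeasurable)
  -- measure of Iio q
  have hνIio : ν (Set.Iio q) = ENNReal.ofReal (1 - ε) := by
    rw [hq]; exact aux_quantile ν hatomless ⟨hε0, hε1⟩
  have hp : ∀ i, P (Y i ⁻¹' Set.Iio q) = ENNReal.ofReal (1 - ε) := fun i => by
    rw [← hνIio, ← hlaw i, Measure.map_apply (hYmeas i) measurableSet_Iio]
  have hone_sub : (1 : ℝ≥0∞) - ENNReal.ofReal (1 - ε) = ENNReal.ofReal ε := by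
    rw [← ENNReal.ofReal_one, ← ENNReal.ofReal_sub _ (by linarith : (0:ℝ) ≤ 1 - ε)]
    norm_num
  -- measurability of the count
  have hNmeas : Measurable (fun ω => (Finset.univ.filter (fun i => Y i ω < q)).card) := by
    simp_rw [Finset.card_filter]
    apply Finset.measurable_sum
    intro i _
    exact Measurable.ite ((hYmeas i) measurableSet_Iio) measurable_const measurable_const
  set B : ℕ → ℝ := fun r => ∑ k ∈ Finset.range r, (n.choose k : ℝ) * (1 - ε) ^ k * ε ^ (n - k)
    with hB
  have hterm_nonneg : ∀ k, 0 ≤ (n.choose k : ℝ) * (1 - ε) ^ k * ε ^ (n - k) := fun k =>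
    mul_nonneg (mul_nonneg (Nat.cast_nonneg _) (pow_nonneg (by linarith) _))
      (pow_nonneg hε0.le _)
  -- the key formula
  have key : ∀ r : ℕ, 1 ≤ r → r ≤ n →
      P {ω | q ≤ orderStat (fun i => Y i ω) r} = ENNReal.ofReal (B r) := by
    intro r hr1 hrn
    have hset : {ω | q ≤ orderStat (fun i => Y i ω) r}
        = ⋃ k ∈ Finset.range r, {ω | (Finset.univ.filter (fun i => Y i ω < q)).card = k} := by
      ext ω
      simp only [Set.mem_setOf_eq, Set.mem_iUnion, Finset.mem_range, exists_prop]
      rw [aux_orderStat_iff (fun i => Y i ω) hr1 hrn q]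
      constructor
      · intro h; exact ⟨_, by omega, rfl⟩
      · rintro ⟨k, hk, hcard⟩; omega
    rw [hset, measure_biUnion_finset ?_ (fun k _ =>
      show MeasurableSet {ω | (Finset.univ.filter (fun i => Y i ω < q)).card = k} from
        hNmeas (measurableSet_singleton k))]
    · have heach : ∀ k ∈ Finset.range r,
          P {ω | (Finset.univ.filter (fun i => Y i ω < q)).card = k}
            = ENNReal.ofReal ((n.choose k : ℝ) * (1 - ε) ^ k * ε ^ (n - k)) := by
        intro k _
        rw [aux_binom P hYmeas hindep hp k, hone_sub]
        rw [ENNReal.ofReal_mul (mul_nonneg (Nat.cast_nonneg _) (pow_nonneg (by linarith) _)), ENNReal.ofReal_mul (by exact Nat.cast_nonneg _),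
          ENNReal.ofReal_pow (by linarith), ENNReal.ofReal_pow hε0.le,
          ENNReal.ofReal_natCast]
      rw [Finset.sum_congr rfl heach, ← ENNReal.ofReal_sum_of_nonneg
        (fun k _ => hterm_nonneg k)]
    · intro i hi j hj hij
      simp only [Function.onFun, Set.disjoint_left]
      intro ω h1 h2
      exact hij (h1.symm.trans h2)
  -- value of B n
  have hBn : B n = 1 - (1 - ε) ^ n := by
    have hbinom := add_pow (1 - ε) ε n
    rw [show (1 - ε) + ε = 1 by ring, one_pow, Finset.sum_range_succ] at hbinom
    have hrw : ∀ k ∈ Finset.range n,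
        (1 - ε) ^ k * ε ^ (n - k) * (n.choose k : ℝ)
          = (n.choose k : ℝ) * (1 - ε) ^ k * ε ^ (n - k) := fun k _ => by ring
    rw [Finset.sum_congr rfl hrw] at hbinom
    show (∑ k ∈ Finset.range n, (n.choose k : ℝ) * (1 - ε) ^ k * ε ^ (n - k))
      = 1 - (1 - ε) ^ n
    simp only [Nat.sub_self, pow_zero, mul_one, Nat.choose_self, Nat.cast_one] at hbinom
    linarith
  have hBmono : ∀ r ≤ n, B r ≤ B n := fun r hr =>
    Finset.sum_le_sum_of_subset_of_nonneg (Finset.range_subset_range.mpr hr)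
      (fun k _ _ => hterm_nonneg k)
  constructor
  · intro h1
    have hex : ∃ r, 1 ≤ r ∧ r ≤ n ∧ 1 - δ ≤ B r := ⟨n, hn, le_rfl, by rw [hBn]; linarith⟩
    refine ⟨Nat.find hex, ⟨Nat.find_spec hex, fun m hm => Nat.find_min' hex hm⟩, ?_⟩
    obtain ⟨h1i, h2i, h3i⟩ := Nat.find_spec hex
    rw [key _ h1i h2i]
    exact ENNReal.ofReal_le_ofReal h3i
  · intro h1 r hr1 hrn
    rw [key r hr1 hrn]
    exact (ENNReal.ofReal_lt_ofReal_iff (by linarith)).mpr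
      (lt_of_le_of_lt (hBmono r hrn) (by rw [hBn]; linarith))
end

section
/- Let Y₁, …, Y_n be i.i.d. real-valued random variables whose common law is atomless, let ε, δ ∈ (0,1), and let q_{1−ε} = inf{t ∈ ℝ : P(Y₁ ≤ t) ≥ 1−ε} be the (1−ε)-quantile. (a) If 1−ε^n ≥ 1−δ, then i_* = max{r ∈ {1,…,n} : Σ_{k=r}^{n} C(n,k)(1−ε)^k ε^{n−k} ≥ 1−δ} is well-defined and the i_*-th order statistic Y_(i_*) is a 1−δ confidence lower bound for q_{1−ε}, i.e., P(Y_(i_*) ≤ q_{1−ε}) ≥ 1−δ. (b) If 1−ε^n < 1−δ, then for every r ∈ {1,…,n}, P(Y_(r) ≤ q_{1−ε}) < 1−δ, i.e., no order statistic is a valid 1−δ confidence lower bound. -/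
open MeasureTheory ProbabilityTheory
open scoped ENNReal

lemma orderStat_le_iff {n : ℕ} (v : Fin n → ℝ) {r : ℕ} (h1 : 1 ≤ r) (h2 : r ≤ n) (q : ℝ) :
    orderStat v r ≤ q ↔ r ≤ (Finset.univ.filter fun i => v i ≤ q).card := by
  have hrn : r - 1 < n := by omega
  rw [orderStat, dif_pos hrn]
  set σ := Tuple.sort v with hσ
  have hmono : Monotone (v ∘ σ) := Tuple.monotone_sort v
  have hcard : (Finset.univ.filter fun i => v i ≤ q).card
      = (Finset.univ.filter fun j => (v ∘ σ) j ≤ q).card := by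
    apply Finset.card_equiv σ.symm
    intro i
    simp [Function.comp]
  rw [hcard]
  constructor
  · intro h
    have hsub : Finset.Iic (⟨r - 1, hrn⟩ : Fin n) ⊆ Finset.univ.filter fun j => (v ∘ σ) j ≤ q := by
      intro j hj
      simp only [Finset.mem_filter, Finset.mem_univ, true_and]
      exact le_trans (hmono (Finset.mem_Iic.1 hj)) h
    have := Finset.card_le_card hsub
    rw [Fin.card_Iic] at this
    simp only at this
    omega
  · intro h
    by_contra hq'
    push_neg at hq'
    have hsub : (Finset.univ.filter fun j => (v ∘ σ) j ≤ q) ⊆ Finset.Iio (⟨r - 1, hrn⟩ : Fin n) := by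
      intro j hj
      simp only [Finset.mem_filter, Finset.mem_univ, true_and] at hj
      rw [Finset.mem_Iio]
      by_contra hle
      push_neg at hle
      simp only [Function.comp_apply] at hj
      exact absurd (hmono hle) (by simp only [Function.comp_apply]; linarith)
    have := Finset.card_le_card hsub
    rw [Fin.card_Iio] at this
    simp only at this
    omega

lemma quantile_measure (ν : Measure ℝ) [IsProbabilityMeasure ν]
    (hatomless : ∀ x : ℝ, ν {x} = 0) {ε : ℝ} (hε0 : 0 < ε) (hε1 : ε < 1) :
    ν (Set.Iic (sInf {t : ℝ | ENNReal.ofReal (1 - ε) ≤ ν (Set.Iic t)}))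
      = ENNReal.ofReal (1 - ε) := by
  have hmonoF : Monotone (cdf ν : ℝ → ℝ) := monotone_cdf ν
  have hFcont : Continuous (cdf ν : ℝ → ℝ) := by
    rw [continuous_iff_continuousAt]
    intro x
    have hsing := StieltjesFunction.measure_singleton (cdf ν) x
    rw [measure_cdf, hatomless x] at hsing
    have h4 : Function.leftLim (cdf ν : ℝ → ℝ) x ≤ cdf ν x := hmonoF.leftLim_le le_rfl
    have h1 : Function.leftLim (cdf ν : ℝ → ℝ) x = cdf ν x := by
      rw [eq_comm, ENNReal.ofReal_eq_zero] at hsing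
      linarith
    exact hmonoF.continuousAt_iff_leftLim_eq_rightLim.2
      (by rw [h1, StieltjesFunction.rightLim_eq])
  have key : ∀ t : ℝ, (ENNReal.ofReal (1 - ε) ≤ ν (Set.Iic t)) ↔ 1 - ε ≤ cdf ν t := by
    intro t
    rw [← ofReal_cdf ν t]
    exact ENNReal.ofReal_le_ofReal_iff (cdf_nonneg ν t)
  set S := {t : ℝ | ENNReal.ofReal (1 - ε) ≤ ν (Set.Iic t)} with hS
  have hSeq : S = (cdf ν : ℝ → ℝ) ⁻¹' Set.Ici (1 - ε) := by
    ext t; exact key t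
  have hne : S.Nonempty := by
    have h := (tendsto_cdf_atTop ν).eventually (eventually_ge_nhds (show 1 - ε < 1 by linarith))
    obtain ⟨b, hb⟩ := h.exists
    exact ⟨b, (key b).2 hb⟩
  have hbdd : BddBelow S := by
    have h := (tendsto_cdf_atBot ν).eventually (eventually_lt_nhds (show (0:ℝ) < 1 - ε by linarith))
    obtain ⟨a, ha⟩ := h.exists
    refine ⟨a, fun t ht => ?_⟩
    by_contra hlt
    push_neg at hlt
    have := hmonoF hlt.le
    have ht' := (key t).1 ht
    linarith
  have hmem : sInf S ∈ S := by
    rw [hSeq]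
    exact IsClosed.csInf_mem (isClosed_Ici.preimage hFcont) (hSeq ▸ hne) (hSeq ▸ hbdd)
  have hge : 1 - ε ≤ cdf ν (sInf S) := (key _).1 hmem
  have hle : cdf ν (sInf S) ≤ 1 - ε := by
    have hev : ∀ᶠ t in nhdsWithin (sInf S) (Set.Iio (sInf S)), cdf ν t ≤ 1 - ε := by
      filter_upwards [self_mem_nhdsWithin] with t ht
      have : t ∉ S := fun hmem' => absurd (csInf_le hbdd hmem') (not_le.2 ht)
      rw [hSeq] at this
      simp only [Set.mem_preimage, Set.mem_Ici, not_le] at this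
      linarith
    exact le_of_tendsto (hFcont.continuousAt.continuousWithinAt.tendsto) hev
  have : cdf ν (sInf S) = 1 - ε := le_antisymm hle hge
  rw [← ofReal_cdf ν (sInf S), this]

lemma meas_orderStat_le {Ω : Type*} [MeasurableSpace Ω] (P : Measure Ω) [IsProbabilityMeasure P]
    (n : ℕ) (Y : Fin n → Ω → ℝ) (hYmeas : ∀ i, Measurable (Y i))
    (hindep : iIndepFun Y P)
    (ν : Measure ℝ) [IsProbabilityMeasure ν] (hlaw : ∀ i, Measure.map (Y i) P = ν)
    (q : ℝ) {p : ℝ} (hp0 : 0 ≤ p) (hp1 : p ≤ 1) (hν : ν (Set.Iic q) = ENNReal.ofReal p)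
    {r : ℕ} (h1 : 1 ≤ r) (h2 : r ≤ n) :
    P {ω | orderStat (fun i => Y i ω) r ≤ q}
      = ENNReal.ofReal (∑ k ∈ Finset.Icc r n, (n.choose k : ℝ) * p ^ k * (1 - p) ^ (n - k)) := by
  classical
  set B : Finset (Fin n) → Fin n → Set ℝ :=
    fun S i => if i ∈ S then Set.Iic q else (Set.Iic q)ᶜ with hB
  set E : Finset (Fin n) → Set Ω := fun S => ⋂ i, Y i ⁻¹' (B S i) with hE
  have hBmeas : ∀ S i, MeasurableSet (B S i) := by
    intro S i
    by_cases hi : i ∈ S <;> simp [hB, hi, measurableSet_Iic]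
  have hfix : ∀ S ω, ω ∈ E S → (Finset.univ.filter fun i => Y i ω ≤ q) = S := by
    intro S ω hω
    simp only [hE, Set.mem_iInter, Set.mem_preimage] at hω
    ext i
    simp only [Finset.mem_filter, Finset.mem_univ, true_and]
    have h := hω i
    by_cases hi : i ∈ S
    · simp only [hB, if_pos hi, Set.mem_Iic] at h
      exact ⟨fun _ => hi, fun _ => h⟩
    · simp only [hB, if_neg hi, Set.mem_compl_iff, Set.mem_Iic] at h
      exact ⟨fun hc => absurd hc h, fun hc => absurd hc hi⟩
  set T : Finset (Finset (Fin n)) :=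
    Finset.univ.filter (fun S : Finset (Fin n) => r ≤ S.card) with hT
  have hset : {ω | orderStat (fun i => Y i ω) r ≤ q} = ⋃ S ∈ T, E S := by
    ext ω
    rw [Set.mem_setOf_eq, orderStat_le_iff _ h1 h2]
    simp only [Set.mem_iUnion, hT, Finset.mem_filter, Finset.mem_univ, true_and]
    constructor
    · intro h
      refine ⟨Finset.univ.filter (fun i => Y i ω ≤ q), ⟨h, ?_⟩⟩
      simp only [hE, Set.mem_iInter, Set.mem_preimage]
      intro i
      by_cases hi : Y i ω ≤ q
      · simp [hB, hi]
      · have hi' : i ∉ Finset.univ.filter (fun i => Y i ω ≤ q) := by simp [hi]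
        simp only [hB, if_neg hi', Set.mem_compl_iff, Set.mem_Iic]
        exact hi
    · rintro ⟨S, hS, hmem⟩
      rw [hfix S ω hmem]
      exact hS
  have hdisj : Set.PairwiseDisjoint (T : Set (Finset (Fin n))) E := by
    intro S _ S' _ hne
    rw [Function.onFun, Set.disjoint_left]
    intro ω hω hω'
    exact hne ((hfix S ω hω).symm.trans (hfix S' ω hω'))
  have hEmeas : ∀ S, MeasurableSet (E S) := fun S =>
    MeasurableSet.iInter fun i => (hYmeas i) (hBmeas S i)
  have hprob : ∀ S : Finset (Fin n),
      P (E S) = ENNReal.ofReal p ^ S.card * ENNReal.ofReal (1 - p) ^ (n - S.card) := by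
    intro S
    have huniv : (⋂ i ∈ (Finset.univ : Finset (Fin n)), Y i ⁻¹' (B S i)) = ⋂ i, Y i ⁻¹' (B S i) := by
      simp
    have hfact := (iIndepFun_iff_measure_inter_preimage_eq_mul.1 hindep) Finset.univ
      (sets := B S) (fun i _ => hBmeas S i)
    rw [huniv] at hfact
    rw [hE]
    simp only
    rw [hfact]
    have hmarg : ∀ i, P (Y i ⁻¹' (B S i))
        = if i ∈ S then ENNReal.ofReal p else ENNReal.ofReal (1 - p) := by
      intro i
      have hmap : ∀ (A : Set ℝ), MeasurableSet A → P (Y i ⁻¹' A) = ν A := fun A hA => by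
        rw [← hlaw i, Measure.map_apply (hYmeas i) hA]
      by_cases hi : i ∈ S
      · simp only [hB, if_pos hi]
        rw [hmap _ measurableSet_Iic, hν]
      · simp only [hB, if_neg hi]
        rw [hmap _ measurableSet_Iic.compl,
          measure_compl measurableSet_Iic (measure_ne_top ν _), hν, measure_univ,
          ENNReal.ofReal_sub 1 hp0, ENNReal.ofReal_one]
    rw [Finset.prod_congr rfl (fun i _ => hmarg i), Finset.prod_ite, Finset.prod_const,
      Finset.prod_const, Finset.filter_univ_mem]
    congr 2
    simp [Finset.filter_not, Finset.card_sdiff_of_subset (Finset.subset_univ _)]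
  -- sum over T
  rw [hset, measure_biUnion_finset hdisj (fun S _ => hEmeas S),
    Finset.sum_congr rfl (fun S _ => hprob S)]
  -- RHS: push ofReal inside
  have hterm_nonneg : ∀ k, (0:ℝ) ≤ (n.choose k : ℝ) * p ^ k * (1 - p) ^ (n - k) := fun k => by
    have := pow_nonneg hp0 k
    have := pow_nonneg (by linarith : (0:ℝ) ≤ 1 - p) (n - k)
    positivity
  rw [ENNReal.ofReal_sum_of_nonneg (fun k _ => hterm_nonneg k)]
  have hterm : ∀ k, ENNReal.ofReal ((n.choose k : ℝ) * p ^ k * (1 - p) ^ (n - k))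
      = (n.choose k : ℝ≥0∞) * ENNReal.ofReal p ^ k * ENNReal.ofReal (1 - p) ^ (n - k) := by
    intro k
    rw [ENNReal.ofReal_mul (by positivity), ENNReal.ofReal_mul (by positivity),
      ENNReal.ofReal_pow hp0, ENNReal.ofReal_pow (by linarith : (0:ℝ) ≤ 1 - p),
      ENNReal.ofReal_natCast]
  rw [Finset.sum_congr rfl (fun k _ => hterm k)]
  -- LHS: group by cardinality
  rw [hT, Finset.sum_filter, ← Finset.powerset_univ, Finset.sum_powerset]
  have hinner : ∀ j ∈ Finset.range (n + 1),
      (∑ S ∈ Finset.powersetCard j (Finset.univ : Finset (Fin n)),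
        if r ≤ S.card then ENNReal.ofReal p ^ S.card * ENNReal.ofReal (1 - p) ^ (n - S.card) else 0)
      = if r ≤ j then (n.choose j : ℝ≥0∞) * ENNReal.ofReal p ^ j * ENNReal.ofReal (1 - p) ^ (n - j) else 0 := by
    intro j _
    have hcst : ∀ S ∈ Finset.powersetCard j (Finset.univ : Finset (Fin n)),
        (if r ≤ S.card then ENNReal.ofReal p ^ S.card * ENNReal.ofReal (1 - p) ^ (n - S.card) else 0)
        = if r ≤ j then ENNReal.ofReal p ^ j * ENNReal.ofReal (1 - p) ^ (n - j) else 0 := by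
      intro S hS
      rw [(Finset.mem_powersetCard.1 hS).2]
    rw [Finset.sum_congr rfl hcst, Finset.sum_const, Finset.card_powersetCard,
      Finset.card_univ, Fintype.card_fin, nsmul_eq_mul]
    by_cases hj : r ≤ j
    · simp only [if_pos hj]; ring
    · simp only [if_neg hj, mul_zero]
  simp only [Finset.card_univ, Fintype.card_fin]
  rw [Finset.sum_congr rfl hinner, ← Finset.sum_filter]
  have : Finset.filter (fun j => r ≤ j) (Finset.range (n + 1)) = Finset.Icc r n := by
    ext k
    simp only [Finset.mem_filter, Finset.mem_range, Finset.mem_Icc]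
    omega
  rw [this]


/-- For i.i.d. continuous real random variables, if `1-ε^n ≥ 1-δ` then
`i_* = max{r : Σ_{k=r}^{n} C(n,k)(1-ε)^k ε^{n-k} ≥ 1-δ}` is well-defined and `Y_(i_*)` is a
`1-δ` confidence lower bound for the `(1-ε)`-quantile; otherwise no order statistic is a
valid `1-δ` confidence lower bound. -/
theorem orderStat_confidence_lower_bound
    {Ω : Type*} [MeasurableSpace Ω] (P : Measure Ω) [IsProbabilityMeasure P]
    (n : ℕ) (hn : 0 < n) (Y : Fin n → Ω → ℝ) (hYmeas : ∀ i, Measurable (Y i))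
    (hindep : iIndepFun Y P)
    (ν : Measure ℝ) (hlaw : ∀ i, Measure.map (Y i) P = ν)
    (hatomless : ∀ x : ℝ, ν {x} = 0)
    (ε δ : ℝ) (hε : ε ∈ Set.Ioo (0 : ℝ) 1) (hδ : δ ∈ Set.Ioo (0 : ℝ) 1)
    (q : ℝ)
    (hq : q = sInf {t : ℝ | ENNReal.ofReal (1 - ε) ≤ ν (Set.Iic t)}) :
    (1 - ε ^ n ≥ 1 - δ →
      ∃ istar : ℕ,
        IsGreatest {r : ℕ | 1 ≤ r ∧ r ≤ n ∧
          1 - δ ≤ ∑ k ∈ Finset.Icc r n, (n.choose k : ℝ) * (1 - ε) ^ k * ε ^ (n - k)} istar ∧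
        ENNReal.ofReal (1 - δ) ≤ P {ω | orderStat (fun i => Y i ω) istar ≤ q}) ∧
    (1 - ε ^ n < 1 - δ →
      ∀ r : ℕ, 1 ≤ r → r ≤ n →
        P {ω | orderStat (fun i => Y i ω) r ≤ q} < ENNReal.ofReal (1 - δ)) := by
  obtain ⟨hε0, hε1⟩ := hε
  obtain ⟨hδ0, hδ1⟩ := hδ
  have hνprob : IsProbabilityMeasure ν := by
    rw [← hlaw ⟨0, hn⟩]
    exact Measure.isProbabilityMeasure_map (hYmeas _).aemeasurable
  have hνq : ν (Set.Iic q) = ENNReal.ofReal (1 - ε) := by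
    rw [hq]
    exact quantile_measure ν hatomless hε0 hε1
  have hp0 : (0:ℝ) ≤ 1 - ε := by linarith
  have hp1 : (1:ℝ) - ε ≤ 1 := by linarith
  have hkey : ∀ r : ℕ, 1 ≤ r → r ≤ n →
      P {ω | orderStat (fun i => Y i ω) r ≤ q}
        = ENNReal.ofReal (∑ k ∈ Finset.Icc r n, (n.choose k : ℝ) * (1 - ε) ^ k * ε ^ (n - k)) := by
    intro r hr1 hrn
    have := meas_orderStat_le P n Y hYmeas hindep ν hlaw q hp0 hp1 hνq hr1 hrn
    rw [this]
    congr 1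
    apply Finset.sum_congr rfl
    intro k _
    norm_num
  have hsum1 : ∑ k ∈ Finset.Icc 1 n, (n.choose k : ℝ) * (1 - ε) ^ k * ε ^ (n - k) = 1 - ε ^ n := by
    have hbin := add_pow (1 - ε) ε n
    rw [show (1 - ε) + ε = 1 by ring, one_pow] at hbin
    have hIcc : Finset.Icc 1 n = (Finset.range (n + 1)).erase 0 := by
      ext k
      simp only [Finset.mem_Icc, Finset.mem_erase, Finset.mem_range]
      omega
    have h0 : (0:ℕ) ∈ Finset.range (n + 1) := by simp
    have := Finset.add_sum_erase (Finset.range (n + 1))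
      (fun k => (1 - ε) ^ k * ε ^ (n - k) * (n.choose k : ℝ)) h0
    simp only [pow_zero, one_mul, Nat.choose_zero_right, Nat.cast_one, mul_one, Nat.sub_zero]
      at this
    rw [← hbin] at this
    rw [hIcc]
    have hcomm : ∀ k ∈ (Finset.range (n + 1)).erase 0,
        (n.choose k : ℝ) * (1 - ε) ^ k * ε ^ (n - k)
          = (1 - ε) ^ k * ε ^ (n - k) * (n.choose k : ℝ) := fun k _ => by ring
    rw [Finset.sum_congr rfl hcomm]
    linarith
  have hterm_nonneg : ∀ (r k : ℕ), (0:ℝ) ≤ (n.choose k : ℝ) * (1 - ε) ^ k * ε ^ (n - k) := by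
    intro r k
    have h1 := pow_nonneg hp0 k
    have h2 := pow_nonneg hε0.le (n - k)
    positivity
  have hsum_le : ∀ r : ℕ, 1 ≤ r →
      ∑ k ∈ Finset.Icc r n, (n.choose k : ℝ) * (1 - ε) ^ k * ε ^ (n - k) ≤ 1 - ε ^ n := by
    intro r hr
    rw [← hsum1]
    apply Finset.sum_le_sum_of_subset_of_nonneg
    · exact Finset.Icc_subset_Icc_left hr
    · intro k _ _
      exact hterm_nonneg r k
  constructor
  · intro hge
    set A : Set ℕ := {r : ℕ | 1 ≤ r ∧ r ≤ n ∧
      1 - δ ≤ ∑ k ∈ Finset.Icc r n, (n.choose k : ℝ) * (1 - ε) ^ k * ε ^ (n - k)} with hA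
    have h1A : 1 ∈ A := by
      refine ⟨le_rfl, hn, ?_⟩
      rw [hsum1]
      linarith [hge]
    have hbddA : BddAbove A := ⟨n, fun x hx => hx.2.1⟩
    refine ⟨sSup A, ⟨Nat.sSup_mem ⟨1, h1A⟩ hbddA, fun b hb => le_csSup hbddA hb⟩, ?_⟩
    obtain ⟨hs1, hsn, hsge⟩ := Nat.sSup_mem ⟨1, h1A⟩ hbddA
    rw [hkey _ hs1 hsn]
    exact ENNReal.ofReal_le_ofReal hsge
  · intro hlt r hr1 hrn
    rw [hkey r hr1 hrn]
    rw [ENNReal.ofReal_lt_ofReal_iff (by linarith)]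
    calc ∑ k ∈ Finset.Icc r n, (n.choose k : ℝ) * (1 - ε) ^ k * ε ^ (n - k)
        ≤ 1 - ε ^ n := hsum_le r hr1
      _ < 1 - δ := hlt
end

section
/- Let ε, δ ∈ (0,1) and let n₂ be a positive integer with (1−ε)^{n₂} ≤ δ. Let (S, 𝒮) be a measurable space and, on a common probability space, let D₁ be an S-valued random element and let ξ₁², …, ξ_{n₂}² be i.i.d. ℝ^m-valued random vectors with common law μ, with D₁ independent of (ξ₁², …, ξ_{n₂}²). Let t : S × ℝ^m → ℝ be jointly measurable such that for every s ∈ S the pushforward of μ under z ↦ t(s,z) is atomless. Define i* = min{r ∈ {1,…,n₂} : Σ_{k=0}^{r−1} C(n₂,k)(1−ε)^k ε^{n₂−k} ≥ 1−δ} and let T be the i*-th order statistic of the values t(D₁,ξ₁²), …, t(D₁,ξ_{n₂}²). Then the random uncertainty set U = {z ∈ ℝ^m : t(D₁,z) ≤ T} satisfies the coverage guarantee P( μ{z ∈ ℝ^m : t(D₁,z) ≤ T} ≥ 1−ε ) ≥ 1−δ. -/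
open MeasureTheory ProbabilityTheory

open Set

open Finset in
lemma count_lt_orderStat {n : ℕ} (v : Fin n → ℝ) (r : ℕ) (hr1 : 1 ≤ r) (hrn : r ≤ n)
    (q : ℝ) [DecidablePred fun i => v i < q]
    (hcount : (Finset.univ.filter (fun i => v i < q)).card < r) : q ≤ orderStat v r := by
  have h : r - 1 < n := by omega
  rw [orderStat, dif_pos h]
  by_contra hlt
  push_neg at hlt
  set σ := Tuple.sort v with hσ
  set j : Fin n := ⟨r - 1, h⟩ with hj
  have hmono := Tuple.monotone_sort v
  have hsub : (Finset.Iic j).map σ.toEmbedding ⊆ Finset.univ.filter (fun i => v i < q) := by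
    intro i hi
    simp only [Finset.mem_map, Finset.mem_Iic, Equiv.coe_toEmbedding] at hi
    obtain ⟨k, hk, rfl⟩ := hi
    simp only [Finset.mem_filter, Finset.mem_univ, true_and]
    exact lt_of_le_of_lt (hmono hk) hlt
  have hcard : ((Finset.Iic j).map σ.toEmbedding).card = r := by
    rw [Finset.card_map, Fin.card_Iic]
    simp [hj]; omega
  have := Finset.card_le_card hsub
  omega


noncomputable def qf (ν : Measure ℝ) (p : ℝ) : ℝ :=
  sInf {x | ENNReal.ofReal p ≤ ν (Iic x)}

section qf
variable (ν : Measure ℝ) [IsProbabilityMeasure ν] {p : ℝ}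

lemma qf_nonempty (hp1 : p < 1) : {x | ENNReal.ofReal p ≤ ν (Iic x)}.Nonempty := by
  by_contra h
  rw [Set.not_nonempty_iff_eq_empty] at h
  have hlt : ∀ x : ℝ, ν (Iic x) < ENNReal.ofReal p := by
    intro x
    by_contra hx
    push_neg at hx
    exact absurd (Set.eq_empty_iff_forall_notMem.mp h x hx) (fun _ => by trivial)
  have hmono : Monotone (fun k : ℕ => Iic (k : ℝ)) := fun a b hab =>
    Iic_subset_Iic.mpr (by exact_mod_cast hab)
  have hunion : (⋃ k : ℕ, Iic (k : ℝ)) = univ := by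
    ext x
    simp only [mem_iUnion, mem_Iic, mem_univ, iff_true]
    obtain ⟨k, hk⟩ := exists_nat_ge x
    exact ⟨k, hk⟩
  have h1 : (1 : ENNReal) = ⨆ k : ℕ, ν (Iic (k : ℝ)) := by
    rw [← hmono.measure_iUnion, hunion, measure_univ]
  have : (1 : ENNReal) ≤ ENNReal.ofReal p := by
    rw [h1]
    exact iSup_le fun k => (hlt k).le
  exact absurd (lt_of_le_of_lt this (ENNReal.ofReal_lt_one.mpr hp1)) (lt_irrefl _)

lemma qf_bddBelow (hp0 : 0 < p) : BddBelow {x | ENNReal.ofReal p ≤ ν (Iic x)} := by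
  by_contra h
  rw [not_bddBelow_iff] at h
  have hge : ∀ k : ℕ, ENNReal.ofReal p ≤ ν (Iic (-(k : ℝ))) := by
    intro k
    obtain ⟨x, hx, hxk⟩ := h (-(k : ℝ))
    exact le_trans hx (measure_mono (Iic_subset_Iic.mpr hxk.le))
  have hanti : Antitone (fun k : ℕ => Iic (-(k : ℝ))) := fun a b hab =>
    Iic_subset_Iic.mpr (neg_le_neg (by exact_mod_cast hab))
  have hinter : (⋂ k : ℕ, Iic (-(k : ℝ))) = ∅ := by
    ext x
    simp only [mem_iInter, mem_Iic, mem_empty_iff_false, iff_false, not_forall, not_le]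
    obtain ⟨k, hk⟩ := exists_nat_gt (-x)
    exact ⟨k, by linarith⟩
  have h0 : (0 : ENNReal) = ⨅ k : ℕ, ν (Iic (-(k : ℝ))) := by
    rw [← hanti.measure_iInter (fun k => measurableSet_Iic.nullMeasurableSet)
      ⟨0, measure_ne_top _ _⟩, hinter, measure_empty]
  have : ENNReal.ofReal p ≤ 0 := h0 ▸ le_iInf hge
  simp only [nonpos_iff_eq_zero, ENNReal.ofReal_eq_zero] at this
  linarith

lemma qf_Iic (hp0 : 0 < p) (hp1 : p < 1) :
    ENNReal.ofReal p ≤ ν (Iic (qf ν p)) := by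
  set S := {x | ENNReal.ofReal p ≤ ν (Iic x)} with hS
  set q := qf ν p with hq
  have hne := qf_nonempty ν hp1
  have hbdd := qf_bddBelow ν hp0
  -- Iic q = ⋂ n, Iic (q + 1/(n+1))
  have hinter : Iic q = ⋂ k : ℕ, Iic (q + 1 / (k + 1)) := by
    ext x
    simp only [mem_Iic, mem_iInter]
    constructor
    · intro hx k
      have : (0:ℝ) < 1 / (k + 1) := by positivity
      linarith
    · intro hx
      refine le_of_forall_pos_le_add (fun e he => ?_)
      obtain ⟨k, hk⟩ := exists_nat_one_div_lt he
      exact le_trans (hx k) (by linarith [hk])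
  have hanti : Antitone (fun k : ℕ => Iic (q + 1 / ((k : ℝ) + 1))) := by
    intro a b hab
    apply Iic_subset_Iic.mpr
    have : (1:ℝ) / (b + 1) ≤ 1 / (a + 1) := by
      apply one_div_le_one_div_of_le (by positivity)
      exact_mod_cast add_le_add_left (Nat.cast_le.mpr hab) 1
    linarith
  have hterm : ∀ k : ℕ, ENNReal.ofReal p ≤ ν (Iic (q + 1 / ((k:ℝ) + 1))) := by
    intro k
    have hlt : q < q + 1 / ((k:ℝ) + 1) := by
      have : (0:ℝ) < 1 / ((k:ℝ) + 1) := by positivity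
      linarith
    obtain ⟨x, hxS, hxlt⟩ := (csInf_lt_iff hbdd hne).mp hlt
    exact le_trans hxS (measure_mono (Iic_subset_Iic.mpr hxlt.le))
  rw [hinter, hanti.measure_iInter (fun k => measurableSet_Iic.nullMeasurableSet)
    ⟨0, measure_ne_top _ _⟩]
  exact le_iInf hterm

lemma qf_Iio (hp0 : 0 < p) (hp1 : p < 1) :
    ν (Iio (qf ν p)) ≤ ENNReal.ofReal p := by
  set q := qf ν p with hq
  have hbdd := qf_bddBelow ν (p := p) hp0
  have hunion : Iio q = ⋃ k : ℕ, Iic (q - 1 / (k + 1)) := by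
    ext x
    simp only [mem_Iio, mem_iUnion, mem_Iic]
    constructor
    · intro hx
      obtain ⟨k, hk⟩ := exists_nat_one_div_lt (sub_pos.mpr hx)
      exact ⟨k, by linarith⟩
    · rintro ⟨k, hk⟩
      have : (0:ℝ) < 1 / ((k:ℝ) + 1) := by positivity
      linarith
  have hmono : Monotone (fun k : ℕ => Iic (q - 1 / ((k:ℝ) + 1))) := by
    intro a b hab
    apply Iic_subset_Iic.mpr
    have : (1:ℝ) / (b + 1) ≤ 1 / (a + 1) := by
      apply one_div_le_one_div_of_le (by positivity)
      exact_mod_cast add_le_add_left (Nat.cast_le.mpr hab) 1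
    linarith
  have hterm : ∀ k : ℕ, ν (Iic (q - 1 / ((k:ℝ) + 1))) ≤ ENNReal.ofReal p := by
    intro k
    by_contra hk
    push_neg at hk
    have hmem : q - 1 / ((k:ℝ) + 1) ∈ {x | ENNReal.ofReal p ≤ ν (Iic x)} := hk.le
    have h' : q ≤ q - 1 / ((k:ℝ) + 1) := csInf_le hbdd hmem
    have hpos : (0:ℝ) < 1 / ((k:ℝ) + 1) := by positivity
    linarith
  rw [hunion, hmono.measure_iUnion]
  exact iSup_le hterm

lemma qf_eq (hatomless : ∀ x : ℝ, ν {x} = 0) (hp0 : 0 < p) (hp1 : p < 1) :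
    ν (Iic (qf ν p)) = ENNReal.ofReal p ∧ ν (Iio (qf ν p)) = ENNReal.ofReal p := by
  set q := qf ν p
  have hIic : ν (Iic q) = ν (Iio q) := by
    refine le_antisymm ?_ (measure_mono Iio_subset_Iic_self)
    calc ν (Iic q) = ν (Iio q ∪ {q}) := by rw [Iio_union_right]
      _ ≤ ν (Iio q) + ν {q} := measure_union_le _ _
      _ = ν (Iio q) := by rw [hatomless q, add_zero]
  have h1 := qf_Iic ν hp0 hp1
  have h2 := qf_Iio ν hp0 hp1
  constructor
  · exact le_antisymm (hIic ▸ h2) h1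
  · exact le_antisymm h2 (hIic ▸ h1)

lemma qf_le_iff (hp0 : 0 < p) (hp1 : p < 1) {c : ℝ} :
    qf ν p ≤ c ↔ ENNReal.ofReal p ≤ ν (Iic c) := by
  constructor
  · intro h
    exact le_trans (qf_Iic ν hp0 hp1) (measure_mono (Iic_subset_Iic.mpr h))
  · intro h
    exact csInf_le (qf_bddBelow ν hp0) h

end qf


open scoped Classical in
lemma pi_count_lt {α : Type*} [MeasurableSpace α] (μ : Measure α) [IsProbabilityMeasure μ]
    (n : ℕ) (A : Set α) (hA : MeasurableSet A) (r : ℕ) :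
    Measure.pi (fun _ : Fin n => μ)
      {x | (Finset.univ.filter (fun i => x i ∈ A)).card < r}
      = ∑ k ∈ Finset.range r, (n.choose k : ENNReal) * (μ A) ^ k * (1 - μ A) ^ (n - k) := by
  set π := Measure.pi (fun _ : Fin n => μ) with hπ
  have hset : ∀ T : Finset (Fin n),
      {x : Fin n → α | Finset.univ.filter (fun i => x i ∈ A) = T}
        = Set.univ.pi (fun i => if i ∈ T then A else Aᶜ) := by
    intro T
    ext x
    simp only [Set.mem_setOf_eq, Set.mem_pi, Set.mem_univ, forall_true_left]
    constructor
    · rintro rfl i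
      by_cases hi : x i ∈ A <;> simp [hi]
    · intro hx
      ext i
      simp only [Finset.mem_filter, Finset.mem_univ, true_and]
      constructor
      · intro hxi
        by_contra hiT
        have := hx i; rw [if_neg hiT] at this; exact this hxi
      · intro hiT
        have := hx i; rwa [if_pos hiT] at this
  have hmeas : ∀ T : Finset (Fin n),
      MeasurableSet {x : Fin n → α | Finset.univ.filter (fun i => x i ∈ A) = T} := by
    intro T
    rw [hset T]
    refine MeasurableSet.univ_pi (fun i => ?_)
    by_cases hi : i ∈ T
    · rw [if_pos hi]; exact hA
    · rw [if_neg hi]; exact hA.compl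
  have hbox : ∀ T : Finset (Fin n),
      π {x | Finset.univ.filter (fun i => x i ∈ A) = T}
        = (μ A) ^ T.card * (1 - μ A) ^ (n - T.card) := by
    intro T
    rw [hset T, hπ, Measure.pi_pi]
    have hcompl : μ Aᶜ = 1 - μ A := by
      rw [measure_compl hA (measure_ne_top μ A), measure_univ]
    have h1 : (∏ i ∈ T, μ (if i ∈ T then A else Aᶜ)) = (μ A) ^ T.card := by
      rw [Finset.prod_congr rfl (fun i hi => by rw [if_pos hi] : ∀ i ∈ T, μ (if i ∈ T then A else Aᶜ) = μ A)]
      rw [Finset.prod_const]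
    have h2 : (∏ i ∈ Tᶜ, μ (if i ∈ T then A else Aᶜ)) = (1 - μ A) ^ (n - T.card) := by
      rw [Finset.prod_congr rfl (fun i hi => by
        rw [if_neg (Finset.mem_compl.mp hi), hcompl] : ∀ i ∈ Tᶜ, μ (if i ∈ T then A else Aᶜ) = 1 - μ A)]
      rw [Finset.prod_const, Finset.card_compl, Fintype.card_fin]
    rw [← Finset.prod_mul_prod_compl T (fun i => μ (if i ∈ T then A else Aᶜ)), h1, h2]
  have hUk : ∀ k : ℕ, {x : Fin n → α | (Finset.univ.filter (fun i => x i ∈ A)).card = k}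
      = ⋃ T ∈ Finset.powersetCard k (Finset.univ : Finset (Fin n)),
          {x | Finset.univ.filter (fun i => x i ∈ A) = T} := by
    intro k
    ext x
    simp only [Set.mem_setOf_eq, Set.mem_iUnion, Finset.mem_powersetCard]
    constructor
    · intro hx
      exact ⟨_, ⟨Finset.subset_univ _, hx⟩, rfl⟩
    · rintro ⟨T, ⟨-, hT⟩, rfl⟩
      exact hT
  have hmeask : ∀ k : ℕ,
      MeasurableSet {x : Fin n → α | (Finset.univ.filter (fun i => x i ∈ A)).card = k} := by
    intro k
    rw [hUk k]
    exact Finset.measurableSet_biUnion _ (fun T _ => hmeas T)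
  have hcnt : ∀ k : ℕ,
      π {x | (Finset.univ.filter (fun i => x i ∈ A)).card = k}
        = (n.choose k : ENNReal) * (μ A) ^ k * (1 - μ A) ^ (n - k) := by
    intro k
    rw [hUk k, measure_biUnion_finset ?_ (fun T _ => hmeas T)]
    · rw [Finset.sum_congr rfl (fun T hT => by
        rw [hbox T, (Finset.mem_powersetCard.mp hT).2] :
        ∀ T ∈ Finset.powersetCard k (Finset.univ : Finset (Fin n)),
          π {x | Finset.univ.filter (fun i => x i ∈ A) = T} = (μ A) ^ k * (1 - μ A) ^ (n - k))]
      rw [Finset.sum_const, Finset.card_powersetCard, Finset.card_univ, Fintype.card_fin,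
        nsmul_eq_mul, mul_assoc]
    · intro T₁ _ T₂ _ hne
      refine Set.disjoint_left.mpr ?_
      rintro x rfl h2
      exact hne h2
  have hU : {x : Fin n → α | (Finset.univ.filter (fun i => x i ∈ A)).card < r}
      = ⋃ k ∈ Finset.range r, {x | (Finset.univ.filter (fun i => x i ∈ A)).card = k} := by
    ext x
    simp [Finset.mem_range]
  rw [hU, measure_biUnion_finset ?_ (fun k _ => hmeask k)]
  · exact Finset.sum_congr rfl (fun k _ => hcnt k)
  · intro k₁ _ k₂ _ hne
    refine Set.disjoint_left.mpr ?_
    rintro x rfl h2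
    exact hne h2



/-- basic statistical guarantee of learning-based RO: with Phase 1 data `D₁`
independent of the i.i.d. Phase 2 data `ξ₁²,…,ξ_{n₂}²`, and the size calibrated as the
`i*`-th order statistic of the transformed Phase 2 data, the uncertainty set
`{z : t(D₁,z) ≤ T}` has `μ`-content at least `1-ε` with probability at least `1-δ`. -/
theorem learning_based_RO_coverage
    {Ω S : Type*} [MeasurableSpace Ω] [MeasurableSpace S]
    (P : Measure Ω) [IsProbabilityMeasure P]
    (m n₂ : ℕ) (hn₂ : 0 < n₂)
    (ε δ : ℝ) (hε : ε ∈ Set.Ioo (0 : ℝ) 1) (hδ : δ ∈ Set.Ioo (0 : ℝ) 1)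
    (hsize : (1 - ε) ^ n₂ ≤ δ)
    (D₁ : Ω → S) (hD₁ : Measurable D₁)
    (ξ : Fin n₂ → Ω → (Fin m → ℝ)) (hξmeas : ∀ i, Measurable (ξ i))
    (hiid : iIndepFun ξ P)
    (μ : Measure (Fin m → ℝ)) [IsProbabilityMeasure μ]
    (hlaw : ∀ i, Measure.map (ξ i) P = μ)
    (hindep : IndepFun D₁ (fun ω => fun i => ξ i ω) P)
    (t : S × (Fin m → ℝ) → ℝ) (ht : Measurable t)
    (hatomless : ∀ s : S, ∀ x : ℝ, Measure.map (fun z => t (s, z)) μ {x} = 0)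
    (istar : ℕ)
    (histar : IsLeast {r : ℕ | 1 ≤ r ∧ r ≤ n₂ ∧
      1 - δ ≤ ∑ k ∈ Finset.range r, (n₂.choose k : ℝ) * (1 - ε) ^ k * ε ^ (n₂ - k)} istar) :
    ENNReal.ofReal (1 - δ) ≤
      P {ω | ENNReal.ofReal (1 - ε) ≤
        μ {z | t (D₁ ω, z) ≤ orderStat (fun i => t (D₁ ω, ξ i ω)) istar}} := by
  classical
  obtain ⟨⟨h1i, hin, hsum⟩, -⟩ := histar
  have h1ε0 : (0:ℝ) < 1 - ε := by linarith [hε.2]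
  have h1ε1 : 1 - ε < 1 := by linarith [hε.1]
  have hts : ∀ s : S, Measurable (fun z => t (s, z)) :=
    fun s => ht.comp measurable_prodMk_left
  set ν : S → Measure ℝ := fun s => μ.map (fun z => t (s, z)) with hν
  have hprob : ∀ s, IsProbabilityMeasure (ν s) :=
    fun s => Measure.isProbabilityMeasure_map (hts s).aemeasurable
  have hmap : ∀ s x, ν s (Iic x) = μ {z | t (s, z) ≤ x} := fun s x => by
    rw [hν]; rw [Measure.map_apply (hts s) measurableSet_Iic]; rfl
  have hmapIio : ∀ s x, ν s (Iio x) = μ {z | t (s, z) < x} := fun s x => by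
    rw [hν]; rw [Measure.map_apply (hts s) measurableSet_Iio]; rfl
  set Q : S → ℝ := fun s => qf (ν s) (1 - ε) with hQ
  have hQIic : ∀ s, μ {z | t (s, z) ≤ Q s} = ENNReal.ofReal (1 - ε) := fun s => by
    have := (qf_eq (ν s) (fun x => hatomless s x) h1ε0 h1ε1).1
    rw [hmap s (Q s)] at this; exact this
  have hQIio : ∀ s, μ {z | t (s, z) < Q s} = ENNReal.ofReal (1 - ε) := fun s => by
    have := (qf_eq (ν s) (fun x => hatomless s x) h1ε0 h1ε1).2
    rw [hmapIio s (Q s)] at this; exact this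
  have hmeasF : ∀ c : ℝ, Measurable (fun s => μ {z | t (s, z) ≤ c}) := fun c => by
    have hms : MeasurableSet {p : S × (Fin m → ℝ) | t p ≤ c} :=
      measurableSet_le ht measurable_const
    exact measurable_measure_prodMk_left hms
  have hQmeas : Measurable Q := by
    apply measurable_of_Iic
    intro c
    have hpre : Q ⁻¹' Iic c = {s | ENNReal.ofReal (1 - ε) ≤ μ {z | t (s, z) ≤ c}} := by
      ext s
      simp only [Set.mem_preimage, Set.mem_Iic, Set.mem_setOf_eq]
      rw [hQ, ← hmap s c]
      exact qf_le_iff (ν s) h1ε0 h1ε1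
    rw [hpre]
    exact measurableSet_le measurable_const (hmeasF c)
  set Φ : Ω → S × (Fin n₂ → Fin m → ℝ) := fun ω => (D₁ ω, fun i => ξ i ω) with hΦ
  have hξvec : Measurable (fun ω => fun i => ξ i ω) := measurable_pi_lambda _ hξmeas
  have hΦm : Measurable Φ := hD₁.prodMk hξvec
  set G : Set (S × (Fin n₂ → Fin m → ℝ)) :=
    {p | (Finset.univ.filter (fun i => t (p.1, p.2 i) < Q p.1)).card < istar} with hG
  have hGm : MeasurableSet G := by
    have hc : Measurable (fun p : S × (Fin n₂ → Fin m → ℝ) =>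
        ∑ i : Fin n₂, if t (p.1, p.2 i) < Q p.1 then (1:ℕ) else 0) := by
      apply Finset.measurable_sum
      intro i _
      refine Measurable.ite ?_ measurable_const measurable_const
      exact measurableSet_lt
        (ht.comp (measurable_fst.prodMk ((measurable_pi_apply i).comp measurable_snd)))
        (hQmeas.comp measurable_fst)
    have hGeq : G = (fun p : S × (Fin n₂ → Fin m → ℝ) =>
        ∑ i : Fin n₂, if t (p.1, p.2 i) < Q p.1 then (1:ℕ) else 0) ⁻¹' (Iio istar) := by
      ext p
      simp only [hG, Set.mem_setOf_eq, Set.mem_preimage, Set.mem_Iio, Finset.sum_boole]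
      rfl
    rw [hGeq]
    exact hc (measurableSet_Iio)
  have hpi : P.map (fun ω => fun i => ξ i ω) = Measure.pi (fun _ : Fin n₂ => μ) := by
    refine (Measure.pi_eq ?_).symm
    intro s hs
    rw [Measure.map_apply hξvec (MeasurableSet.univ_pi hs)]
    have hpre : (fun ω => fun i => ξ i ω) ⁻¹' (Set.univ.pi s)
        = ⋂ i ∈ Finset.univ, ξ i ⁻¹' (s i) := by
      ext ω; simp [Set.mem_pi]
    rw [hpre, hiid.measure_inter_preimage_eq_mul Finset.univ (fun i _ => hs i)]
    refine Finset.prod_congr rfl (fun i _ => ?_)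
    rw [← hlaw i, Measure.map_apply (hξmeas i) (hs i)]
  have hprod : P.map Φ = (P.map D₁).prod (Measure.pi (fun _ : Fin n₂ => μ)) := by
    rw [← hpi]
    exact (indepFun_iff_map_prod_eq_prod_map_map hD₁.aemeasurable hξvec.aemeasurable).mp hindep
  have hPD : IsProbabilityMeasure (P.map D₁) := Measure.isProbabilityMeasure_map hD₁.aemeasurable
  have hinner : ∀ s : S,
      ENNReal.ofReal (1 - δ) ≤ Measure.pi (fun _ : Fin n₂ => μ) (Prod.mk s ⁻¹' G) := by
    intro s
    have hA : MeasurableSet {z : Fin m → ℝ | t (s, z) < Q s} :=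
      measurableSet_lt (hts s) measurable_const
    have hpre : Prod.mk s ⁻¹' G = {x : Fin n₂ → Fin m → ℝ |
        (Finset.univ.filter (fun i => x i ∈ {z : Fin m → ℝ | t (s, z) < Q s})).card < istar} := by
      ext x
      simp only [hG, Set.mem_preimage, Set.mem_setOf_eq]
    rw [hpre, pi_count_lt μ n₂ _ hA istar, hQIio s]
    have h1 : (1 : ENNReal) - ENNReal.ofReal (1 - ε) = ENNReal.ofReal ε := by
      rw [← ENNReal.ofReal_one, ← ENNReal.ofReal_sub _ (by linarith : (0:ℝ) ≤ 1 - ε)]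
      norm_num
    rw [h1]
    calc ENNReal.ofReal (1 - δ)
        ≤ ENNReal.ofReal (∑ k ∈ Finset.range istar,
            (n₂.choose k : ℝ) * (1 - ε) ^ k * ε ^ (n₂ - k)) := ENNReal.ofReal_le_ofReal hsum
      _ = ∑ k ∈ Finset.range istar,
            (n₂.choose k : ENNReal) * ENNReal.ofReal (1 - ε) ^ k * ENNReal.ofReal ε ^ (n₂ - k) := by
          have hnn : ∀ k : ℕ, (0:ℝ) ≤ (n₂.choose k : ℝ) * (1 - ε) ^ k * ε ^ (n₂ - k) :=
            fun k => mul_nonneg (mul_nonneg (Nat.cast_nonneg _) (pow_nonneg h1ε0.le _))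
              (pow_nonneg hε.1.le _)
          rw [ENNReal.ofReal_sum_of_nonneg (fun k _ => hnn k)]
          refine Finset.sum_congr rfl (fun k _ => ?_)
          rw [ENNReal.ofReal_mul (mul_nonneg (Nat.cast_nonneg _) (pow_nonneg h1ε0.le _)),
            ENNReal.ofReal_mul (Nat.cast_nonneg _),
            ENNReal.ofReal_pow h1ε0.le, ENNReal.ofReal_pow hε.1.le,
            ENNReal.ofReal_natCast]
  have hGbound : ENNReal.ofReal (1 - δ) ≤ P.map Φ G := by
    rw [hprod, Measure.prod_apply hGm]
    calc ENNReal.ofReal (1 - δ)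
        = ∫⁻ _, ENNReal.ofReal (1 - δ) ∂(P.map D₁) := by
          rw [lintegral_const, measure_univ, mul_one]
      _ ≤ ∫⁻ s, Measure.pi (fun _ : Fin n₂ => μ) (Prod.mk s ⁻¹' G) ∂(P.map D₁) :=
          lintegral_mono (fun s => hinner s)
  rw [Measure.map_apply hΦm hGm] at hGbound
  refine le_trans hGbound (measure_mono ?_)
  intro ω hω
  simp only [Set.mem_preimage, hG, hΦ, Set.mem_setOf_eq] at hω
  simp only [Set.mem_setOf_eq]
  have hord : Q (D₁ ω) ≤ orderStat (fun i => t (D₁ ω, ξ i ω)) istar :=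
    count_lt_orderStat _ istar h1i hin _ hω
  calc ENNReal.ofReal (1 - ε) = μ {z | t (D₁ ω, z) ≤ Q (D₁ ω)} := (hQIic _).symm
    _ ≤ μ {z | t (D₁ ω, z) ≤ orderStat (fun i => t (D₁ ω, ξ i ω)) istar} :=
        measure_mono (fun z hz => le_trans hz hord)
end

section
/- Let ε, δ ∈ (0,1). Let (S, 𝒮) be a measurable space and, on a common probability space, let D₁ be an S-valued random element; for each positive integer n with (1−ε)^n ≤ δ let ξ₁ⁿ, …, ξ_nⁿ be i.i.d. ℝ^m-valued random vectors with common law μ, independent of D₁. Let t : S × ℝ^m → ℝ be jointly measurable such that for every s ∈ S the pushforward of μ under z ↦ t(s,z) is atomless. Define i*(n) = min{r ∈ {1,…,n} : Σ_{k=0}^{r−1} C(n,k)(1−ε)^k ε^{n−k} ≥ 1−δ}, let T_n be the i*(n)-th order statistic of t(D₁,ξ₁ⁿ),…,t(D₁,ξ_nⁿ), and let C_n = μ{z ∈ ℝ^m : t(D₁,z) ≤ T_n} be the realized coverage of the calibrated uncertainty set. Then C_n → 1−ε in probability as n → ∞. -/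
open MeasureTheory ProbabilityTheory Filter

open Set
open scoped Classical ENNReal

lemma binom_sum_one (p : ℝ) (n : ℕ) :
    ∑ k ∈ Finset.range (n+1), (n.choose k : ℝ) * p ^ k * (1-p) ^ (n-k) = 1 := by
  have h := add_pow p (1-p) n
  simp only [add_sub_cancel, one_pow] at h
  exact (Finset.sum_congr rfl fun k _ => by ring).trans h.symm

lemma binom_variance (p : ℝ) (n : ℕ) :
    ∑ k ∈ Finset.range (n+1),
      ((k : ℝ) - n * p) ^ 2 * ((n.choose k : ℝ) * p ^ k * (1-p) ^ (n-k))
      = n * (p * (1-p)) := by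
  have h := bernsteinPolynomial.variance ℝ n
  apply_fun (fun q => Polynomial.eval p q) at h
  simp only [Polynomial.eval_finset_sum, Polynomial.eval_mul, Polynomial.eval_pow,
    Polynomial.eval_sub, Polynomial.eval_natCast, nsmul_eq_mul, Polynomial.eval_one,
    Polynomial.eval_X, bernsteinPolynomial] at h
  rw [show (n:ℝ) * (p * (1-p)) = ↑n * p * (1 - p) by ring, ← h]
  congr 1; funext k
  rw [show ((k:ℝ) - ↑n * p) ^ 2 = (↑n * p - ↑k) ^ 2 by ring]

lemma binom_tail (p θ : ℝ) (hp0 : 0 ≤ p) (hp1 : p ≤ 1) (hθ : 0 < θ) (n : ℕ) (hn : 0 < n) :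
    ∑ k ∈ (Finset.range (n+1)).filter (fun k : ℕ => θ * n ≤ |(k:ℝ) - n * p|),
      (n.choose k : ℝ) * p ^ k * (1-p) ^ (n-k) ≤ 1 / (4 * n * θ^2) := by
  have hn' : (0:ℝ) < n := by exact_mod_cast hn
  have hθn : (0:ℝ) < θ * n := by positivity
  have hterm : ∀ k, 0 ≤ (n.choose k : ℝ) * p ^ k * (1-p) ^ (n-k) := fun k => by
    have : (0:ℝ) ≤ 1 - p := by linarith
    positivity
  have step1 : ∑ k ∈ (Finset.range (n+1)).filter (fun k : ℕ => θ * n ≤ |(k:ℝ) - n * p|),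
      (n.choose k : ℝ) * p ^ k * (1-p) ^ (n-k)
      ≤ ∑ k ∈ (Finset.range (n+1)).filter (fun k : ℕ => θ * n ≤ |(k:ℝ) - n * p|),
        (((k:ℝ) - n * p)^2 / (θ*n)^2) * ((n.choose k : ℝ) * p ^ k * (1-p) ^ (n-k)) := by
    refine Finset.sum_le_sum fun k hk => ?_
    have hk' := (Finset.mem_filter.mp hk).2
    have h1 : (θ*n)^2 ≤ ((k:ℝ) - n * p)^2 := by
      have := abs_nonneg ((k:ℝ) - n * p)
      calc (θ*n)^2 ≤ |(k:ℝ) - n * p|^2 := by nlinarith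
      _ = ((k:ℝ) - n * p)^2 := sq_abs _
    have h2 : (1:ℝ) ≤ ((k:ℝ) - n * p)^2 / (θ*n)^2 := by
      rw [le_div_iff₀ (by positivity)]; linarith
    nlinarith [hterm k, mul_le_mul_of_nonneg_right h2 (hterm k)]
  have step2 : ∑ k ∈ (Finset.range (n+1)).filter (fun k : ℕ => θ * n ≤ |(k:ℝ) - n * p|),
        (((k:ℝ) - n * p)^2 / (θ*n)^2) * ((n.choose k : ℝ) * p ^ k * (1-p) ^ (n-k))
      ≤ ∑ k ∈ Finset.range (n+1),
        (((k:ℝ) - n * p)^2 / (θ*n)^2) * ((n.choose k : ℝ) * p ^ k * (1-p) ^ (n-k)) := by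
    refine Finset.sum_le_sum_of_subset_of_nonneg (Finset.filter_subset _ _) fun k _ _ => ?_
    have := hterm k; positivity
  have step3 : ∑ k ∈ Finset.range (n+1),
        (((k:ℝ) - n * p)^2 / (θ*n)^2) * ((n.choose k : ℝ) * p ^ k * (1-p) ^ (n-k))
      = (n * (p * (1-p))) / (θ*n)^2 := by
    rw [eq_div_iff (by positivity), Finset.sum_mul, ← binom_variance p n]
    refine Finset.sum_congr rfl fun k _ => ?_
    field_simp
  have hp14 : p * (1-p) ≤ 1/4 := by nlinarith [sq_nonneg (p - 1/2)]
  have step4 : (n * (p * (1-p))) / (θ*n)^2 ≤ 1 / (4 * n * θ^2) := by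
    rw [div_le_div_iff₀ (by positivity) (by positivity)]
    have : (n:ℝ) * (p*(1-p)) * (4 * n * θ^2) = (p*(1-p)) * 4 * (θ*n)^2 := by ring
    nlinarith [sq_nonneg (θ*n)]
  linarith

lemma pi_count_eq {α : Type*} [MeasurableSpace α] (μ : Measure α) [IsProbabilityMeasure μ]
    (n : ℕ) (A : Set α) (hA : MeasurableSet A) (k : ℕ) :
    Measure.pi (fun _ : Fin n => μ)
      {x : Fin n → α | (Finset.univ.filter fun i => x i ∈ A).card = k}
      = (n.choose k : ℝ≥0∞) * (μ A)^k * (μ Aᶜ)^(n-k) := by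
  classical
  have hforward : ∀ (T : Finset (Fin n)) (x : Fin n → α),
      x ∈ Set.pi univ (fun i => if i ∈ T then A else Aᶜ) ↔
        (Finset.univ.filter fun i => x i ∈ A) = T := by
    intro T x
    constructor
    · intro hx
      ext i
      simp only [Finset.mem_filter, Finset.mem_univ, true_and]
      have := hx i (mem_univ i)
      by_cases hi : i ∈ T
      · simp [hi] at this; simp [hi, this]
      · simp [hi] at this; simp [hi, this]
    · intro hT i _
      by_cases hi : i ∈ T
      · have : x i ∈ A := by
          rw [← hT] at hi; simpa using (Finset.mem_filter.mp hi).2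
        simp [hi, this]
      · have : x i ∉ A := by
          intro h; exact hi (hT ▸ (Finset.mem_filter.mpr ⟨Finset.mem_univ i, h⟩))
        simp [hi, this]
  have hset : {x : Fin n → α | (Finset.univ.filter fun i => x i ∈ A).card = k}
      = ⋃ T ∈ Finset.powersetCard k (Finset.univ : Finset (Fin n)),
          Set.pi univ (fun i => if i ∈ T then A else Aᶜ) := by
    ext x
    simp only [mem_setOf_eq, mem_iUnion, Finset.mem_powersetCard, exists_prop]
    constructor
    · intro hx
      exact ⟨Finset.univ.filter fun i => x i ∈ A, ⟨Finset.subset_univ _, hx⟩,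
        (hforward _ x).mpr rfl⟩
    · rintro ⟨T, ⟨-, hcard⟩, hx⟩
      rw [(hforward T x).mp hx]; exact hcard
  rw [hset, measure_biUnion_finset]
  · have heach : ∀ T ∈ Finset.powersetCard k (Finset.univ : Finset (Fin n)),
        Measure.pi (fun _ : Fin n => μ) (Set.pi univ (fun i => if i ∈ T then A else Aᶜ))
        = (μ A)^k * (μ Aᶜ)^(n-k) := by
      intro T hT
      obtain ⟨-, hcard⟩ := Finset.mem_powersetCard.mp hT
      rw [Measure.pi_pi]
      have : ∀ i : Fin n, μ (if i ∈ T then A else Aᶜ) = if i ∈ T then μ A else μ Aᶜ := by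
        intro i; by_cases hi : i ∈ T <;> simp [hi]
      rw [Finset.prod_congr rfl fun i _ => this i, Finset.prod_ite, Finset.prod_const,
        Finset.prod_const]
      congr 1
      · congr 1
        rw [← hcard]; congr 1
        ext i; simp
      · congr 1
        have h1 : (Finset.univ.filter fun i : Fin n => ¬ i ∈ T).card
            = n - T.card := by
          rw [Finset.filter_not, Finset.filter_mem_eq_inter, Finset.univ_inter,
            Finset.card_sdiff_of_subset (Finset.subset_univ _)]
          simp
        rw [h1, hcard]
    rw [Finset.sum_congr rfl heach, Finset.sum_const, Finset.card_powersetCard,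
      Finset.card_univ, Fintype.card_fin, nsmul_eq_mul, mul_assoc]
  · intro T hT T' hT' hne
    simp only [Function.onFun]
    refine Set.disjoint_left.mpr fun x hx hx' => hne ?_
    rw [← (hforward T x).mp hx, ← (hforward T' x).mp hx']
  · intro T _
    exact MeasurableSet.univ_pi fun i => by
      by_cases hi : i ∈ T <;> simp [hi, hA, hA.compl]

lemma pi_count_tail {α : Type*} [MeasurableSpace α] (μ : Measure α) [IsProbabilityMeasure μ]
    (n : ℕ) (hn : 0 < n) (A : Set α) (hA : MeasurableSet A) (θ : ℝ) (hθ : 0 < θ) :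
    Measure.pi (fun _ : Fin n => μ)
      {x : Fin n → α | θ * n ≤
        |((Finset.univ.filter fun i => x i ∈ A).card : ℝ) - n * (μ A).toReal|}
      ≤ ENNReal.ofReal (1 / (4 * n * θ^2)) := by
  classical
  set p : ℝ := (μ A).toReal with hp
  have hp0 : 0 ≤ p := ENNReal.toReal_nonneg
  have hp1 : p ≤ 1 := by
    rw [hp]
    exact ENNReal.toReal_le_of_le_ofReal one_pos.le (by simpa using prob_le_one (μ := μ) (s := A))
  have hμA : μ A = ENNReal.ofReal p := (ENNReal.ofReal_toReal (measure_ne_top μ A)).symm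
  have hμAc : μ Aᶜ = ENNReal.ofReal (1 - p) := by
    rw [prob_compl_eq_one_sub hA, hμA, ENNReal.ofReal_sub _ hp0, ENNReal.ofReal_one]
  have hsub : {x : Fin n → α | θ * n ≤
        |((Finset.univ.filter fun i => x i ∈ A).card : ℝ) - n * p|}
      ⊆ ⋃ k ∈ (Finset.range (n+1)).filter (fun k : ℕ => θ * n ≤ |(k:ℝ) - n * p|),
          {x : Fin n → α | (Finset.univ.filter fun i => x i ∈ A).card = k} := by
    intro x hx
    simp only [mem_setOf_eq] at hx
    refine mem_iUnion₂.mpr ⟨(Finset.univ.filter fun i => x i ∈ A).card, ?_, rfl⟩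
    refine Finset.mem_filter.mpr ⟨Finset.mem_range.mpr ?_, hx⟩
    exact Nat.lt_succ_of_le ((Finset.card_filter_le _ _).trans_eq (by simp))
  refine (measure_mono hsub).trans ?_
  refine (measure_biUnion_finset_le _ _).trans ?_
  have heach : ∀ k ∈ (Finset.range (n+1)).filter (fun k : ℕ => θ * n ≤ |(k:ℝ) - n * p|),
      Measure.pi (fun _ : Fin n => μ)
        {x : Fin n → α | (Finset.univ.filter fun i => x i ∈ A).card = k}
      = ENNReal.ofReal ((n.choose k : ℝ) * p ^ k * (1-p) ^ (n-k)) := by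
    intro k _
    rw [pi_count_eq μ n A hA k, hμA, hμAc, ← ENNReal.ofReal_pow hp0,
      ← ENNReal.ofReal_pow (by linarith), ← ENNReal.ofReal_natCast (n.choose k),
      ← ENNReal.ofReal_mul (by positivity), ← ENNReal.ofReal_mul (by positivity)]
  rw [Finset.sum_congr rfl heach, ← ENNReal.ofReal_sum_of_nonneg ?hnn]
  case hnn =>
    intro k _
    have h1 : (0:ℝ) ≤ 1 - p := by linarith
    positivity
  exact ENNReal.ofReal_le_ofReal (binom_tail p θ hp0 hp1 hθ n hn)

lemma cdf_leftLim_eq (ν : Measure ℝ) [IsProbabilityMeasure ν] (hν : ∀ x : ℝ, ν {x} = 0)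
    (x : ℝ) : Function.leftLim (⇑(cdf ν)) x = cdf ν x := by
  have h1 : (cdf ν).measure {x} = 0 := by rw [measure_cdf]; exact hν x
  rw [StieltjesFunction.measure_singleton, ENNReal.ofReal_eq_zero, sub_nonpos] at h1
  exact le_antisymm (Monotone.leftLim_le (monotone_cdf (μ := ν)) le_rfl) h1

lemma exists_q_upper (ν : Measure ℝ) [IsProbabilityMeasure ν] (hν : ∀ x : ℝ, ν {x} = 0)
    (c : ℝ) (hc0 : 0 < c) (hc1 : c < 1) :
    ∃ q : ℝ, (ν (Iic q)).toReal = c ∧ ∀ y : ℝ, (c ≤ (ν (Iic y)).toReal ↔ q ≤ y) := by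
  simp only [← measureReal_def, ← cdf_eq_real]
  set S : Set ℝ := {y | c ≤ cdf ν y} with hS
  have hne : S.Nonempty := by
    obtain ⟨y, hy⟩ := ((tendsto_cdf_atTop ν).eventually_const_le hc1).exists
    exact ⟨y, hy⟩
  have hbdd : BddBelow S := by
    obtain ⟨x₀, hx₀⟩ := ((tendsto_cdf_atBot ν).eventually_lt_const hc0).exists
    refine ⟨x₀, fun y hy => ?_⟩
    by_contra h
    push_neg at h
    exact absurd (le_trans hy ((monotone_cdf _) h.le)) (not_le.mpr hx₀)
  set q : ℝ := sInf S with hq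
  have hq_le : ∀ y ∈ S, q ≤ y := fun y hy => csInf_le hbdd hy
  have hfq_ge : c ≤ cdf ν q := by
    have hcl : q ∈ closure S := csInf_mem_closure hne hbdd
    have hcw : ContinuousWithinAt (cdf ν) S q :=
      ((cdf ν).right_continuous q).mono fun y hy => hq_le y hy
    have h1 : cdf ν q ∈ closure ((cdf ν) '' S) := hcw.mem_closure_image hcl
    have h2 : closure ((cdf ν) '' S) ⊆ Ici c := by
      refine closure_minimal ?_ isClosed_Ici
      rintro z ⟨y, hy, rfl⟩; exact hy
    exact h2 h1
  have hfq_le : cdf ν q ≤ c := by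
    rw [← cdf_leftLim_eq ν hν q,
      Monotone.leftLim_eq_sSup (monotone_cdf (μ := ν))]
    refine csSup_le ((nonempty_Iio).image _) ?_
    rintro z ⟨y, hy, rfl⟩
    have hyS : y ∉ S := fun hmem => absurd (hq_le y hmem) (not_le.mpr hy)
    exact (not_le.mp hyS).le
  have hfq : cdf ν q = c := le_antisymm hfq_le hfq_ge
  exact ⟨q, hfq, fun y => ⟨fun h => hq_le y h, fun h => hfq ▸ (monotone_cdf _) h⟩⟩

lemma exists_q_lower (ν : Measure ℝ) [IsProbabilityMeasure ν] (hν : ∀ x : ℝ, ν {x} = 0)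
    (c : ℝ) (hc0 : 0 < c) (hc1 : c < 1) :
    ∃ q : ℝ, (ν (Iic q)).toReal = c ∧ ∀ y : ℝ, ((ν (Iic y)).toReal ≤ c ↔ y ≤ q) := by
  simp only [← measureReal_def, ← cdf_eq_real]
  set S : Set ℝ := {y | cdf ν y ≤ c} with hS
  have hne : S.Nonempty := by
    obtain ⟨y, hy⟩ := ((tendsto_cdf_atBot ν).eventually_lt_const hc0).exists
    exact ⟨y, hy.le⟩
  have hbdd : BddAbove S := by
    obtain ⟨x₁, hx₁⟩ := ((tendsto_cdf_atTop ν).eventually_const_lt hc1).exists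
    refine ⟨x₁, fun y hy => ?_⟩
    by_contra h
    push_neg at h
    exact absurd (le_trans ((monotone_cdf _) h.le) hy) (not_le.mpr hx₁)
  set q : ℝ := sSup S with hq
  have hq_le : ∀ y ∈ S, y ≤ q := fun y hy => le_csSup hbdd hy
  have hfq_le : cdf ν q ≤ c := by
    rw [← cdf_leftLim_eq ν hν q,
      Monotone.leftLim_eq_sSup (monotone_cdf (μ := ν))]
    refine csSup_le ((nonempty_Iio).image _) ?_
    rintro z ⟨y, hy, rfl⟩
    obtain ⟨w, hwS, hyw⟩ := exists_lt_of_lt_csSup hne hy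
    exact le_trans ((monotone_cdf _) hyw.le) hwS
  have hfq_ge : c ≤ cdf ν q := by
    have hcl : q ∈ closure (Ioi q) := by rw [closure_Ioi]; exact self_mem_Ici
    have hcw : ContinuousWithinAt (cdf ν) (Ioi q) q :=
      ((cdf ν).right_continuous q).mono Ioi_subset_Ici_self
    have h1 : cdf ν q ∈ closure ((cdf ν) '' (Ioi q)) := hcw.mem_closure_image hcl
    have h2 : closure ((cdf ν) '' (Ioi q)) ⊆ Ici c := by
      refine closure_minimal ?_ isClosed_Ici
      rintro z ⟨y, hy, rfl⟩
      have hyS : y ∉ S := fun hmem => absurd (hq_le y hmem) (not_le.mpr hy)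
      have : ¬ (cdf ν y ≤ c) := hyS
      exact (not_le.mp this).le
    exact h2 h1
  have hfq : cdf ν q = c := le_antisymm hfq_le hfq_ge
  exact ⟨q, hfq, fun y => ⟨fun h => hq_le y h, fun h => hfq ▸ (monotone_cdf _) h⟩⟩

lemma orderStat_count_ge {n r : ℕ} (v : Fin n → ℝ) (hr : 1 ≤ r) (hrn : r ≤ n) {q : ℝ}
    (hq : q ≤ orderStat v r) :
    n + 1 - r ≤ (Finset.univ.filter fun i => q ≤ v i).card := by
  have h : r - 1 < n := by omega
  set j₀ : Fin n := ⟨r - 1, h⟩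
  have hT : orderStat v r = v (Tuple.sort v j₀) := dif_pos h
  have hmap : ∀ j ∈ Finset.Ici j₀, Tuple.sort v j ∈ Finset.univ.filter fun i => q ≤ v i := by
    intro j hj
    refine Finset.mem_filter.mpr ⟨Finset.mem_univ _, ?_⟩
    have : v (Tuple.sort v j₀) ≤ v (Tuple.sort v j) :=
      Tuple.monotone_sort v (Finset.mem_Ici.mp hj)
    linarith [hq.trans_eq hT]
  have hinj : Set.InjOn (Tuple.sort v) (Finset.Ici j₀) :=
    (Tuple.sort v).injective.injOn
  have hcard := Finset.card_le_card_of_injOn _ hmap hinj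
  rw [Fin.card_Ici] at hcard
  have hj₀ : (j₀ : ℕ) = r - 1 := rfl
  omega

lemma orderStat_count_le {n r : ℕ} (v : Fin n → ℝ) (hr : 1 ≤ r) (hrn : r ≤ n) {q : ℝ}
    (hq : orderStat v r ≤ q) :
    r ≤ (Finset.univ.filter fun i => v i ≤ q).card := by
  have h : r - 1 < n := by omega
  set j₀ : Fin n := ⟨r - 1, h⟩
  have hT : orderStat v r = v (Tuple.sort v j₀) := dif_pos h
  have hmap : ∀ j ∈ Finset.Iic j₀, Tuple.sort v j ∈ Finset.univ.filter fun i => v i ≤ q := by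
    intro j hj
    refine Finset.mem_filter.mpr ⟨Finset.mem_univ _, ?_⟩
    have : v (Tuple.sort v j) ≤ v (Tuple.sort v j₀) :=
      Tuple.monotone_sort v (Finset.mem_Iic.mp hj)
    linarith [hT ▸ hq]
  have hinj : Set.InjOn (Tuple.sort v) (Finset.Iic j₀) :=
    (Tuple.sort v).injective.injOn
  have hcard := Finset.card_le_card_of_injOn _ hmap hinj
  rw [Fin.card_Iic] at hcard
  have hj₀ : (j₀ : ℕ) = r - 1 := rfl
  omega

lemma istar_asymp (ε δ : ℝ) (hε : ε ∈ Set.Ioo (0:ℝ) 1) (hδ : δ ∈ Set.Ioo (0:ℝ) 1)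
    (istar : ℕ → ℕ)
    (histar : ∀ n : ℕ, (1 - ε) ^ n ≤ δ →
      IsLeast {r : ℕ | 1 ≤ r ∧ r ≤ n ∧
        1 - δ ≤ ∑ k ∈ Finset.range r, (n.choose k : ℝ) * (1 - ε) ^ k * ε ^ (n - k)} (istar n))
    (θ : ℝ) (hθ : 0 < θ) :
    ∀ᶠ n in atTop, (1 - ε) ^ n ≤ δ ∧ 1 ≤ istar n ∧ istar n ≤ n ∧
      |(istar n : ℝ) - n * (1 - ε)| ≤ θ * n := by
  obtain ⟨hε0, hε1⟩ := hε
  obtain ⟨hδ0, hδ1⟩ := hδ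
  set p : ℝ := 1 - ε with hp
  have hp0 : 0 < p := by simp [hp]; linarith
  have hp1 : p < 1 := by simp [hp]; linarith
  -- eventual numeric conditions
  have e1 : ∀ᶠ n : ℕ in atTop, (1 - ε) ^ n ≤ δ := by
    have h := tendsto_pow_atTop_nhds_zero_of_lt_one hp0.le hp1
    exact h.eventually_le_const hδ0
  have e2 : ∀ᶠ n : ℕ in atTop, (1:ℝ) ≤ n := by
    exact_mod_cast eventually_ge_atTop 1
  have e3 : ∀ᶠ n : ℕ in atTop, 1 / (4 * (n:ℝ) * θ^2) < 1 - δ := by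
    have h : Tendsto (fun n : ℕ => 1 / (4 * (n:ℝ) * θ^2)) atTop (nhds 0) := by
      have h4 : Tendsto (fun n : ℕ => 4 * (n:ℝ) * θ^2) atTop atTop := by
        have := tendsto_natCast_atTop_atTop (R := ℝ)
        exact (this.const_mul_atTop (by positivity)).atTop_mul_const (by positivity)
      exact h4.inv_tendsto_atTop.congr fun n => by simp [one_div]
    exact h.eventually_lt_const (by linarith)
  have e4 : ∀ᶠ n : ℕ in atTop, 1 / (4 * (n:ℝ) * (θ/2)^2) ≤ δ := by
    have h : Tendsto (fun n : ℕ => 1 / (4 * (n:ℝ) * (θ/2)^2)) atTop (nhds 0) := by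
      have h4 : Tendsto (fun n : ℕ => 4 * (n:ℝ) * (θ/2)^2) atTop atTop := by
        have := tendsto_natCast_atTop_atTop (R := ℝ)
        exact (this.const_mul_atTop (by positivity)).atTop_mul_const (by positivity)
      exact h4.inv_tendsto_atTop.congr fun n => by simp [one_div]
    exact h.eventually_le_const hδ0
  have e5 : ∀ᶠ n : ℕ in atTop, (2:ℝ) ≤ (n:ℝ) * p := by
    have h : Tendsto (fun n : ℕ => (n:ℝ) * p) atTop atTop :=
      (tendsto_natCast_atTop_atTop (R := ℝ)).atTop_mul_const hp0
    exact h.eventually_ge_atTop 2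
  have e6 : ∀ᶠ n : ℕ in atTop, (2:ℝ) ≤ θ * n := by
    have h : Tendsto (fun n : ℕ => θ * (n:ℝ)) atTop atTop :=
      (tendsto_natCast_atTop_atTop (R := ℝ)).const_mul_atTop hθ
    exact h.eventually_ge_atTop 2
  filter_upwards [e1, e2, e3, e4, e5, e6] with n h1 h2 h3 h4 h5 h6
  have hn0 : 0 < n := by exact_mod_cast lt_of_lt_of_le one_pos h2
  obtain ⟨⟨hr1, hrn, hsum⟩, hmin⟩ := histar n h1
  set r : ℕ := istar n with hr
  refine ⟨h1, hr1, hrn, ?_⟩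
  have tnn : ∀ k, 0 ≤ (n.choose k : ℝ) * p ^ k * (1-p) ^ (n-k) := fun k => by
    have : (0:ℝ) ≤ 1 - p := by linarith
    positivity
  have hsum' : 1 - δ ≤ ∑ k ∈ Finset.range r, (n.choose k : ℝ) * p ^ k * (1-p) ^ (n-k) := by
    refine hsum.trans_eq (Finset.sum_congr rfl fun k _ => ?_)
    simp [hp]
  -- lower bound
  have hlow : (n:ℝ) * p - θ * n ≤ r := by
    by_contra hcon
    push_neg at hcon
    have hsubset : Finset.range r ⊆
        (Finset.range (n+1)).filter (fun k : ℕ => θ * n ≤ |(k:ℝ) - n * p|) := by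
      intro k hk
      have hk' : k < r := Finset.mem_range.mp hk
      refine Finset.mem_filter.mpr ⟨Finset.mem_range.mpr (by omega), ?_⟩
      have hkr : (k:ℝ) ≤ (r:ℝ) - 1 := by exact_mod_cast Nat.le_sub_one_of_lt hk'
      have : (k:ℝ) < (n:ℝ) * p - θ * n := by linarith
      rw [abs_sub_comm, abs_of_nonneg (by linarith)]
      linarith
    have hb : ∑ k ∈ Finset.range r, (n.choose k : ℝ) * p ^ k * (1-p) ^ (n-k)
        ≤ 1 / (4 * n * θ^2) :=
      le_trans (Finset.sum_le_sum_of_subset_of_nonneg hsubset fun k _ _ => tnn k)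
        (binom_tail p θ hp0.le hp1.le hθ n hn0)
    linarith
  -- upper bound
  have hupp : (r:ℝ) - (n:ℝ) * p ≤ θ * n := by
    by_contra hcon
    push_neg at hcon
    have hr2 : 2 ≤ r := by
      have : (2:ℝ) ≤ (r:ℝ) := by linarith
      exact_mod_cast this
    have hnotmem : r - 1 ∉ {r' : ℕ | 1 ≤ r' ∧ r' ≤ n ∧
        1 - δ ≤ ∑ k ∈ Finset.range r', (n.choose k : ℝ) * (1 - ε) ^ k * ε ^ (n - k)} := by
      intro hmem
      exact absurd (hmin hmem) (by omega)
    have hfail : ¬ (1 - δ ≤ ∑ k ∈ Finset.range (r-1),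
        (n.choose k : ℝ) * (1 - ε) ^ k * ε ^ (n - k)) := by
      intro hc
      exact hnotmem ⟨by omega, by omega, hc⟩
    apply hfail
    have heq : ∑ k ∈ Finset.range (r-1), (n.choose k : ℝ) * (1 - ε) ^ k * ε ^ (n - k)
        = ∑ k ∈ Finset.range (r-1), (n.choose k : ℝ) * p ^ k * (1-p) ^ (n-k) :=
      Finset.sum_congr rfl fun k _ => by simp [hp]
    rw [heq]
    have hsub2 : Finset.range (r-1) ⊆ Finset.range (n+1) := by
      intro k hk; simp at hk ⊢; omega
    have hsdiff := Finset.sum_sdiff (f := fun k => (n.choose k : ℝ) * p ^ k * (1-p) ^ (n-k)) hsub2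
    rw [binom_sum_one p n] at hsdiff
    have htail : ∑ k ∈ Finset.range (n+1) \ Finset.range (r-1),
        (n.choose k : ℝ) * p ^ k * (1-p) ^ (n-k) ≤ δ := by
      have hsubset : Finset.range (n+1) \ Finset.range (r-1) ⊆
          (Finset.range (n+1)).filter (fun k : ℕ => (θ/2) * n ≤ |(k:ℝ) - n * p|) := by
        intro k hk
        obtain ⟨hk1, hk2⟩ := Finset.mem_sdiff.mp hk
        refine Finset.mem_filter.mpr ⟨hk1, ?_⟩
        have : r - 1 ≤ k := by simpa using hk2
        have hkr : (r:ℝ) - 1 ≤ (k:ℝ) := by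
          have : ((r - 1 : ℕ) : ℝ) ≤ (k:ℝ) := by exact_mod_cast this
          have h' : ((r - 1 : ℕ) : ℝ) = (r:ℝ) - 1 := by
            have : (1:ℕ) ≤ r := by omega
            push_cast [this]; ring
          linarith
        rw [abs_of_nonneg (by nlinarith)]
        nlinarith
      exact le_trans
        (le_trans (Finset.sum_le_sum_of_subset_of_nonneg hsubset fun k _ _ => tnn k)
          (binom_tail p (θ/2) hp0.le hp1.le (by positivity) n hn0)) h4
    linarith
  rw [abs_le]
  constructor <;> linarith

lemma map_iid_eq_pi {Ω α : Type*} [MeasurableSpace Ω] [MeasurableSpace α]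
    (P : Measure Ω) [IsProbabilityMeasure P] {n : ℕ} (ξ : Fin n → Ω → α)
    (hmeas : ∀ i, Measurable (ξ i))
    (hiid : iIndepFun ξ P)
    (μ : Measure α) [IsProbabilityMeasure μ] (hlaw : ∀ i, Measure.map (ξ i) P = μ) :
    Measure.map (fun ω => fun i => ξ i ω) P = Measure.pi (fun _ : Fin n => μ) := by
  refine (Measure.pi_eq fun s hs => ?_).symm
  rw [Measure.map_apply (measurable_pi_lambda _ hmeas) (MeasurableSet.univ_pi hs)]
  have hpre : (fun ω => fun i => ξ i ω) ⁻¹' (univ.pi s) = ⋂ i ∈ Finset.univ, ξ i ⁻¹' s i := by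
    ext ω; simp [Set.mem_univ_pi]
  rw [hpre, iIndepFun_iff_measure_inter_preimage_eq_mul.mp hiid Finset.univ fun i _ => hs i]
  refine Finset.prod_congr rfl fun i _ => ?_
  rw [← hlaw i, Measure.map_apply (hmeas i) (hs i)]

lemma measure_Ici_quantile (ν : Measure ℝ) [IsProbabilityMeasure ν] (q c : ℝ)
    (hq : (ν (Iic q)).toReal = c) (hc0 : 0 ≤ c) (hc1 : c ≤ 1) (hatom : ν {q} = 0) :
    (ν (Ici q)).toReal = 1 - c := by
  have hIic : ν (Iic q) = ENNReal.ofReal c := by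
    rw [← hq]; exact (ENNReal.ofReal_toReal (measure_ne_top _ _)).symm
  have hIio : ν (Iio q) = ENNReal.ofReal c := by
    have hu : ν (Iic q) = ν (Iio q) + ν {q} := by
      rw [← measure_union (by simp) (measurableSet_singleton q), Iio_union_right]
    rw [hatom, add_zero] at hu
    rw [← hu, hIic]
  have hIci : ν (Ici q) = ENNReal.ofReal (1 - c) := by
    have := measure_compl (measurableSet_Iio (a := q)) (measure_ne_top ν _)
    rw [compl_Iio] at this
    rw [this, hIio, measure_univ, ENNReal.ofReal_sub _ hc0, ENNReal.ofReal_one]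
  rw [hIci, ENNReal.toReal_ofReal (by linarith)]

theorem main_bound {Ω S : Type*} [MeasurableSpace Ω] [MeasurableSpace S]
    (P : Measure Ω) [IsProbabilityMeasure P] (m : ℕ)
    (ε η : ℝ) (hε : ε ∈ Set.Ioo (0:ℝ) 1) (hη : 0 < η) (hηε : η < ε) (hηp : η < 1 - ε)
    (D₁ : Ω → S) (hD₁ : Measurable D₁)
    (n : ℕ) (hn0 : 0 < n)
    (ξ : Fin n → Ω → (Fin m → ℝ)) (hξmeas : ∀ i, Measurable (ξ i))
    (μ : Measure (Fin m → ℝ)) [IsProbabilityMeasure μ]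
    (hiid : iIndepFun ξ P)
    (hlaw : ∀ i, Measure.map (ξ i) P = μ)
    (hindep : IndepFun D₁ (fun ω => fun i : Fin n => ξ i ω) P)
    (t : S × (Fin m → ℝ) → ℝ) (ht : Measurable t)
    (hatomless : ∀ s x, Measure.map (fun z => t (s, z)) μ {x} = 0)
    (r : ℕ) (hr1 : 1 ≤ r) (hrn : r ≤ n)
    (hdev : |(r:ℝ) - n * (1 - ε)| ≤ (η/4) * n) :
    P {ω | η ≤
        |(μ {z | t (D₁ ω, z) ≤ orderStat (fun i => t (D₁ ω, ξ i ω)) r}).toReal - (1 - ε)|}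
      ≤ 2 * ENNReal.ofReal (1 / (4 * n * (η/4)^2)) := by
  have hε0 := hε.1
  have hε1 := hε.2
  set p : ℝ := 1 - ε with hpdef
  set θ : ℝ := η / 4 with hθdef
  have hθ : 0 < θ := by positivity
  set cp : ℝ := p + η with hcp
  set cm : ℝ := p - η with hcm
  have hcp0 : 0 < cp := by simp only [hcp, hpdef]; linarith
  have hcp1 : cp < 1 := by simp only [hcp, hpdef]; linarith
  have hcm0 : 0 < cm := by simp only [hcm, hpdef]; linarith
  have hcm1 : cm < 1 := by simp only [hcm, hpdef]; linarith
  -- the measurable scoring function G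
  set G : S × (Fin m → ℝ) → ℝ := fun q => (μ {w | t (q.1, w) ≤ t q}).toReal with hGdef
  have hGmeas : Measurable G := by
    have hset : MeasurableSet {q : (S × (Fin m → ℝ)) × (Fin m → ℝ) | t (q.1.1, q.2) ≤ t q.1} :=
      measurableSet_le (ht.comp ((measurable_fst.comp measurable_fst).prodMk measurable_snd))
        (ht.comp measurable_fst)
    exact (measurable_measure_prodMk_left hset).ennreal_toReal
  -- per-s facts
  have hts : ∀ s : S, Measurable (fun z => t (s, z)) := fun s =>
    ht.comp measurable_prodMk_left
  have hprob : ∀ s : S, IsProbabilityMeasure (Measure.map (fun z => t (s, z)) μ) := fun s =>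
    Measure.isProbabilityMeasure_map (hts s).aemeasurable
  have hmapIic : ∀ (s : S) (y : ℝ),
      μ {z | t (s, z) ≤ y} = (Measure.map (fun z => t (s, z)) μ) (Iic y) := fun s y => by
    rw [Measure.map_apply (hts s) measurableSet_Iic]; rfl
  have hGeq : ∀ (s : S) (z : Fin m → ℝ),
      G (s, z) = ((Measure.map (fun w => t (s, w)) μ) (Iic (t (s, z)))).toReal := fun s z => by
    rw [hGdef]; simp only []; rw [hmapIic s (t (s, z))]
  -- counting functions and events
  set Ξ : Ω → (Fin n → (Fin m → ℝ)) := fun ω i => ξ i ω with hΞdef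
  have hΞ : Measurable Ξ := measurable_pi_lambda _ hξmeas
  set Ep : Set (S × (Fin n → Fin m → ℝ)) :=
    {sx | n + 1 - r ≤ (Finset.univ.filter fun i => cp ≤ G (sx.1, sx.2 i)).card} with hEpdef
  set Em : Set (S × (Fin n → Fin m → ℝ)) :=
    {sx | r ≤ (Finset.univ.filter fun i => G (sx.1, sx.2 i) ≤ cm).card} with hEmdef
  have hGi : ∀ i : Fin n, Measurable fun sx : S × (Fin n → Fin m → ℝ) => G (sx.1, sx.2 i) :=
    fun i => hGmeas.comp (measurable_fst.prodMk ((measurable_pi_apply i).comp measurable_snd))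
  have hEp_meas : MeasurableSet Ep := by
    have hc : Measurable (fun sx : S × (Fin n → Fin m → ℝ) =>
        (Finset.univ.filter fun i => cp ≤ G (sx.1, sx.2 i)).card) := by
      have hrw : ∀ sx : S × (Fin n → Fin m → ℝ),
          (Finset.univ.filter fun i => cp ≤ G (sx.1, sx.2 i)).card
          = ∑ i : Fin n, if cp ≤ G (sx.1, sx.2 i) then 1 else 0 := fun sx =>
        Finset.card_filter _ _
      simp only [hrw]
      exact Finset.measurable_sum _ fun i _ =>
        Measurable.ite ((hGi i) measurableSet_Ici) measurable_const measurable_const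
    exact hc (measurableSet_Ici : MeasurableSet (Ici (n + 1 - r)))
  have hEm_meas : MeasurableSet Em := by
    have hc : Measurable (fun sx : S × (Fin n → Fin m → ℝ) =>
        (Finset.univ.filter fun i => G (sx.1, sx.2 i) ≤ cm).card) := by
      have hrw : ∀ sx : S × (Fin n → Fin m → ℝ),
          (Finset.univ.filter fun i => G (sx.1, sx.2 i) ≤ cm).card
          = ∑ i : Fin n, if G (sx.1, sx.2 i) ≤ cm then 1 else 0 := fun sx =>
        Finset.card_filter _ _
      simp only [hrw]
      exact Finset.measurable_sum _ fun i _ =>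
        Measurable.ite ((hGi i) measurableSet_Iic) measurable_const measurable_const
    exact hc (measurableSet_Ici : MeasurableSet (Ici r))
  -- joint law
  have hlawΞ : Measure.map Ξ P = Measure.pi (fun _ : Fin n => μ) :=
    map_iid_eq_pi P ξ hξmeas hiid μ hlaw
  have hjoint : Measure.map (fun ω => (D₁ ω, Ξ ω)) P
      = (Measure.map D₁ P).prod (Measure.pi (fun _ : Fin n => μ)) := by
    rw [← hlawΞ]
    exact (indepFun_iff_map_prod_eq_prod_map_map hD₁.aemeasurable hΞ.aemeasurable).mp hindep
  -- pointwise inclusion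
  have hsub : {ω | η ≤
        |(μ {z | t (D₁ ω, z) ≤ orderStat (fun i => t (D₁ ω, ξ i ω)) r}).toReal - (1 - ε)|}
      ⊆ (fun ω => (D₁ ω, Ξ ω)) ⁻¹' (Ep ∪ Em) := by
    intro ω hω
    simp only [mem_setOf_eq] at hω
    set s := D₁ ω with hs
    set v : Fin n → ℝ := fun i => t (s, ξ i ω) with hv
    set T : ℝ := orderStat v r with hT
    set ν : Measure ℝ := Measure.map (fun z => t (s, z)) μ with hν
    haveI := hprob s
    have hatom : ∀ x : ℝ, ν {x} = 0 := hatomless s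
    have hC : (μ {z | t (s, z) ≤ T}).toReal = (ν (Iic T)).toReal := by
      rw [hmapIic s T]
    rw [hC] at hω
    have habs := le_abs.mp hω
    rcases habs with hup | hdown
    · -- upper tail
      obtain ⟨q, hqF, hqiff⟩ := exists_q_upper ν hatom cp hcp0 hcp1
      have hTq : q ≤ T := (hqiff T).mp (by linarith)
      have hcard := orderStat_count_ge v hr1 hrn hTq
      refine mem_preimage.mpr (mem_union_left _ ?_)
      show n + 1 - r ≤ (Finset.univ.filter fun i => cp ≤ G (s, Ξ ω i)).card
      have heqf : (Finset.univ.filter fun i => cp ≤ G (s, Ξ ω i))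
          = (Finset.univ.filter fun i => q ≤ v i) := by
        refine Finset.filter_congr fun i _ => ?_
        rw [hGeq s (Ξ ω i)]
        exact hqiff (v i)
      rw [heqf]
      exact hcard
    · -- lower tail
      obtain ⟨q, hqF, hqiff⟩ := exists_q_lower ν hatom cm hcm0 hcm1
      have hTq : T ≤ q := (hqiff T).mp (by simp only [hcm, hpdef]; linarith)
      have hcard := orderStat_count_le v hr1 hrn hTq
      refine mem_preimage.mpr (mem_union_right _ ?_)
      show r ≤ (Finset.univ.filter fun i => G (s, Ξ ω i) ≤ cm).card
      have heqf : (Finset.univ.filter fun i => G (s, Ξ ω i) ≤ cm)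
          = (Finset.univ.filter fun i => v i ≤ q) := by
        refine Finset.filter_congr fun i _ => ?_
        rw [hGeq s (Ξ ω i)]
        exact hqiff (v i)
      rw [heqf]
      exact hcard
  -- slice bounds
  haveI : IsProbabilityMeasure (Measure.map D₁ P) := Measure.isProbabilityMeasure_map hD₁.aemeasurable
  have hθn : (0:ℝ) ≤ θ * n := by positivity
  have hEp_slice : ∀ s : S, Measure.pi (fun _ : Fin n => μ) (Prod.mk s ⁻¹' Ep)
      ≤ ENNReal.ofReal (1 / (4 * n * θ^2)) := by
    intro s
    set ν : Measure ℝ := Measure.map (fun z => t (s, z)) μ with hν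
    haveI := hprob s
    obtain ⟨q, hqF, hqiff⟩ := exists_q_upper ν (hatomless s) cp hcp0 hcp1
    set A : Set (Fin m → ℝ) := {z | cp ≤ G (s, z)} with hA
    have hAeq : A = (fun z => t (s, z)) ⁻¹' (Ici q) := by
      ext z
      simp only [hA, mem_setOf_eq, mem_preimage, mem_Ici]
      rw [hGeq s z]
      exact hqiff (t (s, z))
    have hAmeas : MeasurableSet A := hAeq ▸ (hts s) measurableSet_Ici
    have hμA : (μ A).toReal = ε - η := by
      have h1 : μ A = ν (Ici q) := by
        rw [hAeq, hν, Measure.map_apply (hts s) measurableSet_Ici]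
      rw [h1, measure_Ici_quantile ν q cp hqF hcp0.le hcp1.le (hatomless s q)]
      simp only [hcp, hpdef]; ring
    have hsubset : (Prod.mk s ⁻¹' Ep) ⊆
        {x : Fin n → Fin m → ℝ | θ * n ≤
          |((Finset.univ.filter fun i => x i ∈ A).card : ℝ) - n * (μ A).toReal|} := by
      intro x hx
      simp only [mem_preimage, hEpdef, mem_setOf_eq] at hx
      have heqf : (Finset.univ.filter fun i : Fin n => x i ∈ A)
          = (Finset.univ.filter fun i => cp ≤ G (s, x i)) :=
        Finset.filter_congr fun i _ => Iff.rfl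
      rw [mem_setOf_eq, heqf, hμA]
      have hxc : ((n + 1 - r : ℕ) : ℝ)
          ≤ ((Finset.univ.filter fun i => cp ≤ G (s, x i)).card : ℝ) := by exact_mod_cast hx
      have hcast : ((n + 1 - r : ℕ) : ℝ) = (n:ℝ) + 1 - r := by
        have h2 : r ≤ n + 1 := by omega
        rw [Nat.cast_sub h2, Nat.cast_add, Nat.cast_one]
      rw [hcast] at hxc
      have hr_ge := (abs_le.mp hdev).2
      have hNp : (n:ℝ) * p = n - n * ε := by rw [hpdef]; ring
      have hNeh : (n:ℝ) * (ε - η) = n * ε - 4 * (θ * n) := by rw [hθdef]; ring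
      rw [abs_of_nonneg (by linarith)]
      linarith
    exact (measure_mono hsubset).trans (pi_count_tail μ n hn0 A hAmeas θ hθ)
  have hEm_slice : ∀ s : S, Measure.pi (fun _ : Fin n => μ) (Prod.mk s ⁻¹' Em)
      ≤ ENNReal.ofReal (1 / (4 * n * θ^2)) := by
    intro s
    set ν : Measure ℝ := Measure.map (fun z => t (s, z)) μ with hν
    haveI := hprob s
    obtain ⟨q, hqF, hqiff⟩ := exists_q_lower ν (hatomless s) cm hcm0 hcm1
    set A : Set (Fin m → ℝ) := {z | G (s, z) ≤ cm} with hA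
    have hAeq : A = (fun z => t (s, z)) ⁻¹' (Iic q) := by
      ext z
      simp only [hA, mem_setOf_eq, mem_preimage, mem_Iic]
      rw [hGeq s z]
      exact hqiff (t (s, z))
    have hAmeas : MeasurableSet A := hAeq ▸ (hts s) measurableSet_Iic
    have hμA : (μ A).toReal = p - η := by
      have h1 : μ A = ν (Iic q) := by
        rw [hAeq, hν, Measure.map_apply (hts s) measurableSet_Iic]
      rw [h1, hqF, hcm]
    have hsubset : (Prod.mk s ⁻¹' Em) ⊆
        {x : Fin n → Fin m → ℝ | θ * n ≤
          |((Finset.univ.filter fun i => x i ∈ A).card : ℝ) - n * (μ A).toReal|} := by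
      intro x hx
      simp only [mem_preimage, hEmdef, mem_setOf_eq] at hx
      have heqf : (Finset.univ.filter fun i : Fin n => x i ∈ A)
          = (Finset.univ.filter fun i => G (s, x i) ≤ cm) :=
        Finset.filter_congr fun i _ => Iff.rfl
      rw [mem_setOf_eq, heqf, hμA]
      have hxc : (r : ℝ)
          ≤ ((Finset.univ.filter fun i => G (s, x i) ≤ cm).card : ℝ) := by exact_mod_cast hx
      have hr_le := (abs_le.mp hdev).1
      have hNeh : (n:ℝ) * (p - η) = n * p - 4 * (θ * n) := by rw [hθdef]; ring
      rw [abs_of_nonneg (by linarith)]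
      linarith
    exact (measure_mono hsubset).trans (pi_count_tail μ n hn0 A hAmeas θ hθ)
  -- assemble
  have hbp : Measure.map (fun ω => (D₁ ω, Ξ ω)) P Ep ≤ ENNReal.ofReal (1 / (4 * n * θ^2)) := by
    rw [hjoint, Measure.prod_apply hEp_meas]
    calc ∫⁻ s, Measure.pi (fun _ : Fin n => μ) (Prod.mk s ⁻¹' Ep) ∂(Measure.map D₁ P)
        ≤ ∫⁻ _, ENNReal.ofReal (1 / (4 * n * θ^2)) ∂(Measure.map D₁ P) :=
          lintegral_mono fun s => hEp_slice s
      _ = ENNReal.ofReal (1 / (4 * n * θ^2)) := by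
          rw [lintegral_const, measure_univ, mul_one]
  have hbm : Measure.map (fun ω => (D₁ ω, Ξ ω)) P Em ≤ ENNReal.ofReal (1 / (4 * n * θ^2)) := by
    rw [hjoint, Measure.prod_apply hEm_meas]
    calc ∫⁻ s, Measure.pi (fun _ : Fin n => μ) (Prod.mk s ⁻¹' Em) ∂(Measure.map D₁ P)
        ≤ ∫⁻ _, ENNReal.ofReal (1 / (4 * n * θ^2)) ∂(Measure.map D₁ P) :=
          lintegral_mono fun s => hEm_slice s
      _ = ENNReal.ofReal (1 / (4 * n * θ^2)) := by
          rw [lintegral_const, measure_univ, mul_one]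
  calc P {ω | η ≤
        |(μ {z | t (D₁ ω, z) ≤ orderStat (fun i => t (D₁ ω, ξ i ω)) r}).toReal - (1 - ε)|}
      ≤ P ((fun ω => (D₁ ω, Ξ ω)) ⁻¹' (Ep ∪ Em)) := measure_mono hsub
    _ = Measure.map (fun ω => (D₁ ω, Ξ ω)) P (Ep ∪ Em) :=
        (Measure.map_apply (hD₁.prodMk hΞ) (hEp_meas.union hEm_meas)).symm
    _ ≤ Measure.map (fun ω => (D₁ ω, Ξ ω)) P Ep + Measure.map (fun ω => (D₁ ω, Ξ ω)) P Em :=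
        measure_union_le _ _
    _ ≤ ENNReal.ofReal (1 / (4 * n * θ^2)) + ENNReal.ofReal (1 / (4 * n * θ^2)) :=
        add_le_add hbp hbm
    _ = 2 * ENNReal.ofReal (1 / (4 * n * θ^2)) := (two_mul _).symm

/-- asymptotic tightness of the tolerance level: the realized coverage
`C_n = μ{z : t(D₁,z) ≤ T_n}` of the calibrated uncertainty set converges to `1-ε` in
probability as the Phase 2 sample size `n → ∞`. -/
theorem coverage_tendsto_in_probability
    {Ω S : Type*} [MeasurableSpace Ω] [MeasurableSpace S]
    (P : Measure Ω) [IsProbabilityMeasure P]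
    (m : ℕ)
    (ε δ : ℝ) (hε : ε ∈ Set.Ioo (0 : ℝ) 1) (hδ : δ ∈ Set.Ioo (0 : ℝ) 1)
    (D₁ : Ω → S) (hD₁ : Measurable D₁)
    (ξ : (n : ℕ) → Fin n → Ω → (Fin m → ℝ))
    (hξmeas : ∀ n, ∀ i : Fin n, Measurable (ξ n i))
    (μ : Measure (Fin m → ℝ)) [IsProbabilityMeasure μ]
    (hiid : ∀ n : ℕ, (1 - ε) ^ n ≤ δ → iIndepFun (ξ n) P)
    (hlaw : ∀ n : ℕ, (1 - ε) ^ n ≤ δ → ∀ i : Fin n, Measure.map (ξ n i) P = μ)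
    (hindep : ∀ n : ℕ, (1 - ε) ^ n ≤ δ → IndepFun D₁ (fun ω => fun i : Fin n => ξ n i ω) P)
    (t : S × (Fin m → ℝ) → ℝ) (ht : Measurable t)
    (hatomless : ∀ s : S, ∀ x : ℝ, Measure.map (fun z => t (s, z)) μ {x} = 0)
    (istar : ℕ → ℕ)
    (histar : ∀ n : ℕ, (1 - ε) ^ n ≤ δ →
      IsLeast {r : ℕ | 1 ≤ r ∧ r ≤ n ∧
        1 - δ ≤ ∑ k ∈ Finset.range r, (n.choose k : ℝ) * (1 - ε) ^ k * ε ^ (n - k)}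
        (istar n)) :
    ∀ η : ℝ, 0 < η →
      Tendsto
        (fun n : ℕ => P {ω | η ≤
          |(μ {z | t (D₁ ω, z) ≤ orderStat (fun i => t (D₁ ω, ξ n i ω)) (istar n)}).toReal
            - (1 - ε)|})
        atTop (nhds 0) := by
  have key : ∀ η : ℝ, 0 < η → η < ε → η < 1 - ε →
      Tendsto
        (fun n : ℕ => P {ω | η ≤
          |(μ {z | t (D₁ ω, z) ≤ orderStat (fun i => t (D₁ ω, ξ n i ω)) (istar n)}).toReal
            - (1 - ε)|})
        atTop (nhds 0) := by
    intro η hη hηε hηp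
    have hθ : (0:ℝ) < η / 4 := by positivity
    have hev := istar_asymp ε δ hε hδ istar histar (η/4) hθ
    have hbound : ∀ᶠ n : ℕ in atTop,
        P {ω | η ≤
          |(μ {z | t (D₁ ω, z) ≤ orderStat (fun i => t (D₁ ω, ξ n i ω)) (istar n)}).toReal
            - (1 - ε)|}
        ≤ 2 * ENNReal.ofReal (1 / (4 * n * (η/4)^2)) := by
      filter_upwards [hev] with n hn
      obtain ⟨h1, hr1, hrn, hdev⟩ := hn
      have hn0 : 0 < n := lt_of_lt_of_le hr1 hrn
      exact main_bound P m ε η hε hη hηε hηp D₁ hD₁ n hn0 (ξ n) (hξmeas n) μ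
        (hiid n h1) (hlaw n h1) (hindep n h1) t ht hatomless (istar n) hr1 hrn hdev
    have hlim : Tendsto (fun n : ℕ => 2 * ENNReal.ofReal (1 / (4 * (n:ℝ) * (η/4)^2)))
        atTop (nhds 0) := by
      have h0 : Tendsto (fun n : ℕ => 1 / (4 * (n:ℝ) * (η/4)^2)) atTop (nhds 0) := by
        have h4 : Tendsto (fun n : ℕ => 4 * (n:ℝ) * (η/4)^2) atTop atTop := by
          have := tendsto_natCast_atTop_atTop (R := ℝ)
          exact (this.const_mul_atTop (by positivity)).atTop_mul_const (by positivity)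
        exact h4.inv_tendsto_atTop.congr fun n => by simp [one_div]
      have h1 := ENNReal.tendsto_ofReal h0
      rw [ENNReal.ofReal_zero] at h1
      have h2 := ENNReal.Tendsto.const_mul h1 (Or.inr (by simp : (2:ℝ≥0∞) ≠ ⊤))
      simpa using h2
    exact tendsto_of_tendsto_of_tendsto_of_le_of_le' tendsto_const_nhds hlim
      (Eventually.of_forall fun n => zero_le) hbound
  intro η hη
  set η' : ℝ := min η (min ε (1 - ε) / 2) with hη'def
  have hε0 := hε.1
  have hε1 := hε.2
  have hη'0 : 0 < η' := by
    apply lt_min hη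
    have : 0 < min ε (1 - ε) := lt_min hε0 (by linarith)
    linarith
  have hη'ε : η' < ε := by
    have h1 : η' ≤ min ε (1 - ε) / 2 := min_le_right _ _
    have h2 : min ε (1 - ε) ≤ ε := min_le_left _ _
    have h3 : 0 < min ε (1 - ε) := lt_min hε0 (by linarith)
    linarith
  have hη'p : η' < 1 - ε := by
    have h1 : η' ≤ min ε (1 - ε) / 2 := min_le_right _ _
    have h2 : min ε (1 - ε) ≤ 1 - ε := min_le_right _ _
    have h3 : 0 < min ε (1 - ε) := lt_min hε0 (by linarith)
    linarith
  have h' := key η' hη'0 hη'ε hη'p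
  refine tendsto_of_tendsto_of_tendsto_of_le_of_le' tendsto_const_nhds h'
    (Eventually.of_forall fun n => zero_le) (Eventually.of_forall fun n => ?_)
  refine measure_mono fun ω hω => ?_
  simp only [Set.mem_setOf_eq] at hω ⊢
  exact le_trans (min_le_left _ _) hω
end

section
/- Let ε, δ ∈ (0,1). Let (S, 𝒮) be a measurable space and, on a common probability space, let D₁ be an S-valued random element; for each positive integer n with (1−ε)^n ≤ δ let ξ₁ⁿ, …, ξ_nⁿ be i.i.d. ℝ^m-valued random vectors with common law μ, independent of D₁. Let t : S × ℝ^m → ℝ be jointly measurable such that for every s ∈ S the pushforward of μ under z ↦ t(s,z) is atomless. Define i*(n) = min{r ∈ {1,…,n} : Σ_{k=0}^{r−1} C(n,k)(1−ε)^k ε^{n−k} ≥ 1−δ}, let T_n be the i*(n)-th order statistic of t(D₁,ξ₁ⁿ),…,t(D₁,ξ_nⁿ), and let C_n = μ{z ∈ ℝ^m : t(D₁,z) ≤ T_n} be the realized coverage of the calibrated uncertainty set. Then the attained confidence level converges to its target: P(C_n ≥ 1−ε) → 1−δ as n → ∞. -/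
open MeasureTheory ProbabilityTheory Filter

section AuxLemmas
open MeasureTheory ProbabilityTheory Filter Topology Set Real

-- D1a : p^k q^(k') ≤ (k/n)^k ((n-k)/n)^(n-k)  with n = k+j
lemma pmf_exp_bound {p : ℝ} (hp0 : 0 ≤ p) (hp1 : p ≤ 1) (k j : ℕ) (hk : 1 ≤ k) (hj : 1 ≤ j) :
    p ^ k * (1 - p) ^ j ≤ ((k : ℝ) / (k + j)) ^ k * ((j : ℝ) / (k + j)) ^ j := by
  have hK : (0:ℝ) < k := by exact_mod_cast hk
  have hJ : (0:ℝ) < j := by exact_mod_cast hj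
  have hN : (0:ℝ) < (k:ℝ) + j := by linarith
  have h1 : p ^ k ≤ Real.exp (p * (k + j) - k) * ((k : ℝ) / (k + j)) ^ k := by
    have hb : p * ((k:ℝ) + j) / k ≤ Real.exp (p * ((k:ℝ) + j) / k - 1) := by
      have := Real.add_one_le_exp (p * ((k:ℝ) + j) / k - 1)
      linarith
    have hb0 : 0 ≤ p * ((k:ℝ) + j) / k := by positivity
    calc p ^ k = (p * ((k:ℝ)+j) / k * ((k:ℝ)/(k+j))) ^ k := by
          congr 1; field_simp
      _ = (p * ((k:ℝ)+j) / k) ^ k * ((k:ℝ)/(k+j)) ^ k := mul_pow _ _ _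
      _ ≤ Real.exp (p * ((k:ℝ)+j) / k - 1) ^ k * ((k:ℝ)/(k+j)) ^ k := by
          gcongr
      _ = Real.exp ((k:ℕ) * (p * ((k:ℝ)+j) / k - 1)) * ((k:ℝ)/(k+j)) ^ k := by
          rw [← Real.exp_nat_mul]
      _ = Real.exp (p * (k + j) - k) * ((k : ℝ) / (k + j)) ^ k := by
          congr 2; field_simp
  have h2 : (1-p) ^ j ≤ Real.exp ((1-p) * (k + j) - j) * ((j : ℝ) / (k + j)) ^ j := by
    have hb : (1-p) * ((k:ℝ) + j) / j ≤ Real.exp ((1-p) * ((k:ℝ) + j) / j - 1) := by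
      have := Real.add_one_le_exp ((1-p) * ((k:ℝ) + j) / j - 1)
      linarith
    have hb0 : 0 ≤ (1-p) * ((k:ℝ) + j) / j := by
      have : 0 ≤ 1 - p := by linarith
      positivity
    calc (1-p) ^ j = ((1-p) * ((k:ℝ)+j) / j * ((j:ℝ)/(k+j))) ^ j := by
          congr 1; field_simp
      _ = ((1-p) * ((k:ℝ)+j) / j) ^ j * ((j:ℝ)/(k+j)) ^ j := mul_pow _ _ _
      _ ≤ Real.exp ((1-p) * ((k:ℝ)+j) / j - 1) ^ j * ((j:ℝ)/(k+j)) ^ j := by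
          gcongr
      _ = Real.exp ((j:ℕ) * ((1-p) * ((k:ℝ)+j) / j - 1)) * ((j:ℝ)/(k+j)) ^ j := by
          rw [← Real.exp_nat_mul]
      _ = Real.exp ((1-p) * (k + j) - j) * ((j : ℝ) / (k + j)) ^ j := by
          congr 2; field_simp
  have hq0 : 0 ≤ 1 - p := by linarith
  calc p ^ k * (1-p) ^ j
      ≤ (Real.exp (p * (k + j) - k) * ((k : ℝ) / (k + j)) ^ k) *
        (Real.exp ((1-p) * (k + j) - j) * ((j : ℝ) / (k + j)) ^ j) := by
        apply mul_le_mul h1 h2 (by positivity) (by positivity)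
    _ = Real.exp ((p * (k + j) - k) + ((1-p) * (k + j) - j)) *
        (((k : ℝ) / (k + j)) ^ k * ((j : ℝ) / (k + j)) ^ j) := by
        rw [Real.exp_add]; ring
    _ = ((k : ℝ) / (k + j)) ^ k * ((j : ℝ) / (k + j)) ^ j := by
        have : (p * ((k:ℝ) + j) - k) + ((1-p) * ((k:ℝ) + j) - j) = 0 := by ring
        rw [this, Real.exp_zero, one_mul]


lemma sqrtpi_le_stirlingSeq (n : ℕ) (hn : 1 ≤ n) : Real.sqrt π ≤ Stirling.stirlingSeq n := by
  obtain ⟨m, rfl⟩ := Nat.exists_eq_add_of_le hn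
  have h := Stirling.tendsto_stirlingSeq_sqrt_pi.comp (tendsto_add_atTop_nat 1)
  have : Antitone (fun k => Stirling.stirlingSeq (k + 1)) := by
    intro a b hab
    exact Stirling.stirlingSeq'_antitone hab
  have := this.le_of_tendsto (by exact h) m
  simpa [Nat.add_comm] using this

lemma stirlingSeq_le (n : ℕ) (hn : 1 ≤ n) : Stirling.stirlingSeq n ≤ exp 1 / Real.sqrt 2 := by
  obtain ⟨m, rfl⟩ := Nat.exists_eq_add_of_le hn
  have := Stirling.stirlingSeq'_antitone (Nat.zero_le m)
  simpa [Function.comp, Nat.add_comm, Stirling.stirlingSeq_one] using this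

lemma factorial_eq_stirling (n : ℕ) (hn : 1 ≤ n) :
    (Nat.factorial n : ℝ) = Stirling.stirlingSeq n * (Real.sqrt (2 * n) * ((n : ℝ) / exp 1) ^ n) := by
  have hN : (0:ℝ) < n := by exact_mod_cast hn
  have hd : Real.sqrt (2 * n) * ((n : ℝ) / exp 1) ^ n ≠ 0 := by positivity
  rw [Stirling.stirlingSeq, div_mul_cancel₀ _ hd]

lemma choose_pmf_le (k j : ℕ) (hk : 1 ≤ k) (hj : 1 ≤ j) :
    (((k+j).choose k : ℝ)) * ((k:ℝ)/((k:ℝ)+j))^k * ((j:ℝ)/((k:ℝ)+j))^j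
      ≤ Real.sqrt (((k:ℝ)+j)/((k:ℝ)*j)) := by
  have hK : (0:ℝ) < k := by exact_mod_cast hk
  have hJ : (0:ℝ) < j := by exact_mod_cast hj
  have hN : (0:ℝ) < (k:ℝ) + j := by linarith
  have hSk : 0 < Stirling.stirlingSeq k := by
    obtain ⟨m, rfl⟩ := Nat.exists_eq_add_of_le hk
    simpa [Nat.add_comm] using Stirling.stirlingSeq'_pos m
  have hSj : 0 < Stirling.stirlingSeq j := by
    obtain ⟨m, rfl⟩ := Nat.exists_eq_add_of_le hj
    simpa [Nat.add_comm] using Stirling.stirlingSeq'_pos m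
  have hSn : 0 < Stirling.stirlingSeq (k+j) := by
    have h1 : 1 ≤ k + j := le_trans hk (Nat.le_add_right _ _)
    obtain ⟨m, hm⟩ := Nat.exists_eq_add_of_le h1
    rw [hm]; simpa [Nat.add_comm] using Stirling.stirlingSeq'_pos m
  have hE : (0:ℝ) < exp 1 := Real.exp_pos 1
  -- the exact identity
  have hid : (((k+j).choose k : ℝ)) * ((k:ℝ)/((k:ℝ)+j))^k * ((j:ℝ)/((k:ℝ)+j))^j
      = (Stirling.stirlingSeq (k+j) / (Stirling.stirlingSeq k * Stirling.stirlingSeq j))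
        * (Real.sqrt (2*((k:ℝ)+j)) / (Real.sqrt (2*(k:ℝ)) * Real.sqrt (2*(j:ℝ)))) := by
    have hcast : (((k+j).choose k : ℝ)) = (Nat.factorial (k+j) : ℝ) /
        ((Nat.factorial k : ℝ) * (Nat.factorial j : ℝ)) := by
      rw [Nat.cast_choose ℝ (Nat.le_add_right k j)]
      simp
    rw [hcast, factorial_eq_stirling (k+j) (le_trans hk (Nat.le_add_right _ _)),
      factorial_eq_stirling k hk, factorial_eq_stirling j hj]
    have e1 : (((k+j:ℕ)):ℝ) = (k:ℝ) + j := by push_cast; ring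
    rw [e1]
    have hA : 0 < Real.sqrt (2*((k:ℝ)+j)) := Real.sqrt_pos.mpr (by linarith)
    have hB : 0 < Real.sqrt (2*(k:ℝ)) := Real.sqrt_pos.mpr (by linarith)
    have hC : 0 < Real.sqrt (2*(j:ℝ)) := Real.sqrt_pos.mpr (by linarith)
    rw [div_pow, div_pow, div_pow, div_pow, div_pow]
    field_simp
    rw [pow_add, pow_add]
    ring
  rw [hid]
  -- bounds
  have hpi : (0:ℝ) < π := Real.pi_pos
  have hb1 : Stirling.stirlingSeq (k+j) ≤ exp 1 / Real.sqrt 2 :=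
    stirlingSeq_le _ (le_trans hk (Nat.le_add_right _ _))
  have hb2 : Real.sqrt π ≤ Stirling.stirlingSeq k := sqrtpi_le_stirlingSeq k hk
  have hb3 : Real.sqrt π ≤ Stirling.stirlingSeq j := sqrtpi_le_stirlingSeq j hj
  have hsq : Real.sqrt (2*((k:ℝ)+j)) / (Real.sqrt (2*(k:ℝ)) * Real.sqrt (2*(j:ℝ)))
      = Real.sqrt (((k:ℝ)+j)/((k:ℝ)*j)) * Real.sqrt (1/2) := by
    rw [← Real.sqrt_mul (by positivity : (0:ℝ) ≤ 2*(k:ℝ)),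
      ← Real.sqrt_div (by positivity : (0:ℝ) ≤ 2*((k:ℝ)+j)),
      ← Real.sqrt_mul (by positivity : (0:ℝ) ≤ ((k:ℝ)+j)/((k:ℝ)*j))]
    congr 1
    field_simp
  rw [hsq]
  have hq : 0 ≤ Real.sqrt (((k:ℝ)+j)/((k:ℝ)*j)) := Real.sqrt_nonneg _
  have hfrac : Stirling.stirlingSeq (k+j) / (Stirling.stirlingSeq k * Stirling.stirlingSeq j)
      ≤ (exp 1 / Real.sqrt 2) / π := by
    have hππ : Real.sqrt π * Real.sqrt π = π := Real.mul_self_sqrt hpi.le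
    calc Stirling.stirlingSeq (k+j) / (Stirling.stirlingSeq k * Stirling.stirlingSeq j)
        ≤ (exp 1 / Real.sqrt 2) / (Real.sqrt π * Real.sqrt π) := by
          gcongr <;> positivity
      _ = (exp 1 / Real.sqrt 2) / π := by rw [hππ]
  calc Stirling.stirlingSeq (k+j) / (Stirling.stirlingSeq k * Stirling.stirlingSeq j)
        * (Real.sqrt (((k:ℝ)+j)/((k:ℝ)*j)) * Real.sqrt (1/2))
      ≤ (exp 1 / Real.sqrt 2) / π * (Real.sqrt (((k:ℝ)+j)/((k:ℝ)*j)) * Real.sqrt (1/2)) := by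
        gcongr
    _ = (exp 1 / Real.sqrt 2 * Real.sqrt (1/2) / π) * Real.sqrt (((k:ℝ)+j)/((k:ℝ)*j)) := by
        ring
    _ ≤ 1 * Real.sqrt (((k:ℝ)+j)/((k:ℝ)*j)) := by
        have h2 : Real.sqrt (1/2) = (Real.sqrt 2)⁻¹ := by
          rw [one_div, Real.sqrt_inv]
        have h22 : Real.sqrt 2 * Real.sqrt 2 = 2 := Real.mul_self_sqrt (by norm_num)
        have key : exp 1 / Real.sqrt 2 * Real.sqrt (1/2) / π ≤ 1 := by
          rw [h2, div_le_one hpi]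
          have hrw : exp 1 / Real.sqrt 2 * (Real.sqrt 2)⁻¹ = exp 1 / 2 := by
            rw [div_eq_mul_inv, mul_assoc, ← mul_inv, h22, ← div_eq_mul_inv]
          rw [hrw]
          nlinarith [Real.exp_one_lt_d9, Real.pi_gt_d6]
        exact mul_le_mul_of_nonneg_right key hq
    _ = Real.sqrt (((k:ℝ)+j)/((k:ℝ)*j)) := one_mul _


lemma pmf_term_le {p : ℝ} (hp0 : 0 ≤ p) (hp1 : p ≤ 1) (k j : ℕ) (hk : 1 ≤ k) (hj : 1 ≤ j) :
    (((k+j).choose k : ℝ)) * p^k * (1-p)^j ≤ Real.sqrt (1/(k:ℝ) + 1/(j:ℝ)) := by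
  have hK : (0:ℝ) < k := by exact_mod_cast hk
  have hJ : (0:ℝ) < j := by exact_mod_cast hj
  have h1 := pmf_exp_bound hp0 hp1 k j hk hj
  have h2 := choose_pmf_le k j hk hj
  have hc : (0:ℝ) ≤ (((k+j).choose k : ℕ) : ℝ) := Nat.cast_nonneg _
  have heq : Real.sqrt (((k:ℝ)+j)/((k:ℝ)*j)) = Real.sqrt (1/(k:ℝ) + 1/(j:ℝ)) := by
    congr 1
    field_simp
    ring
  calc (((k+j).choose k : ℝ)) * p^k * (1-p)^j
      = (((k+j).choose k : ℝ)) * (p^k * (1-p)^j) := by ring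
    _ ≤ (((k+j).choose k : ℝ)) * (((k:ℝ)/((k:ℝ)+j))^k * ((j:ℝ)/((k:ℝ)+j))^j) :=
        mul_le_mul_of_nonneg_left h1 hc
    _ = (((k+j).choose k : ℝ)) * ((k:ℝ)/((k:ℝ)+j))^k * ((j:ℝ)/((k:ℝ)+j))^j := by ring
    _ ≤ Real.sqrt (((k:ℝ)+j)/((k:ℝ)*j)) := h2
    _ = _ := heq

lemma sum_range_pred {M : Type*} [AddCommMonoid M] (f : ℕ → M) (m : ℕ) (hm : 1 ≤ m) :
    ∑ k ∈ Finset.range m, f k = (∑ k ∈ Finset.range (m-1), f k) + f (m-1) := by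
  obtain ⟨m', rfl⟩ : ∃ m', m = m'+1 := ⟨m-1, by omega⟩
  simp [Finset.sum_range_succ]

lemma binom_sum_tendsto (ε δ : ℝ) (hε : ε ∈ Set.Ioo (0:ℝ) 1) (hδ : δ ∈ Set.Ioo (0:ℝ) 1)
    (istar : ℕ → ℕ)
    (histar : ∀ n : ℕ, (1 - ε) ^ n ≤ δ → IsLeast {r : ℕ | 1 ≤ r ∧ r ≤ n ∧
        1 - δ ≤ ∑ k ∈ Finset.range r, (n.choose k : ℝ) * (1 - ε) ^ k * ε ^ (n - k)} (istar n)) :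
    Tendsto (fun n => ∑ k ∈ Finset.range (istar n), (n.choose k : ℝ) * (1-ε)^k * ε^(n-k))
      atTop (𝓝 (1 - δ)) := by
  obtain ⟨hε0, hε1⟩ := hε
  obtain ⟨hδ0, hδ1⟩ := hδ
  have hp0 : (0:ℝ) ≤ 1 - ε := by linarith
  have htermnn : ∀ n k : ℕ, 0 ≤ (n.choose k : ℝ) * (1-ε)^k * ε^(n-k) := fun n k =>
    mul_nonneg (mul_nonneg (Nat.cast_nonneg _) (pow_nonneg hp0 _)) (pow_nonneg hε0.le _)
  have hδev : ∀ᶠ n in atTop, (1-ε)^n ≤ δ := by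
    have h := tendsto_pow_atTop_nhds_zero_of_lt_one hp0 (by linarith)
    exact (h.eventually_lt_const hδ0).mono fun n h => h.le
  -- (a) istar n is eventually large
  have ha : ∀ C : ℕ, ∀ᶠ n in atTop, C < istar n := by
    intro C
    have h1 : Tendsto (fun n : ℕ => (n:ℝ)^C * ε^n) atTop (𝓝 0) := by
      have hs := (summable_norm_pow_mul_geometric_of_norm_lt_one C
        (r := ε) (by rw [Real.norm_eq_abs, abs_of_pos hε0]; exact hε1)).of_norm
      exact hs.tendsto_atTop_zero
    have h2 : Tendsto (fun n : ℕ => ((C:ℝ)/ε^C) * ((n:ℝ)^C * ε^n)) atTop (𝓝 0) := by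
      simpa using h1.const_mul ((C:ℝ)/ε^C)
    filter_upwards [hδev, h2.eventually_lt_const (by linarith : (0:ℝ) < 1 - δ),
      eventually_ge_atTop (max C 1)] with n h1' h2' hnC
    have hn1 : 1 ≤ n := le_trans (le_max_right _ _) hnC
    have hnC' : C ≤ n := le_trans (le_max_left _ _) hnC
    by_contra hle
    push_neg at hle
    obtain ⟨⟨hi1, hin, hsum⟩, hmin⟩ := histar n h1'
    have hbound : ∀ k ∈ Finset.range (istar n),
        (n.choose k:ℝ)*(1-ε)^k*ε^(n-k) ≤ (n:ℝ)^C * ε^(n-C) := by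
      intro k hk
      rw [Finset.mem_range] at hk
      have hkC : k ≤ C := by omega
      have hb1 : (n.choose k : ℝ) ≤ (n:ℝ)^C := by
        calc (n.choose k : ℝ) ≤ ((n^k : ℕ) : ℝ) := by exact_mod_cast Nat.choose_le_pow n k
          _ = (n:ℝ)^k := by push_cast; ring
          _ ≤ (n:ℝ)^C := pow_le_pow_right₀ (by exact_mod_cast hn1) hkC
      have hb2 : (1-ε)^k ≤ 1 := pow_le_one₀ hp0 (by linarith)
      have hb3 : ε^(n-k) ≤ ε^(n-C) :=
        pow_le_pow_of_le_one hε0.le hε1.le (Nat.sub_le_sub_left hkC n)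
      calc (n.choose k:ℝ)*(1-ε)^k*ε^(n-k) ≤ (n:ℝ)^C * 1 * ε^(n-C) := by
            apply mul_le_mul (mul_le_mul hb1 hb2 (pow_nonneg hp0 _) (by positivity))
              hb3 (pow_nonneg hε0.le _) (by positivity)
        _ = (n:ℝ)^C * ε^(n-C) := by ring
    have hsumle : ∑ k ∈ Finset.range (istar n), (n.choose k : ℝ) * (1-ε)^k * ε^(n-k)
        ≤ (istar n : ℝ) * ((n:ℝ)^C * ε^(n-C)) := by
      calc _ ≤ ∑ _k ∈ Finset.range (istar n), (n:ℝ)^C * ε^(n-C) :=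
            Finset.sum_le_sum hbound
        _ = (istar n : ℝ) * ((n:ℝ)^C * ε^(n-C)) := by
            rw [Finset.sum_const, Finset.card_range, nsmul_eq_mul]
    have hfin : (istar n : ℝ) * ((n:ℝ)^C * ε^(n-C)) ≤ ((C:ℝ)/ε^C) * ((n:ℝ)^C * ε^n) := by
      rw [pow_sub₀ ε (ne_of_gt hε0) hnC']
      have hi : (istar n : ℝ) ≤ (C:ℝ) := by exact_mod_cast hle
      have h0 : (0:ℝ) < ε ^ C := by positivity
      calc (istar n : ℝ) * ((n:ℝ)^C * (ε^n / ε^C)) ≤ (C:ℝ) * ((n:ℝ)^C * (ε^n / ε^C)) := by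
            apply mul_le_mul_of_nonneg_right hi; positivity
        _ = ((C:ℝ)/ε^C) * ((n:ℝ)^C * ε^n) := by field_simp
    linarith
  have hista : Tendsto istar atTop atTop :=
    tendsto_atTop.2 fun C => (ha C).mono fun n h => h.le
  -- (b) n - istar n is eventually large
  have hb : ∀ C : ℕ, ∀ᶠ n in atTop, C ≤ n - istar n := by
    intro C
    have h1 : Tendsto (fun n : ℕ => (n:ℝ)^C * (1-ε)^n) atTop (𝓝 0) := by
      have hs := (summable_norm_pow_mul_geometric_of_norm_lt_one C
        (r := 1-ε) (by rw [Real.norm_eq_abs, abs_of_nonneg hp0]; linarith)).of_norm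
      exact hs.tendsto_atTop_zero
    have h2 : Tendsto (fun n : ℕ => (((C:ℝ)+1)/(1-ε)^C) * ((n:ℝ)^C * (1-ε)^n)) atTop (𝓝 0) := by
      simpa using h1.const_mul (((C:ℝ)+1)/(1-ε)^C)
    filter_upwards [hδev, h2.eventually_lt_const hδ0, ha 1,
      eventually_ge_atTop (C + 1)] with n h1' h2' hi2 hnC
    by_contra hgt
    push_neg at hgt   -- n - istar n < C
    obtain ⟨⟨hi1, hin, hsum⟩, hmin⟩ := histar n h1'
    have hslt : ∑ k ∈ Finset.range (istar n - 1), (n.choose k : ℝ) * (1-ε)^k * ε^(n-k) < 1 - δ := by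
      by_contra hge
      push_neg at hge
      have hmem : istar n - 1 ∈ {r : ℕ | 1 ≤ r ∧ r ≤ n ∧
          1 - δ ≤ ∑ k ∈ Finset.range r, (n.choose k : ℝ) * (1 - ε) ^ k * ε ^ (n - k)} :=
        ⟨by omega, by omega, hge⟩
      have := hmin hmem
      omega
    have hsub : Finset.range (n - C) ⊆ Finset.range (istar n - 1) :=
      Finset.range_subset_range.2 (by omega)
    have hmono : ∑ k ∈ Finset.range (n - C), (n.choose k : ℝ) * (1-ε)^k * ε^(n-k)
        ≤ ∑ k ∈ Finset.range (istar n - 1), (n.choose k : ℝ) * (1-ε)^k * ε^(n-k) :=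
      Finset.sum_le_sum_of_subset_of_nonneg hsub (fun k _ _ => htermnn n k)
    have htot : ∑ k ∈ Finset.range (n+1), (n.choose k : ℝ) * (1-ε)^k * ε^(n-k) = 1 := by
      calc ∑ k ∈ Finset.range (n+1), (n.choose k : ℝ) * (1-ε)^k * ε^(n-k)
          = ∑ k ∈ Finset.range (n+1), (1-ε)^k * ε^(n-k) * (n.choose k : ℝ) := by
            apply Finset.sum_congr rfl; intros; ring
        _ = ((1-ε) + ε)^n := (add_pow (1-ε) ε n).symm
        _ = 1 := by norm_num
    have hsplit : ∑ k ∈ Finset.range (n - C), (n.choose k : ℝ) * (1-ε)^k * ε^(n-k)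
        + ∑ k ∈ Finset.Ico (n - C) (n+1), (n.choose k : ℝ) * (1-ε)^k * ε^(n-k) = 1 := by
      rw [Finset.sum_range_add_sum_Ico _ (by omega : n - C ≤ n + 1)]
      exact htot
    have htail : ∑ k ∈ Finset.Ico (n - C) (n+1), (n.choose k : ℝ) * (1-ε)^k * ε^(n-k)
        ≤ ((C:ℝ)+1) * ((n:ℝ)^C * (1-ε)^(n-C)) := by
      have hbnd : ∀ k ∈ Finset.Ico (n - C) (n+1),
          (n.choose k : ℝ) * (1-ε)^k * ε^(n-k) ≤ (n:ℝ)^C * (1-ε)^(n-C) := by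
        intro k hk
        rw [Finset.mem_Ico] at hk
        have hkn : k ≤ n := by omega
        have hb1 : (n.choose k : ℝ) ≤ (n:ℝ)^C := by
          rw [← Nat.choose_symm hkn]
          calc ((n.choose (n-k)) : ℝ) ≤ ((n^(n-k) : ℕ) : ℝ) := by
                exact_mod_cast Nat.choose_le_pow n (n-k)
            _ = (n:ℝ)^(n-k) := by push_cast; ring
            _ ≤ (n:ℝ)^C := pow_le_pow_right₀ (by exact_mod_cast (by omega : 1 ≤ n)) (by omega)
        have hb2 : (1-ε)^k ≤ (1-ε)^(n-C) :=
          pow_le_pow_of_le_one hp0 (by linarith) (by omega)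
        have hb3 : ε^(n-k) ≤ 1 := pow_le_one₀ hε0.le hε1.le
        calc (n.choose k : ℝ) * (1-ε)^k * ε^(n-k) ≤ (n:ℝ)^C * (1-ε)^(n-C) * 1 := by
              apply mul_le_mul (mul_le_mul hb1 hb2 (pow_nonneg hp0 _) (by positivity))
                hb3 (pow_nonneg hε0.le _) (mul_nonneg (by positivity) (pow_nonneg hp0 _))
          _ = (n:ℝ)^C * (1-ε)^(n-C) := by ring
      calc _ ≤ ∑ _k ∈ Finset.Ico (n - C) (n+1), (n:ℝ)^C * (1-ε)^(n-C) :=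
            Finset.sum_le_sum hbnd
        _ = ((Finset.Ico (n - C) (n+1)).card : ℝ) * ((n:ℝ)^C * (1-ε)^(n-C)) := by
            rw [Finset.sum_const, nsmul_eq_mul]
        _ ≤ ((C:ℝ)+1) * ((n:ℝ)^C * (1-ε)^(n-C)) := by
            apply mul_le_mul_of_nonneg_right _ (mul_nonneg (by positivity) (pow_nonneg hp0 _))
            rw [Nat.card_Ico]
            have : n + 1 - (n - C) ≤ C + 1 := by omega
            calc ((n + 1 - (n - C) : ℕ) : ℝ) ≤ ((C + 1 : ℕ) : ℝ) := by exact_mod_cast this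
              _ = (C:ℝ)+1 := by push_cast; ring
    have hrw : ((C:ℝ)+1) * ((n:ℝ)^C * (1-ε)^(n-C))
        = (((C:ℝ)+1)/(1-ε)^C) * ((n:ℝ)^C * (1-ε)^n) := by
      rw [pow_sub₀ (1-ε) (by linarith : (1:ℝ) - ε ≠ 0) (by omega : C ≤ n)]
      have h0 : (0:ℝ) < (1-ε) ^ C := pow_pos (by linarith) C
      field_simp
    linarith
  -- (c) squeeze
  have hk1ev : ∀ᶠ n in atTop, 2 ≤ istar n := ha 1
  set w : ℕ → ℝ := fun n => Real.sqrt (1/((istar n - 1 : ℕ):ℝ) + 1/((n - (istar n - 1) : ℕ):ℝ))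
    with hw_def
  have hwto : Tendsto w atTop (𝓝 0) := by
    have h1 : Tendsto (fun n => ((istar n - 1 : ℕ):ℝ)) atTop atTop :=
      tendsto_natCast_atTop_atTop.comp
        (tendsto_atTop.2 fun b => (ha (b+1)).mono fun n h => by omega)
    have h2 : Tendsto (fun n => ((n - (istar n - 1) : ℕ):ℝ)) atTop atTop :=
      tendsto_natCast_atTop_atTop.comp
        (tendsto_atTop.2 fun b => (hb b).mono fun n h => by omega)
    have h3 : Tendsto (fun n => 1/((istar n - 1 : ℕ):ℝ) + 1/((n - (istar n - 1) : ℕ):ℝ))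
        atTop (𝓝 0) := by
      have := (h1.inv_tendsto_atTop).add (h2.inv_tendsto_atTop)
      simpa [one_div] using this
    have := (Real.continuous_sqrt.tendsto 0).comp h3
    simpa [hw_def, Real.sqrt_zero, Function.comp_def] using this
  apply tendsto_of_tendsto_of_tendsto_of_le_of_le' (tendsto_const_nhds (x := 1 - δ))
    (by simpa using (tendsto_const_nhds (x := 1 - δ)).add hwto)
  · filter_upwards [hδev] with n h1
    exact (histar n h1).1.2.2
  · filter_upwards [hδev, hk1ev] with n h1 h2
    obtain ⟨⟨hi1, hin, hsum⟩, hmin⟩ := histar n h1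
    have hslt : ∑ k ∈ Finset.range (istar n - 1), (n.choose k : ℝ) * (1-ε)^k * ε^(n-k) < 1 - δ := by
      by_contra hge
      push_neg at hge
      have := hmin ⟨by omega, by omega, hge⟩
      omega
    have hterm : (n.choose (istar n - 1) : ℝ) * (1-ε)^(istar n - 1) * ε^(n-(istar n - 1)) ≤ w n := by
      have hkj : (istar n - 1) + (n - (istar n - 1)) = n := by omega
      have h := pmf_term_le hp0 (by linarith) (istar n - 1) (n - (istar n - 1))
        (by omega) (by omega)
      rw [hkj] at h
      have : (1 : ℝ) - (1 - ε) = ε := by ring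
      rw [this] at h
      exact h
    calc ∑ k ∈ Finset.range (istar n), (n.choose k : ℝ) * (1-ε)^k * ε^(n-k)
        = ∑ k ∈ Finset.range (istar n - 1), (n.choose k : ℝ) * (1-ε)^k * ε^(n-k)
          + (n.choose (istar n - 1) : ℝ) * (1-ε)^(istar n - 1) * ε^(n-(istar n - 1)) := by
          exact sum_range_pred _ _ (by omega)
      _ ≤ (1 - δ) + w n := add_le_add hslt.le hterm



lemma le_orderStat_iff {n : ℕ} (v : Fin n → ℝ) (r : ℕ) (hr1 : 1 ≤ r) (hrn : r ≤ n) (c : ℝ) :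
    c ≤ orderStat v r ↔ (Finset.univ.filter fun i => v i < c).card ≤ r - 1 := by
  have h : r - 1 < n := by omega
  rw [orderStat, dif_pos h]
  set σ := Tuple.sort v with hσ
  have hmono := Tuple.monotone_sort v
  have hcard : (Finset.univ.filter fun i => v i < c).card
      = (Finset.univ.filter fun j => v (σ j) < c).card := by
    apply Finset.card_bij (fun (i : Fin n) _ => σ.symm i)
    · intro a ha
      simp only [Finset.mem_filter, Finset.mem_univ, true_and] at ha ⊢
      simpa [Equiv.apply_symm_apply] using ha
    · intro a _ b _ hab
      exact σ.symm.injective hab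
    · intro b hb
      simp only [Finset.mem_filter, Finset.mem_univ, true_and] at hb
      exact ⟨σ b, by simpa using hb, by simp⟩
  rw [hcard]
  constructor
  · intro hle
    have := Finset.card_le_card_of_injOn (fun j : Fin n => (j : ℕ))
      (s := Finset.univ.filter fun j => v (σ j) < c) (t := Finset.range (r-1))
      (by
        intro j hj
        simp only [Finset.mem_coe, Finset.mem_filter, Finset.mem_univ, true_and] at hj
        rw [Finset.mem_coe, Finset.mem_range]
        by_contra hge
        push_neg at hge
        have hle2 : (⟨r-1, h⟩ : Fin n) ≤ j := hge
        have := hmono hle2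
        simp only [Function.comp_apply] at this
        linarith)
      (by intro a _ b _ hab; exact Fin.ext hab)
    simpa using this
  · intro hcard'
    by_contra hlt
    push_neg at hlt
    have hsub : ∀ i, ∀ hi : i < r, (⟨i, by omega⟩ : Fin n) ∈
        Finset.univ.filter fun j => v (σ j) < c := by
      intro i hi
      simp only [Finset.mem_filter, Finset.mem_univ, true_and]
      have hle2 : (⟨i, by omega⟩ : Fin n) ≤ (⟨r-1, h⟩ : Fin n) := by
        simp only [Fin.mk_le_mk]; omega
      have := hmono hle2
      simp only [Function.comp_apply] at this
      linarith
    have hr : r ≤ (Finset.univ.filter fun j => v (σ j) < c).card := by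
      have := Finset.card_le_card_of_injOn (fun i : ℕ => if hi : i < n then (⟨i, hi⟩ : Fin n)
          else ⟨0, by omega⟩)
        (s := Finset.range r) (t := Finset.univ.filter fun j => v (σ j) < c)
        (by
          intro i hi
          have hi' := Finset.mem_range.mp hi
          simp only
          rw [dif_pos (by omega : i < n)]
          exact hsub i hi')
        (by
          intro a ha b hb hab
          have ha' := Finset.mem_range.mp ha
          have hb' := Finset.mem_range.mp hb
          simp only at hab
          rw [dif_pos (by omega : a < n), dif_pos (by omega : b < n)] at hab
          simpa using hab)
      simpa using this
    omega


lemma cdf_cont (ν : Measure ℝ) [IsProbabilityMeasure ν] (hatom : ∀ x, ν {x} = 0) :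
    Continuous (cdf ν) := by
  rw [continuous_iff_continuousAt]
  intro x
  have hmono : Monotone (cdf ν) := monotone_cdf ν
  rw [hmono.continuousAt_iff_leftLim_eq_rightLim]
  have h1 : Function.leftLim (cdf ν) x = cdf ν x := by
    have hs := (cdf ν).measure_singleton x
    rw [measure_cdf, hatom x] at hs
    have hle : Function.leftLim (cdf ν) x ≤ cdf ν x := hmono.leftLim_le le_rfl
    have h0 : cdf ν x - Function.leftLim (cdf ν) x ≤ 0 :=
      ENNReal.ofReal_eq_zero.mp hs.symm
    linarith
  have h2 : Function.rightLim (cdf ν) x = cdf ν x := by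
    apply rightLim_eq_of_tendsto
    exact ((cdf ν).right_continuous x).mono Ioi_subset_Ici_self
  rw [h1, h2]

lemma quantile_spec (ν : Measure ℝ) [IsProbabilityMeasure ν] (hatom : ∀ x, ν {x} = 0)
    (p : ℝ) (hp0 : 0 < p) (hp1 : p < 1) :
    (∀ x, (p ≤ cdf ν x ↔ sInf {y | p ≤ cdf ν y} ≤ x)) ∧
    ν (Set.Iio (sInf {y | p ≤ cdf ν y})) = ENNReal.ofReal p ∧
    ν (Set.Iic (sInf {y | p ≤ cdf ν y})) = ENNReal.ofReal p := by
  have hcont := cdf_cont ν hatom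
  have hmono : Monotone (cdf ν) := monotone_cdf ν
  have hne : {y | p ≤ cdf ν y}.Nonempty := by
    obtain ⟨x, hx⟩ := ((tendsto_cdf_atTop (μ := ν)).eventually_const_lt hp1).exists
    exact ⟨x, hx.le⟩
  have hbdd : BddBelow {y | p ≤ cdf ν y} := by
    obtain ⟨x₀, hx₀⟩ := ((tendsto_cdf_atBot (μ := ν)).eventually_lt_const hp0).exists
    refine ⟨x₀, fun y hy => ?_⟩
    by_contra hxy
    push_neg at hxy
    have := hmono hxy.le
    simp only [Set.mem_setOf_eq] at hy
    linarith
  have hclosed : IsClosed {y | p ≤ cdf ν y} := isClosed_le continuous_const hcont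
  have hQmem : sInf {y | p ≤ cdf ν y} ∈ {y | p ≤ cdf ν y} := hclosed.csInf_mem hne hbdd
  set q := sInf {y | p ≤ cdf ν y} with hq
  have hiff : ∀ x, (p ≤ cdf ν x ↔ q ≤ x) := fun x =>
    ⟨fun hx => csInf_le hbdd hx, fun hx => le_trans hQmem (hmono hx)⟩
  have hfq : cdf ν q = p := by
    refine le_antisymm ?_ hQmem
    by_contra hgt
    push_neg at hgt
    have hev : ∀ᶠ x in 𝓝 q, p < cdf ν x := (hcont.continuousAt).eventually_const_lt hgt
    have hev' : ∀ᶠ x in 𝓝[<] q, p < cdf ν x := hev.filter_mono nhdsWithin_le_nhds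
    obtain ⟨x, hx1, hx2⟩ := (hev'.and self_mem_nhdsWithin).exists
    have := (hiff x).mp hx1.le
    linarith
  have hIic : ν (Set.Iic q) = ENNReal.ofReal p := by
    rw [← ofReal_cdf (μ := ν) q, hfq]
  have hIio : ν (Set.Iio q) = ENNReal.ofReal p := by
    have hle : ν (Set.Iio q) ≤ ν (Set.Iic q) := measure_mono Set.Iio_subset_Iic_self
    have h2 : ν (Set.Iic q) ≤ ν {q} + ν (Set.Iio q) := by
      rw [← Set.Iio_insert, Set.insert_eq]
      exact measure_union_le _ _
    rw [hatom q, zero_add] at h2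
    rw [← hIic]
    exact le_antisymm hle h2
  exact ⟨hiff, hIio, hIic⟩


lemma count_binomial {Ω α : Type*} [MeasurableSpace Ω] [MeasurableSpace α]
    (P : Measure Ω) [IsProbabilityMeasure P] {n : ℕ} (f : Fin n → Ω → α)
    (hmeas : ∀ i, Measurable (f i))
    (hindep : iIndepFun f P)
    (A : Set α) [DecidablePred (· ∈ A)] (hA : MeasurableSet A) (a b : ENNReal)
    (ha : ∀ i, P (f i ⁻¹' A) = a) (hb : ∀ i, P (f i ⁻¹' Aᶜ) = b)
    (r : ℕ) (hr : r ≤ n) :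
    P {ω | (Finset.univ.filter fun i => f i ω ∈ A).card ≤ r}
      = ∑ k ∈ Finset.range (r+1), (n.choose k : ENNReal) * a^k * b^(n-k) := by
  set g : Finset (Fin n) → Set Ω := fun S => ⋂ i, f i ⁻¹' (if i ∈ S then A else Aᶜ) with hg
  set 𝒮 : Finset (Finset (Fin n)) := Finset.univ.powerset.filter (fun S => S.card ≤ r) with h𝒮
  have hgmeas : ∀ S, MeasurableSet (g S) := by
    intro S
    apply MeasurableSet.iInter
    intro i
    apply (hmeas i)
    split
    · exact hA
    · exact hA.compl
  have hset : {ω | (Finset.univ.filter fun i => f i ω ∈ A).card ≤ r} = ⋃ S ∈ 𝒮, g S := by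
    ext ω
    simp only [Set.mem_setOf_eq, Set.mem_iUnion, h𝒮, Finset.mem_filter, Finset.mem_powerset]
    constructor
    · intro hω
      refine ⟨Finset.univ.filter fun i => f i ω ∈ A, ⟨Finset.subset_univ _, hω⟩, ?_⟩
      simp only [hg, Set.mem_iInter]
      intro i
      by_cases hi : f i ω ∈ A
      · rw [if_pos (by simp [hi])]
        exact hi
      · rw [if_neg (by simp [hi])]
        exact hi
    · rintro ⟨S, ⟨-, hcard⟩, hmem⟩
      have : Finset.univ.filter (fun i => f i ω ∈ A) = S := by
        ext i
        simp only [Finset.mem_filter, Finset.mem_univ, true_and]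
        simp only [hg, Set.mem_iInter] at hmem
        have := hmem i
        by_cases hi : i ∈ S
        · rw [if_pos hi] at this
          exact ⟨fun _ => hi, fun _ => this⟩
        · rw [if_neg hi] at this
          exact ⟨fun h => absurd h this, fun h => absurd h hi⟩
      rw [this]
      exact hcard
  have hdisj : Set.PairwiseDisjoint ↑𝒮 g := by
    intro S _ T _ hST
    apply Set.disjoint_left.mpr
    intro ω hωS hωT
    apply hST
    have hkey : ∀ U : Finset (Fin n), ω ∈ g U → Finset.univ.filter (fun i => f i ω ∈ A) = U := by
      intro U hmem
      ext i
      simp only [Finset.mem_filter, Finset.mem_univ, true_and]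
      simp only [hg, Set.mem_iInter] at hmem
      have := hmem i
      by_cases hi : i ∈ U
      · rw [if_pos hi] at this
        exact ⟨fun _ => hi, fun _ => this⟩
      · rw [if_neg hi] at this
        exact ⟨fun h => absurd h this, fun h => absurd h hi⟩
    rw [← hkey S hωS, hkey T hωT]
  have hprod : ∀ S : Finset (Fin n), P (g S) = a ^ S.card * b ^ (n - S.card) := by
    intro S
    have := hindep.meas_iInter (s := fun i => f i ⁻¹' (if i ∈ S then A else Aᶜ))
      (fun i => ⟨if i ∈ S then A else Aᶜ, by split; exact hA; exact hA.compl, rfl⟩)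
    rw [hg]
    simp only
    rw [this]
    rw [← Finset.prod_filter_mul_prod_filter_not Finset.univ (· ∈ S)]
    have h1 : ∀ i ∈ Finset.univ.filter (· ∈ S), P (f i ⁻¹' (if i ∈ S then A else Aᶜ)) = a := by
      intro i hi
      rw [Finset.mem_filter] at hi
      rw [if_pos hi.2]
      exact ha i
    have h2 : ∀ i ∈ Finset.univ.filter (¬ · ∈ S), P (f i ⁻¹' (if i ∈ S then A else Aᶜ)) = b := by
      intro i hi
      rw [Finset.mem_filter] at hi
      rw [if_neg hi.2]
      exact hb i
    rw [Finset.prod_congr rfl h1, Finset.prod_congr rfl h2, Finset.prod_const, Finset.prod_const]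
    congr 1
    · congr 1
      rw [Finset.filter_univ_mem]
    · congr 1
      have : Finset.univ.filter (¬ · ∈ S) = Sᶜ := by
        ext i
        simp [Finset.mem_compl]
      rw [this, Finset.card_compl, Fintype.card_fin]
  rw [hset, measure_biUnion_finset hdisj (fun S _ => hgmeas S)]
  have hSsum : ∑ S ∈ 𝒮, P (g S) = ∑ S ∈ 𝒮, a ^ S.card * b ^ (n - S.card) :=
    Finset.sum_congr rfl fun S _ => hprod S
  rw [hSsum]
  have hdecomp : 𝒮 = (Finset.range (r+1)).biUnion (fun k => Finset.powersetCard k Finset.univ) := by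
    ext S
    simp only [h𝒮, Finset.mem_filter, Finset.mem_powerset, Finset.mem_biUnion, Finset.mem_range,
      Finset.mem_powersetCard_univ, Nat.lt_succ_iff]
    constructor
    · rintro ⟨-, h⟩
      exact ⟨S.card, h, rfl⟩
    · rintro ⟨k, hk, rfl⟩
      exact ⟨Finset.subset_univ _, hk⟩
  rw [hdecomp, Finset.sum_biUnion]
  · apply Finset.sum_congr rfl
    intro k hk
    rw [Finset.mem_range, Nat.lt_succ_iff] at hk
    have : ∀ S ∈ Finset.powersetCard k (Finset.univ : Finset (Fin n)),
        a ^ S.card * b ^ (n - S.card) = a ^ k * b ^ (n-k) := by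
      intro S hS
      rw [Finset.mem_powersetCard_univ] at hS
      rw [hS]
    rw [Finset.sum_congr rfl this, Finset.sum_const, Finset.card_powersetCard, Finset.card_univ,
      Fintype.card_fin, nsmul_eq_mul, mul_assoc]
  · intro x _ y _ hxy
    apply Finset.disjoint_left.mpr
    intro S hSx hSy
    simp only [Finset.mem_powersetCard_univ] at hSx hSy
    exact hxy (hSx ▸ hSy ▸ rfl)

end AuxLemmas

section MainProof
open MeasureTheory ProbabilityTheory Filter Topology Set

/-- asymptotic tightness of the confidence level: the attained confidence
level `P(C_n ≥ 1-ε)`, where `C_n = μ{z : t(D₁,z) ≤ T_n}` is the realized coverage of the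
calibrated uncertainty set, converges to the target `1-δ` as `n → ∞`. -/
theorem confidence_tendsto_target
    {Ω S : Type*} [MeasurableSpace Ω] [MeasurableSpace S]
    (P : Measure Ω) [IsProbabilityMeasure P]
    (m : ℕ)
    (ε δ : ℝ) (hε : ε ∈ Set.Ioo (0 : ℝ) 1) (hδ : δ ∈ Set.Ioo (0 : ℝ) 1)
    (D₁ : Ω → S) (hD₁ : Measurable D₁)
    (ξ : (n : ℕ) → Fin n → Ω → (Fin m → ℝ))
    (hξmeas : ∀ n, ∀ i : Fin n, Measurable (ξ n i))
    (μ : Measure (Fin m → ℝ)) [IsProbabilityMeasure μ]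
    (hiid : ∀ n : ℕ, (1 - ε) ^ n ≤ δ → iIndepFun (ξ n) P)
    (hlaw : ∀ n : ℕ, (1 - ε) ^ n ≤ δ → ∀ i : Fin n, Measure.map (ξ n i) P = μ)
    (hindep : ∀ n : ℕ, (1 - ε) ^ n ≤ δ → IndepFun D₁ (fun ω => fun i : Fin n => ξ n i ω) P)
    (t : S × (Fin m → ℝ) → ℝ) (ht : Measurable t)
    (hatomless : ∀ s : S, ∀ x : ℝ, Measure.map (fun z => t (s, z)) μ {x} = 0)
    (istar : ℕ → ℕ)
    (histar : ∀ n : ℕ, (1 - ε) ^ n ≤ δ →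
      IsLeast {r : ℕ | 1 ≤ r ∧ r ≤ n ∧
        1 - δ ≤ ∑ k ∈ Finset.range r, (n.choose k : ℝ) * (1 - ε) ^ k * ε ^ (n - k)}
        (istar n)) :
    Tendsto
      (fun n : ℕ => P {ω | ENNReal.ofReal (1 - ε) ≤
        μ {z | t (D₁ ω, z) ≤ orderStat (fun i => t (D₁ ω, ξ n i ω)) (istar n)}})
      atTop (nhds (ENNReal.ofReal (1 - δ))) := by
  obtain ⟨hε0, hε1⟩ := hε
  obtain ⟨hδ0, hδ1⟩ := hδ
  have htm : ∀ s, Measurable (fun z => t (s, z)) := fun s => ht.comp measurable_prodMk_left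
  set ν : S → Measure ℝ := fun s => Measure.map (fun z => t (s, z)) μ with hν
  have hprob : ∀ s, IsProbabilityMeasure (ν s) := fun s =>
    Measure.isProbabilityMeasure_map (htm s).aemeasurable
  have hatom : ∀ s x, ν s {x} = 0 := hatomless
  set q : S → ℝ := fun s => sInf {y | 1 - ε ≤ cdf (ν s) y} with hq
  have hspec : ∀ s, (∀ x, (1 - ε ≤ cdf (ν s) x ↔ q s ≤ x)) ∧
      ν s (Set.Iio (q s)) = ENNReal.ofReal (1 - ε) ∧
      ν s (Set.Iic (q s)) = ENNReal.ofReal (1 - ε) := by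
    intro s
    haveI := hprob s
    exact quantile_spec (ν s) (hatom s) (1 - ε) (by linarith) (by linarith)
  have hIic_eq : ∀ s x, μ {z | t (s, z) ≤ x} = ν s (Set.Iic x) := by
    intro s x
    rw [hν]
    rw [Measure.map_apply (htm s) measurableSet_Iic]
    rfl
  have hIio_eq : ∀ s x, μ {z | t (s, z) < x} = ν s (Set.Iio x) := by
    intro s x
    rw [hν]
    rw [Measure.map_apply (htm s) measurableSet_Iio]
    rfl
  -- measurability of the quantile function
  have hcdfmeas : ∀ x : ℝ, Measurable (fun s => cdf (ν s) x) := by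
    intro x
    have h1 : Measurable (fun s => μ (Prod.mk s ⁻¹' (t ⁻¹' Set.Iic x))) :=
      measurable_measure_prodMk_left (ht measurableSet_Iic)
    have h2 : ∀ s, cdf (ν s) x = (μ (Prod.mk s ⁻¹' (t ⁻¹' Set.Iic x))).toReal := by
      intro s
      haveI := hprob s
      rw [cdf_eq_real, measureReal_def]
      congr 1
      rw [← hIic_eq]
      rfl
    simp_rw [h2]
    exact h1.ennreal_toReal
  have hqmeas : Measurable q := by
    apply measurable_of_Iio
    intro c
    have hset : q ⁻¹' Set.Iio c
        = ⋃ y : ℚ, if (y:ℝ) < c then {s | 1 - ε ≤ cdf (ν s) y} else ∅ := by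
      ext s
      simp only [Set.mem_preimage, Set.mem_Iio, Set.mem_iUnion]
      constructor
      · intro hqs
        obtain ⟨y, hy1, hy2⟩ := exists_rat_btwn hqs
        refine ⟨y, ?_⟩
        rw [if_pos hy2]
        exact ((hspec s).1 y).mpr hy1.le
      · rintro ⟨y, hy⟩
        by_cases hc : (y:ℝ) < c
        · rw [if_pos hc] at hy
          exact lt_of_le_of_lt (((hspec s).1 y).mp hy) hc
        · rw [if_neg hc] at hy
          exact absurd hy (Set.notMem_empty s)
    rw [hset]
    apply MeasurableSet.iUnion
    intro y
    by_cases hc : (y:ℝ) < c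
    · rw [if_pos hc]
      exact measurableSet_le measurable_const (hcdfmeas y)
    · rw [if_neg hc]
      exact MeasurableSet.empty
  -- pointwise equivalence of the event with a counting event
  have hiff_event : ∀ n, 1 ≤ istar n → istar n ≤ n → ∀ (s : S) (x : Fin n → Fin m → ℝ),
      (ENNReal.ofReal (1 - ε) ≤ μ {z | t (s, z) ≤ orderStat (fun i => t (s, x i)) (istar n)}
        ↔ (Finset.univ.filter fun i => t (s, x i) < q s).card ≤ istar n - 1) := by
    intro n h1 h2 s x
    haveI := hprob s
    rw [hIic_eq s _, ← ofReal_cdf, ENNReal.ofReal_le_ofReal_iff (cdf_nonneg _ _),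
      (hspec s).1 _]
    exact le_orderStat_iff _ _ h1 h2 (q s)
  -- the per-n probability identity
  have key : ∀ n, (1 - ε) ^ n ≤ δ →
      P {ω | ENNReal.ofReal (1 - ε) ≤
          μ {z | t (D₁ ω, z) ≤ orderStat (fun i => t (D₁ ω, ξ n i ω)) (istar n)}}
      = ENNReal.ofReal
          (∑ k ∈ Finset.range (istar n), (n.choose k : ℝ) * (1 - ε) ^ k * ε ^ (n - k)) := by
    intro n hn
    obtain ⟨⟨h1, h2, -⟩, -⟩ := histar n hn
    set E : Set (S × (Fin n → Fin m → ℝ)) :=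
      {sx | (Finset.univ.filter fun i => t (sx.1, sx.2 i) < q sx.1).card ≤ istar n - 1}
      with hE
    have hEmeas : MeasurableSet E := by
      have hG : ∀ i : Fin n,
          MeasurableSet {sx : S × (Fin n → Fin m → ℝ) | t (sx.1, sx.2 i) < q sx.1} :=
        fun i => measurableSet_lt
          (ht.comp (measurable_fst.prodMk ((measurable_pi_apply i).comp measurable_snd)))
          (hqmeas.comp measurable_fst)
      have hcnt : Measurable (fun sx : S × (Fin n → Fin m → ℝ) =>
          (∑ i : Fin n, if t (sx.1, sx.2 i) < q sx.1 then 1 else 0 : ℕ)) := by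
        apply Finset.measurable_sum
        intro i _
        exact Measurable.ite (hG i) measurable_const measurable_const
      have hEeq : E = (fun sx : S × (Fin n → Fin m → ℝ) =>
          (∑ i : Fin n, if t (sx.1, sx.2 i) < q sx.1 then 1 else 0 : ℕ)) ⁻¹'
          (Set.Iic (istar n - 1)) := by
        ext sx
        simp only [hE, Set.mem_setOf_eq, Set.mem_preimage, Set.mem_Iic, Finset.card_filter]
      rw [hEeq]
      exact hcnt MeasurableSet.of_discrete
    set W : Ω → (Fin n → Fin m → ℝ) := fun ω i => ξ n i ω with hW
    have hWmeas : Measurable W := measurable_pi_lambda _ (fun i => hξmeas n i)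
    have hpre : {ω | ENNReal.ofReal (1 - ε) ≤
        μ {z | t (D₁ ω, z) ≤ orderStat (fun i => t (D₁ ω, ξ n i ω)) (istar n)}}
        = (fun ω => (D₁ ω, W ω)) ⁻¹' E := by
      ext ω
      simp only [Set.mem_setOf_eq, Set.mem_preimage, hE]
      exact hiff_event n h1 h2 (D₁ ω) (W ω)
    rw [hpre, ← Measure.map_apply (hD₁.prodMk hWmeas) hEmeas,
      (indepFun_iff_map_prod_eq_prod_map_map hD₁.aemeasurable hWmeas.aemeasurable).mp
        (hindep n hn),
      Measure.prod_apply hEmeas]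
    have hinner : ∀ s, (Measure.map W P) (Prod.mk s ⁻¹' E)
        = ∑ k ∈ Finset.range ((istar n - 1) + 1),
            (n.choose k : ENNReal) * (ENNReal.ofReal (1 - ε))^k * (ENNReal.ofReal ε)^(n-k) := by
      intro s
      haveI := hprob s
      haveI : DecidablePred (· ∈ {z : Fin m → ℝ | t (s, z) < q s}) :=
        fun z => Real.decidableLT _ _
      have hAmeas : MeasurableSet {z : Fin m → ℝ | t (s, z) < q s} :=
        (htm s) measurableSet_Iio
      have hPA : ∀ i : Fin n, P (ξ n i ⁻¹' {z : Fin m → ℝ | t (s, z) < q s})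
          = ENNReal.ofReal (1 - ε) := by
        intro i
        rw [← Measure.map_apply (hξmeas n i) hAmeas, hlaw n hn i]
        have : μ {z : Fin m → ℝ | t (s, z) < q s} = ν s (Set.Iio (q s)) := hIio_eq s (q s)
        rw [this, (hspec s).2.1]
      have hPAc : ∀ i : Fin n, P (ξ n i ⁻¹' {z : Fin m → ℝ | t (s, z) < q s}ᶜ)
          = ENNReal.ofReal ε := by
        intro i
        rw [Set.preimage_compl,
          measure_compl ((hξmeas n i) hAmeas) (measure_ne_top _ _), measure_univ, hPA i]
        rw [← ENNReal.ofReal_one, ← ENNReal.ofReal_sub _ (by linarith : (0:ℝ) ≤ 1 - ε)]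
        norm_num
      have hsetW : W ⁻¹' (Prod.mk s ⁻¹' E)
          = {ω | (Finset.univ.filter
              fun i => ξ n i ω ∈ {z : Fin m → ℝ | t (s, z) < q s}).card ≤ istar n - 1} := by
        ext ω
        simp only [Set.mem_preimage, hE, Set.mem_setOf_eq, hW]
      rw [Measure.map_apply hWmeas (hEmeas.preimage measurable_prodMk_left), hsetW]
      exact count_binomial P (fun i => ξ n i) (hξmeas n) (hiid n hn)
        {z : Fin m → ℝ | t (s, z) < q s} hAmeas
        (ENNReal.ofReal (1 - ε)) (ENNReal.ofReal ε) hPA hPAc (istar n - 1) (by omega)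
    rw [lintegral_congr hinner]
    haveI : IsProbabilityMeasure (Measure.map D₁ P) :=
      Measure.isProbabilityMeasure_map hD₁.aemeasurable
    rw [lintegral_const, measure_univ, mul_one]
    have hreq : (istar n - 1) + 1 = istar n := by omega
    rw [hreq, ENNReal.ofReal_sum_of_nonneg (fun k _ =>
      mul_nonneg (mul_nonneg (Nat.cast_nonneg _) (pow_nonneg (by linarith) _))
        (pow_nonneg hε0.le _))]
    apply Finset.sum_congr rfl
    intro k _
    rw [ENNReal.ofReal_mul (mul_nonneg (Nat.cast_nonneg _) (pow_nonneg (by linarith) _)),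
      ENNReal.ofReal_mul (Nat.cast_nonneg _), ENNReal.ofReal_pow (by linarith),
      ENNReal.ofReal_pow hε0.le, ENNReal.ofReal_natCast]
  -- conclude
  have hδev : ∀ᶠ n in atTop, (1 - ε) ^ n ≤ δ := by
    have h := tendsto_pow_atTop_nhds_zero_of_lt_one (by linarith : (0:ℝ) ≤ 1 - ε)
      (by linarith : 1 - ε < 1)
    exact (h.eventually_lt_const hδ0).mono fun n h => h.le
  have hBto := binom_sum_tendsto ε δ ⟨hε0, hε1⟩ ⟨hδ0, hδ1⟩ istar histar
  have hto : Tendsto (fun n => ENNReal.ofReal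
      (∑ k ∈ Finset.range (istar n), (n.choose k : ℝ) * (1 - ε) ^ k * ε ^ (n - k)))
      atTop (nhds (ENNReal.ofReal (1 - δ))) :=
    (ENNReal.continuous_ofReal.tendsto _).comp hBto
  apply hto.congr'
  filter_upwards [hδev] with n hn
  exact (key n hn).symm

end MainProof
end

section
/- Let D ∈ ℝ^{r×d}, e ∈ ℝ^r, x ∈ ℝ^d, and b ∈ ℝ, and suppose the polytope U = {a ∈ ℝ^d : Da ≤ e} (componentwise inequality) is nonempty. Then the robust linear constraint 'a·x ≤ b for every a ∈ U' holds if and only if there exists p ∈ ℝ^r with p ≥ 0 (componentwise), Dᵀp = x, and p·e ≤ b. -/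
open Matrix

section Aux

set_option linter.unusedSectionVars false

open Matrix BigOperators Topology

variable {E : Type*} [NormedAddCommGroup E] [InnerProductSpace ℝ E] [FiniteDimensional ℝ E]
variable {ι : Type*} [Fintype ι] [DecidableEq ι]

/-- Conic Carathéodory: a nonneg combination can be rewritten with linearly independent support. -/
lemma conic_caratheodory (v : ι → E) (x : E) :
    ∀ (s : Finset ι) (p : ι → ℝ), 0 ≤ p → (∀ i ∉ s, p i = 0) → ∑ i, p i • v i = x →
    ∃ (t : Finset ι) (q : ι → ℝ), 0 ≤ q ∧ (∀ i ∉ t, q i = 0) ∧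
      LinearIndependent ℝ (fun i : t => v i) ∧ ∑ i, q i • v i = x := by
  intro s
  induction s using Finset.strongInductionOn with
  | _ s IH =>
    intro p hp hps hpx
    set t : Finset ι := s.filter (fun i => p i ≠ 0) with ht
    have hts : t ⊆ s := Finset.filter_subset _ _
    have hpt : ∀ i ∉ t, p i = 0 := by
      intro i hi
      by_cases h : i ∈ s
      · by_contra hpi
        exact hi (Finset.mem_filter.2 ⟨h, hpi⟩)
      · exact hps i h
    by_cases hlin : LinearIndependent ℝ (fun i : t => v i)
    · exact ⟨t, p, hp, hpt, hlin, hpx⟩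
    · by_cases hne : t = s
      · -- t = s, reduce support
        rw [Fintype.not_linearIndependent_iff] at hlin
        obtain ⟨g, hg0, j0, hj0⟩ := hlin
        -- extend g to ι
        have key : ∀ (G : ι → ℝ), (∀ i ∉ t, G i = 0) → (∑ i, G i • v i = 0) →
            (∃ i, 0 < G i) → ∃ (t' : Finset ι) (q : ι → ℝ), 0 ≤ q ∧ (∀ i ∉ t', q i = 0) ∧
            LinearIndependent ℝ (fun i : t' => v i) ∧ ∑ i, q i • v i = x := by
          intro G hGt hGsum hGex
          obtain ⟨i1, hi1⟩ := hGex
          classical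
          set T : Finset ι := Finset.univ.filter (fun i => 0 < G i) with hT
          have hTne : T.Nonempty := ⟨i1, Finset.mem_filter.2 ⟨Finset.mem_univ _, hi1⟩⟩
          obtain ⟨i0, hi0T, hi0min⟩ := T.exists_min_image (fun i => p i / G i) hTne
          have hGi0 : 0 < G i0 := (Finset.mem_filter.1 hi0T).2
          set c : ℝ := p i0 / G i0 with hc
          have hc0 : 0 ≤ c := div_nonneg (hp i0) hGi0.le
          set q : ι → ℝ := fun i => p i - c * G i with hq
          have hq0 : 0 ≤ q := by
            intro i
            by_cases hGi : 0 < G i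
            · have := hi0min i (Finset.mem_filter.2 ⟨Finset.mem_univ _, hGi⟩)
              have : c * G i ≤ p i := by
                rw [hc]
                calc p i0 / G i0 * G i ≤ p i / G i * G i := by
                      exact mul_le_mul_of_nonneg_right this hGi.le
                  _ = p i := div_mul_cancel₀ _ hGi.ne'
              simpa [hq] using this
            · push_neg at hGi
              have : c * G i ≤ 0 := mul_nonpos_of_nonneg_of_nonpos hc0 hGi
              have := sub_nonneg.2 (this.trans (hp i))
              simpa [hq] using this
          have hqi0 : q i0 = 0 := by
            simp [hq, hc, div_mul_cancel₀ _ hGi0.ne']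
          have hi0t : i0 ∈ t := by
            by_contra h
            exact absurd (hGt i0 h) hGi0.ne'
          have hqsupp : ∀ i ∉ t.erase i0, q i = 0 := by
            intro i hi
            have h := Finset.mem_erase.not.1 hi
            push_neg at h
            by_cases hii0 : i = i0
            · rw [hii0]; exact hqi0
            · have hit := h hii0
              simp [hq, hpt i hit, hGt i hit]
          have hqsum : ∑ i, q i • v i = x := by
            have : ∑ i, q i • v i = ∑ i, p i • v i - c • ∑ i, G i • v i := by
              rw [Finset.smul_sum, ← Finset.sum_sub_distrib]
              congr 1; ext i; rw [smul_smul, ← sub_smul]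
            rw [this, hGsum, smul_zero, sub_zero, hpx]
          refine IH (t.erase i0) ?_ q hq0 hqsupp hqsum
          rw [← hne]
          exact Finset.erase_ssubset hi0t
        -- build G from g
        set G : ι → ℝ := fun i => if h : i ∈ t then g ⟨i, h⟩ else 0 with hG
        have hGt : ∀ i ∉ t, G i = 0 := fun i hi => by simp [hG, hi]
        have hGsum : ∑ i, G i • v i = 0 := by
          rw [← Finset.sum_subset (Finset.subset_univ t)
            (fun i _ hi => by rw [hGt i hi, zero_smul]),
            ← Finset.sum_coe_sort t (fun i => G i • v i), ← hg0]
          apply Finset.sum_congr rfl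
          intro i _
          simp [hG, i.2]
        rcases lt_trichotomy (g j0) 0 with hneg | hzero | hpos
        · -- use -G
          apply key (-G) (fun i hi => by simp [hGt i hi]) (by simp [hGsum]) ⟨j0, ?_⟩
          simp only [Pi.neg_apply, hG]
          rw [dif_pos j0.2]
          simpa using hneg
        · exact absurd hzero hj0
        · apply key G hGt hGsum ⟨j0, ?_⟩
          simp only [hG]
          rw [dif_pos j0.2]
          exact hpos
      · -- t ⊊ s
        exact IH t (hts.ssubset_of_ne hne) p hp hpt hpx

/-- The cone generated by finitely many vectors over a linearly independent subset is closed. -/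
lemma closed_subcone (v : ι → E) (t : Finset ι)
    (hlin : LinearIndependent ℝ (fun i : t => v i)) :
    IsClosed {x : E | ∃ q : ι → ℝ, 0 ≤ q ∧ (∀ i ∉ t, q i = 0) ∧ ∑ i, q i • v i = x} := by
  classical
  let L : EuclideanSpace ℝ t →ₗ[ℝ] E :=
    { toFun := fun c => ∑ i : t, c i • v i
      map_add' := by intro a b; simp [add_smul, Finset.sum_add_distrib]
      map_smul' := by intro m a; simp [smul_smul, Finset.smul_sum] }
  have hker : LinearMap.ker L = ⊥ := by
    rw [LinearMap.ker_eq_bot']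
    intro m hm
    have := (Fintype.linearIndependent_iff.1 hlin) m hm
    ext i; simpa using this i
  have hemb : IsClosedEmbedding L := L.isClosedEmbedding_of_injective hker
  have hK : IsClosed {c : EuclideanSpace ℝ t | ∀ i, 0 ≤ c i} := by
    have : {c : EuclideanSpace ℝ t | ∀ i, 0 ≤ c i} = ⋂ i, {c | 0 ≤ c i} :=
      Set.ext fun c => by simp
    rw [this]
    exact isClosed_iInter fun i =>
      isClosed_le continuous_const (EuclideanSpace.proj (𝕜 := ℝ) i).continuous
  have himg : IsClosed (L '' {c : EuclideanSpace ℝ t | ∀ i, 0 ≤ c i}) :=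
    hemb.isClosedMap _ hK
  convert himg using 1
  ext x
  constructor
  · rintro ⟨q, hq0, hqt, hqx⟩
    refine ⟨WithLp.toLp 2 (fun i => q i), fun i => hq0 i, ?_⟩
    show ∑ i : t, q i • v i = x
    rw [← hqx, Finset.sum_coe_sort t (fun i => q i • v i)]
    exact Finset.sum_subset (Finset.subset_univ t)
      (fun i _ hi => by rw [hqt i hi, zero_smul])
  · rintro ⟨c, hc0, hcx⟩
    refine ⟨fun i => if h : i ∈ t then c ⟨i, h⟩ else 0, ?_, ?_, ?_⟩
    · intro i
      by_cases h : i ∈ t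
      · simpa [h] using hc0 ⟨i, h⟩
      · simp [h]
    · intro i hi; simp [hi]
    · rw [← hcx]
      show _ = ∑ i : t, c i • v i
      rw [← Finset.sum_subset (Finset.subset_univ t)
        (fun i _ hi => by simp [hi]),
        ← Finset.sum_coe_sort t (fun i => (if h : i ∈ t then c ⟨i, h⟩ else 0) • v i)]
      apply Finset.sum_congr rfl
      intro i _
      simp [i.2]

/-- The finitely generated cone is closed. -/
lemma closed_fg_cone (v : ι → E) :
    IsClosed {x : E | ∃ p : ι → ℝ, 0 ≤ p ∧ ∑ i, p i • v i = x} := by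
  classical
  have : {x : E | ∃ p : ι → ℝ, 0 ≤ p ∧ ∑ i, p i • v i = x} =
      ⋃ t : {t : Finset ι // LinearIndependent ℝ (fun i : t => v i)},
        {x : E | ∃ q : ι → ℝ, 0 ≤ q ∧ (∀ i ∉ t.1, q i = 0) ∧ ∑ i, q i • v i = x} := by
    ext x
    simp only [Set.mem_iUnion, Set.mem_setOf_eq]
    constructor
    · rintro ⟨p, hp, hpx⟩
      obtain ⟨t, q, hq, hqt, hlin, hqx⟩ :=
        conic_caratheodory v x Finset.univ p hp (by simp) hpx
      exact ⟨⟨t, hlin⟩, q, hq, hqt, hqx⟩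
    · rintro ⟨t, q, hq, _, hqx⟩
      exact ⟨q, hq, hqx⟩
  rw [this]
  exact isClosed_iUnion_of_finite fun t => closed_subcone v t.1 t.2

open scoped InnerProductSpace in
/-- Farkas-type lemma for finitely generated cones. -/
lemma farkas_cone (v : ι → E) (x : E)
    (h : ∀ y : E, (∀ i, ⟪v i, y⟫_ℝ ≤ 0) → ⟪x, y⟫_ℝ ≤ 0) :
    ∃ p : ι → ℝ, 0 ≤ p ∧ ∑ i, p i • v i = x := by
  classical
  by_contra hcon
  set K : ConvexCone ℝ E :=
    { carrier := {z | ∃ p : ι → ℝ, 0 ≤ p ∧ ∑ i, p i • v i = z}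
      smul_mem' := by
        rintro c hc z ⟨p, hp, hpz⟩
        refine ⟨c • p, fun i => mul_nonneg hc.le (hp i), ?_⟩
        rw [← hpz, Finset.smul_sum]
        apply Finset.sum_congr rfl
        intro i _
        rw [Pi.smul_apply, smul_eq_mul, mul_smul]
      add_mem' := by
        rintro z1 ⟨p, hp, hpz⟩ z2 ⟨q, hq, hqz⟩
        refine ⟨p + q, fun i => add_nonneg (hp i) (hq i), ?_⟩
        rw [← hpz, ← hqz, ← Finset.sum_add_distrib]
        apply Finset.sum_congr rfl
        intro i _
        rw [Pi.add_apply, add_smul] }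
  have hne : (K : Set E).Nonempty := ⟨0, 0, le_refl _, by simp⟩
  have hcl : IsClosed (K : Set E) := closed_fg_cone v
  have hx : x ∉ K := hcon
  obtain ⟨y, hy1, hy2⟩ : ∃ y : E, (∀ z ∈ K, 0 ≤ ⟪z, y⟫_ℝ) ∧ ⟪y, x⟫_ℝ < 0 := by
    obtain ⟨f, u, hfK, hfx⟩ := geometric_hahn_banach_closed_point K.convex hcl hx
    have hu : 0 < u := by simpa using hfK 0 ⟨0, le_refl _, by simp⟩
    have hle : ∀ z ∈ K, f z ≤ 0 := by
      intro z hz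
      by_contra hpos
      push_neg at hpos
      have hmem : (u / f z + 1) • z ∈ K := K.smul_mem (by have := div_pos hu hpos; linarith) hz
      have := hfK _ hmem
      rw [map_smul, smul_eq_mul, add_mul, div_mul_cancel₀ _ hpos.ne'] at this
      linarith
    refine ⟨-(InnerProductSpace.toDual ℝ E).symm f, fun z hz => ?_, ?_⟩
    · rw [inner_neg_right, real_inner_comm, InnerProductSpace.toDual_symm_apply]
      linarith [hle z hz]
    · rw [inner_neg_left, InnerProductSpace.toDual_symm_apply]
      linarith
  have hvK : ∀ i, v i ∈ K := by
    intro i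
    refine ⟨fun j => if j = i then 1 else 0, fun j => by positivity, ?_⟩
    simp [ite_smul]
  have := h (-y) (fun i => by
    have := hy1 (v i) (hvK i)
    rw [inner_neg_right]
    linarith)
  rw [inner_neg_right, real_inner_comm] at this
  linarith

open scoped InnerProductSpace

/-- Affine Farkas / LP duality, the hard direction. -/
theorem robust_polytope_reformulation'
    {r d : ℕ} (D : Matrix (Fin r) (Fin d) ℝ) (e : Fin r → ℝ)
    (x : Fin d → ℝ) (b : ℝ)
    (hne : ∃ a : Fin d → ℝ, D.mulVec a ≤ e) :
    (∀ a : Fin d → ℝ, D.mulVec a ≤ e → a ⬝ᵥ x ≤ b) ↔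
      ∃ p : Fin r → ℝ, 0 ≤ p ∧ D.transpose.mulVec p = x ∧ p ⬝ᵥ e ≤ b := by
  classical
  constructor
  · intro h
    obtain ⟨a0, ha0⟩ := hne
    set EE := EuclideanSpace ℝ (Sum (Fin d) Unit)
    set w : Sum (Fin r) Unit → EE := fun i =>
      Sum.elim (fun i => (WithLp.equiv 2 _).symm (Sum.elim (fun j => D i j) (fun _ => e i)))
        (fun _ => (WithLp.equiv 2 _).symm (Sum.elim 0 (fun _ => 1))) i with hw
    set X : EE := (WithLp.equiv 2 _).symm (Sum.elim x (fun _ => b)) with hX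
    have key : ∃ p : Sum (Fin r) Unit → ℝ, 0 ≤ p ∧ ∑ i, p i • w i = X := by
      apply farkas_cone
      intro Y hY
      set y : Fin d → ℝ := fun j => Y (Sum.inl j) with hy
      set t : ℝ := Y (Sum.inr ()) with htdef
      have hinner : ∀ (u : EE), ⟪u, Y⟫_ℝ =
          ∑ j, u (Sum.inl j) * y j + u (Sum.inr ()) * t := by
        intro u
        rw [PiLp.inner_apply]
        rw [Fintype.sum_sum_type]
        simp [RCLike.inner_apply, hy, htdef]
        simp only [mul_comm]
      have ht : t ≤ 0 := by
        have := hY (Sum.inr ())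
        rw [hinner] at this
        simpa [hw] using this
      have hrow : ∀ i, (∑ j, D i j * y j) + e i * t ≤ 0 := by
        intro i
        have := hY (Sum.inl i)
        rw [hinner] at this
        simpa [hw] using this
      rw [hinner]
      have hXl : ∀ j, X (Sum.inl j) = x j := fun j => rfl
      have hXr : X (Sum.inr ()) = b := rfl
      simp only [hXl, hXr]
      rcases lt_or_eq_of_le ht with htneg | ht0
      · -- t < 0
        set a : Fin d → ℝ := fun j => y j / (-t) with ha
        have hfeas : D.mulVec a ≤ e := by
          intro i
        -- (∑ D i j * y j)/(-t) ≤ e i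
          have h1 : (0:ℝ) < -t := by linarith
          have h2 : ∑ j, D i j * y j ≤ e i * (-t) := by nlinarith [hrow i]
          show ∑ j, D i j * a j ≤ e i
          have : ∑ j, D i j * a j = (∑ j, D i j * y j) / (-t) := by
            rw [Finset.sum_div]
            apply Finset.sum_congr rfl
            intro j _
            rw [ha, mul_div_assoc]
          rw [this, div_le_iff₀ h1]
          exact h2
        have := h a hfeas
        have h1 : (0:ℝ) < -t := by linarith
        have haxe : a ⬝ᵥ x = (∑ j, x j * y j) / (-t) := by
          rw [dotProduct, Finset.sum_div]
          apply Finset.sum_congr rfl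
          intro j _
          simp only [ha]
          ring
        rw [haxe, div_le_iff₀ h1] at this
        nlinarith
      · -- t = 0
        rw [ht0]
        simp only [mul_zero, add_zero]
        by_contra hpos
        push_neg at hpos
        set c : ℝ := ∑ j, x j * y j with hc
        set s : ℝ := max 0 ((b - a0 ⬝ᵥ x + 1) / c) with hs
        have hs0 : 0 ≤ s := le_max_left _ _
        have hsc : b - a0 ⬝ᵥ x + 1 ≤ s * c := by
          have : (b - a0 ⬝ᵥ x + 1) / c ≤ s := le_max_right _ _
          calc b - a0 ⬝ᵥ x + 1 = (b - a0 ⬝ᵥ x + 1) / c * c := by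
                field_simp
            _ ≤ s * c := mul_le_mul_of_nonneg_right this hpos.le
        have hfeas : D.mulVec (a0 + s • y) ≤ e := by
          intro i
          have hDy : ∑ j, D i j * y j ≤ 0 := by
            have := hrow i; rw [ht0] at this; simpa using this
          have : D.mulVec (a0 + s • y) i = D.mulVec a0 i + s * ∑ j, D i j * y j := by
            rw [Matrix.mulVec_add, Pi.add_apply]
            congr 1
            rw [Matrix.mulVec_smul, Pi.smul_apply, smul_eq_mul, Matrix.mulVec,
              dotProduct, Finset.mul_sum]
          rw [this]
          have h2 : s * ∑ j, D i j * y j ≤ 0 := mul_nonpos_of_nonneg_of_nonpos hs0 hDy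
          calc D.mulVec a0 i + s * ∑ j, D i j * y j ≤ D.mulVec a0 i + 0 := by linarith
            _ = D.mulVec a0 i := by ring
            _ ≤ e i := ha0 i
        have hle := h _ hfeas
        have hax : (a0 + s • y) ⬝ᵥ x = a0 ⬝ᵥ x + s * c := by
          rw [add_dotProduct, smul_dotProduct, smul_eq_mul, hc]
          congr 1
          rw [dotProduct, Finset.mul_sum, Finset.mul_sum]
          apply Finset.sum_congr rfl
          intro j _
          ring
        rw [hax] at hle
        linarith
    obtain ⟨p', hp', hsum⟩ := key
    refine ⟨fun i => p' (Sum.inl i), fun i => hp' _, ?_, ?_⟩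
    · funext j
      have := congrArg (EuclideanSpace.proj (𝕜 := ℝ) (Sum.inl j)) hsum
      rw [map_sum] at this
      simp only [_root_.map_smul] at this
      have hXj : (EuclideanSpace.proj (𝕜 := ℝ) (Sum.inl j)) X = x j := rfl
      rw [hXj] at this
      rw [Fintype.sum_sum_type] at this
      simp only [hw, smul_eq_mul] at this
      have hterm : ∀ i : Fin r,
          (EuclideanSpace.proj (𝕜 := ℝ) (Sum.inl j)) (w (Sum.inl i)) = D i j := fun i => rfl
      have hterm2 : ∀ u : Unit,
          (EuclideanSpace.proj (𝕜 := ℝ) (Sum.inl j)) (w (Sum.inr u)) = 0 := fun u => rfl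
      rw [show D.transpose.mulVec (fun i => p' (Sum.inl i)) j
          = ∑ i, D i j * p' (Sum.inl i) by
        rw [Matrix.mulVec, dotProduct]
        apply Finset.sum_congr rfl
        intro i _
        rw [Matrix.transpose_apply, mul_comm]]
      rw [← this]
      simp [hw]
      apply Finset.sum_congr rfl
      intro i _
      ring
    · have := congrArg (EuclideanSpace.proj (𝕜 := ℝ) (Sum.inr ())) hsum
      rw [map_sum] at this
      simp only [_root_.map_smul] at this
      have hXb : (EuclideanSpace.proj (𝕜 := ℝ) (Sum.inr ())) X = b := rfl
      rw [hXb, Fintype.sum_sum_type] at this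
      simp only [hw, smul_eq_mul] at this
      have heq : ∑ i : Fin r, p' (Sum.inl i) * e i + p' (Sum.inr ()) = b := by
        rw [← this]
        simp [hw]
      have hq0 : 0 ≤ p' (Sum.inr ()) := hp' _
      rw [dotProduct]
      linarith
  · rintro ⟨p, hp, hDp, hpe⟩ a ha
    have h1 : a ⬝ᵥ x = (D.mulVec a) ⬝ᵥ p := by
      rw [← hDp, Matrix.dotProduct_mulVec, Matrix.vecMul_transpose]
    rw [h1]
    calc (D.mulVec a) ⬝ᵥ p ≤ e ⬝ᵥ p := by
          apply Finset.sum_le_sum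
          intro i _
          exact mul_le_mul_of_nonneg_right (ha i) (hp i)
      _ = p ⬝ᵥ e := dotProduct_comm _ _
      _ ≤ b := hpe

end Aux

/-- robust linear constraint over a nonempty polyhedral uncertainty set
`U = {a : Da ≤ e}` holds iff there exists `p ≥ 0` with `Dᵀp = x` and `p·e ≤ b`. -/
theorem robust_polytope_reformulation
    {r d : ℕ} (D : Matrix (Fin r) (Fin d) ℝ) (e : Fin r → ℝ)
    (x : Fin d → ℝ) (b : ℝ)
    (hne : ∃ a : Fin d → ℝ, D.mulVec a ≤ e) :
    (∀ a : Fin d → ℝ, D.mulVec a ≤ e → a ⬝ᵥ x ≤ b) ↔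
      ∃ p : Fin r → ℝ, 0 ≤ p ∧ D.transpose.mulVec p = x ∧ p ⬝ᵥ e ≤ b :=
  robust_polytope_reformulation' D e x b hne
end

section
/- Let N : ℝ^{ld} → ℝ be a norm (N(z) ≥ 0 with N(z)=0 iff z=0, N(cz)=|c|N(z), and N(z+w) ≤ N(z)+N(w)), and let N*(y) = sup{ y·z : z ∈ ℝ^{ld}, N(z) ≤ 1 } be its dual norm (finite by finite-dimensionality). Let Ā ∈ ℝ^{l×d} with rows ā₁ᵀ,…,ā_lᵀ, let M ∈ ℝ^{ld×ld} be invertible, let ρ ≥ 0, b ∈ ℝ^l, and x ∈ ℝ^d. For A ∈ ℝ^{l×d} let vec(A) ∈ ℝ^{ld} be the concatenation of the rows of A, and for i ∈ {1,…,l} let x_i ∈ ℝ^{ld} be the vector whose entries (i−1)d+1 through id equal x and whose remaining entries are 0. Then 'Ax ≤ b (componentwise) for every A ∈ ℝ^{l×d} with N(M(vec(A) − vec(Ā))) ≤ ρ' holds if and only if ā_i·x + ρ N*((Mᵀ)⁻¹ x_i) ≤ b_i for every i ∈ {1,…,l}. -/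
open Matrix

/-- The dual norm `N*(y) = sup { y·z : N(z) ≤ 1 }` of a norm `N` on `ℝ^{l×d}`
(vectorized matrices, indexed by `Fin l × Fin d`). -/
noncomputable def dualNorm {l d : ℕ} (N : (Fin l × Fin d → ℝ) → ℝ)
    (y : Fin l × Fin d → ℝ) : ℝ :=
  sSup ((fun z => y ⬝ᵥ z) '' {z | N z ≤ 1})

/-- Type copy to carry the norm `N`. -/
private def NormCopy (ι : Type*) : Type _ := ι → ℝ

private noncomputable instance {ι : Type*} : AddCommGroup (NormCopy ι) := Pi.addCommGroup
private noncomputable instance {ι : Type*} : Module ℝ (NormCopy ι) := Pi.module _ _ _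

private noncomputable def normCopyEquiv (ι : Type*) : (ι → ℝ) ≃ₗ[ℝ] NormCopy ι :=
  { toFun := fun z => z
    invFun := fun z => z
    map_add' := fun _ _ => rfl
    map_smul' := fun _ _ => rfl
    left_inv := fun _ => rfl
    right_inv := fun _ => rfl }

private lemma exists_norm_bound {ι : Type*} [Fintype ι] (N : (ι → ℝ) → ℝ)
    (hNzero : ∀ z, N z = 0 ↔ z = 0)
    (hNsmul : ∀ (c : ℝ) (z), N (c • z) = |c| * N z)
    (hNadd : ∀ z w, N (z + w) ≤ N z + N w) :
    ∃ C : ℝ, 0 < C ∧ ∀ z : ι → ℝ, ‖z‖ ≤ C * N z := by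
  letI : NormedAddCommGroup (NormCopy ι) := AddGroupNorm.toNormedAddCommGroup
    { toFun := N
      map_zero' := (hNzero 0).mpr rfl
      add_le' := hNadd
      neg' := fun z => by
        have := hNsmul (-1) z
        rw [abs_neg, abs_one, one_mul] at this
        exact (congrArg N (neg_one_smul ℝ (show ι → ℝ from z))).symm.trans this
      eq_zero_of_map_eq_zero' := fun z h => (hNzero z).mp h }
  letI : NormedSpace ℝ (NormCopy ι) := ⟨fun c z => by
    show N (c • z) ≤ ‖c‖ * N z
    exact le_of_eq ((hNsmul c z).trans (by rw [Real.norm_eq_abs]))⟩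
  haveI : FiniteDimensional ℝ (NormCopy ι) := Module.Finite.equiv (normCopyEquiv ι)
  have hg : Continuous ((normCopyEquiv ι).symm.toLinearMap : NormCopy ι →ₗ[ℝ] (ι → ℝ)) :=
    (normCopyEquiv ι).symm.toLinearMap.continuous_of_finiteDimensional
  obtain ⟨C, hC0, hC⟩ := SemilinearMapClass.bound_of_continuous (normCopyEquiv ι).symm.toLinearMap hg
  refine ⟨C, hC0, fun z => ?_⟩
  have h1 : ∀ w : NormCopy ι, ‖w‖ = N w := fun _ => rfl
  have h2 := hC z
  change _ ≤ C * N z at h2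
  exact h2

private lemma dual_bddAbove {l d : ℕ} (N : (Fin l × Fin d → ℝ) → ℝ)
    (hN0 : ∀ z, 0 ≤ N z)
    (hNzero : ∀ z, N z = 0 ↔ z = 0)
    (hNsmul : ∀ (c : ℝ) (z), N (c • z) = |c| * N z)
    (hNadd : ∀ z w, N (z + w) ≤ N z + N w)
    (y : Fin l × Fin d → ℝ) :
    BddAbove ((fun z => y ⬝ᵥ z) '' {z | N z ≤ 1}) := by
  obtain ⟨C, hC0, hC⟩ := exists_norm_bound N hNzero hNsmul hNadd
  refine ⟨(Fintype.card (Fin l × Fin d) : ℝ) * (‖y‖ * C), ?_⟩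
  rintro s ⟨z, hz, rfl⟩
  have hz1 : N z ≤ 1 := hz
  have hzn : ‖z‖ ≤ C := le_trans (hC z) (by nlinarith [hN0 z])
  have hyp : ∀ p, |y p| ≤ ‖y‖ := fun p => by
    simpa [Real.norm_eq_abs] using norm_le_pi_norm y p
  have hzp : ∀ p, |z p| ≤ C := fun p => by
    have := norm_le_pi_norm z p
    simp only [Real.norm_eq_abs] at this
    linarith
  calc (fun z => y ⬝ᵥ z) z ≤ |y ⬝ᵥ z| := le_abs_self _
    _ ≤ ∑ p, |y p * z p| := Finset.abs_sum_le_sum_abs _ _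
    _ ≤ ∑ _p : Fin l × Fin d, ‖y‖ * C := by
        refine Finset.sum_le_sum fun p _ => ?_
        rw [abs_mul]
        have h0y : (0:ℝ) ≤ ‖y‖ := norm_nonneg _
        have := hyp p
        have := hzp p
        nlinarith [abs_nonneg (y p), abs_nonneg (z p)]
    _ = (Fintype.card (Fin l × Fin d) : ℝ) * (‖y‖ * C) := by
        rw [Finset.sum_const, Finset.card_univ, nsmul_eq_mul]

private lemma key_iff {l d : ℕ} (N : (Fin l × Fin d → ℝ) → ℝ)
    (hN0 : ∀ z, 0 ≤ N z)
    (hNzero : ∀ z, N z = 0 ↔ z = 0)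
    (hNsmul : ∀ (c : ℝ) (z), N (c • z) = |c| * N z)
    (hNadd : ∀ z w, N (z + w) ≤ N z + N w)
    (ρ : ℝ) (hρ : 0 ≤ ρ) (y : Fin l × Fin d → ℝ) (c : ℝ) :
    (∀ w, N w ≤ ρ → w ⬝ᵥ y ≤ c) ↔ ρ * dualNorm N y ≤ c := by
  have hbdd := dual_bddAbove N hN0 hNzero hNsmul hNadd y
  have hN00 : N 0 = 0 := (hNzero 0).mpr rfl
  constructor
  · intro h
    have hc0 : 0 ≤ c := by
      have := h 0 (by rw [hN00]; exact hρ)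
      simpa using this
    rcases eq_or_lt_of_le hρ with hρ0 | hρ0
    · rw [← hρ0, zero_mul]; exact hc0
    · have hsup : dualNorm N y ≤ c / ρ := by
        refine csSup_le ⟨0, ⟨0, by simp [hN00], by simp⟩⟩ ?_
        rintro s ⟨z, hz, rfl⟩
        have hz1 : N z ≤ 1 := hz
        have hz' : N (ρ • z) ≤ ρ := by
          rw [hNsmul, abs_of_nonneg hρ]
          nlinarith [hz, hN0 z]
        have := h (ρ • z) hz'
        rw [smul_dotProduct, dotProduct_comm] at this
        rw [le_div_iff₀ hρ0, mul_comm]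
        simpa using this
      calc ρ * dualNorm N y ≤ ρ * (c / ρ) :=
            mul_le_mul_of_nonneg_left hsup hρ
        _ = c := by field_simp
  · intro h w hw
    rcases eq_or_lt_of_le hρ with hρ0 | hρ0
    · have hw0 : N w = 0 := le_antisymm (by rw [← hρ0] at hw; exact hw) (hN0 w)
      have : w = 0 := (hNzero w).mp hw0
      rw [this, zero_dotProduct]
      calc (0:ℝ) = ρ * dualNorm N y := by rw [← hρ0, zero_mul]
        _ ≤ c := h
    · set z := ρ⁻¹ • w with hzdef
      have hz : N z ≤ 1 := by
        rw [hzdef, hNsmul, abs_of_nonneg (le_of_lt (inv_pos.mpr hρ0))]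
        rw [inv_mul_le_iff₀ hρ0, mul_one]
        exact hw
      have hmem : y ⬝ᵥ z ∈ (fun z => y ⬝ᵥ z) '' {z | N z ≤ 1} := ⟨z, hz, rfl⟩
      have hle : y ⬝ᵥ z ≤ dualNorm N y := le_csSup hbdd hmem
      have hwz : w = ρ • z := by rw [hzdef, smul_inv_smul₀ (ne_of_gt hρ0)]
      calc w ⬝ᵥ y = ρ * (y ⬝ᵥ z) := by
            rw [hwz, smul_dotProduct, dotProduct_comm]; simp
        _ ≤ ρ * dualNorm N y := mul_le_mul_of_nonneg_left hle hρ
        _ ≤ c := h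


/-- the robust system `Ax ≤ b` over the general-norm uncertainty set
`{A : N(M(vec(A) − vec(Ā))) ≤ ρ}` holds iff `ā_i·x + ρ N*((Mᵀ)⁻¹ x_i) ≤ b_i` for each
row `i`, where `x_i` has `x` in the `i`-th block and `0` elsewhere. -/
theorem robust_general_norm_reformulation
    {l d : ℕ} (N : (Fin l × Fin d → ℝ) → ℝ)
    (hN0 : ∀ z, 0 ≤ N z)
    (hNzero : ∀ z, N z = 0 ↔ z = 0)
    (hNsmul : ∀ (c : ℝ) (z), N (c • z) = |c| * N z)
    (hNadd : ∀ z w, N (z + w) ≤ N z + N w)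
    (Abar : Matrix (Fin l) (Fin d) ℝ)
    (M : Matrix (Fin l × Fin d) (Fin l × Fin d) ℝ) (hM : IsUnit M.det)
    (ρ : ℝ) (hρ : 0 ≤ ρ) (b : Fin l → ℝ) (x : Fin d → ℝ) :
    (∀ A : Matrix (Fin l) (Fin d) ℝ,
        N (M.mulVec (fun p => A p.1 p.2 - Abar p.1 p.2)) ≤ ρ →
        ∀ i : Fin l, A.mulVec x i ≤ b i) ↔
      (∀ i : Fin l,
        Abar.mulVec x i +
          ρ * dualNorm N
            ((M.transpose)⁻¹.mulVec (fun p => if p.1 = i then x p.2 else 0)) ≤ b i) := by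
  have hdot : ∀ (u : Fin l × Fin d → ℝ) (i : Fin l),
      (u ⬝ᵥ fun p => if p.1 = i then x p.2 else 0) = ∑ j, u (i, j) * x j := by
    intro u i
    simp [dotProduct, Fintype.sum_prod_type, mul_ite, mul_zero, Finset.sum_ite_eq]
  have hMt : ∀ w v : Fin l × Fin d → ℝ,
      (M⁻¹ *ᵥ w) ⬝ᵥ v = w ⬝ᵥ (M.transpose⁻¹ *ᵥ v) := by
    intro w v
    calc (M⁻¹ *ᵥ w) ⬝ᵥ v = v ⬝ᵥ (M⁻¹ *ᵥ w) := dotProduct_comm _ _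
      _ = (v ᵥ* M⁻¹) ⬝ᵥ w := dotProduct_mulVec _ _ _
      _ = w ⬝ᵥ (v ᵥ* M⁻¹) := dotProduct_comm _ _
      _ = w ⬝ᵥ (M.transpose⁻¹ *ᵥ v) := by rw [← transpose_nonsing_inv, mulVec_transpose]
  constructor
  · intro h i
    have h2 : ρ * dualNorm N
        ((M.transpose)⁻¹.mulVec (fun p => if p.1 = i then x p.2 else 0)) ≤
        b i - Abar.mulVec x i := by
      rw [← key_iff N hN0 hNzero hNsmul hNadd ρ hρ _ _]
      intro w hw
      set u := M⁻¹ *ᵥ w with hu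
      set A : Matrix (Fin l) (Fin d) ℝ := Matrix.of (fun i' j => Abar i' j + u (i', j)) with hA
      have hfun : (fun p : Fin l × Fin d => A p.1 p.2 - Abar p.1 p.2) = u := by
        funext p; simp [hA]
      have hMu : M *ᵥ u = w := by
        rw [hu, mulVec_mulVec, mul_nonsing_inv M hM, one_mulVec]
      have hb := h A (by rw [hfun, hMu]; exact hw) i
      have hAx : A.mulVec x i = Abar.mulVec x i +
          (u ⬝ᵥ fun p => if p.1 = i then x p.2 else 0) := by
        rw [hdot]
        simp only [mulVec, dotProduct, hA, Matrix.of_apply]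
        rw [← Finset.sum_add_distrib]
        refine Finset.sum_congr rfl fun j _ => by ring
      rw [← hMt w (fun p => if p.1 = i then x p.2 else 0), ← hu]
      rw [hAx] at hb
      linarith
    linarith
  · intro h A hA i
    have h2 := (key_iff N hN0 hNzero hNsmul hNadd ρ hρ
        ((M.transpose)⁻¹.mulVec (fun p => if p.1 = i then x p.2 else 0))
        (b i - Abar.mulVec x i)).mpr (by linarith [h i])
    set dv : Fin l × Fin d → ℝ := fun p => A p.1 p.2 - Abar p.1 p.2 with hdv
    have hw := h2 (M *ᵥ dv) hA
    have hMd : M⁻¹ *ᵥ (M *ᵥ dv) = dv := by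
      rw [mulVec_mulVec, nonsing_inv_mul M hM, one_mulVec]
    have hid := hMt (M *ᵥ dv) (fun p => if p.1 = i then x p.2 else 0)
    rw [hMd] at hid
    have hAx : A.mulVec x i = Abar.mulVec x i +
        (dv ⬝ᵥ fun p => if p.1 = i then x p.2 else 0) := by
      rw [hdot]
      simp only [mulVec, dotProduct, hdv]
      rw [← Finset.sum_add_distrib]
      refine Finset.sum_congr rfl fun j _ => by ring
    rw [hAx, hid]
    linarith
end
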